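/- arXiv:1506.04546 — 7 statements merged into one kernel-verified Lean document; each statement's English description precedes it below -/
import Mathlib

section
/- For every real number α ∈ [0,1] there exists a completely multiplicative function a : ℕ → ℂ such that the Dirichlet series f(s) = Σ_{n=1}^∞ a_n n^{-s} satisfies σ_a(f) − σ_c(f) = α (in particular both abscissas are finite). -/
open Filter Topology

/-- `N`-th partial sum of the Dirichlet series `∑ a_n n^{-s}` at the point `s`. -/
noncomputable def dirichletPartial (a : ℕ → ℂ) (s : ℂ) (N : ℕ) : ℂ :=
  ∑ n ∈ Finset.range N, a (n + 1) / ((n : ℂ) + 1) ^ s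

/-- The Dirichlet series `∑ a_n n^{-σ}` converges (as a limit of partial sums). -/
def DirichletConvergesAt (a : ℕ → ℂ) (σ : ℝ) : Prop :=
  ∃ l : ℂ, Tendsto (dirichletPartial a (σ : ℂ)) atTop (𝓝 l)

/-- The series `∑ a_n n^{-σ - it}` converges uniformly in `t ∈ ℝ`. -/
def DirichletConvergesUniformlyAt (a : ℕ → ℂ) (σ : ℝ) : Prop :=
  ∃ g : ℝ → ℂ,
    TendstoUniformly (fun N (t : ℝ) => dirichletPartial a ((σ : ℂ) + (t : ℂ) * Complex.I) N) g atTop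

/-- The series `∑ |a_n| n^{-σ}` converges. -/
def DirichletAbsConvergesAt (a : ℕ → ℂ) (σ : ℝ) : Prop :=
  Summable fun n : ℕ => ‖a (n + 1)‖ / ((n : ℝ) + 1) ^ σ

/-- Abscissa of (simple) convergence. -/
noncomputable def sigmaC (a : ℕ → ℂ) : ℝ := sInf {σ : ℝ | DirichletConvergesAt a σ}

/-- Abscissa of uniform convergence. -/
noncomputable def sigmaB (a : ℕ → ℂ) : ℝ := sInf {σ : ℝ | DirichletConvergesUniformlyAt a σ}

/-- Abscissa of absolute convergence. -/
noncomputable def sigmaA (a : ℕ → ℂ) : ℝ := sInf {σ : ℝ | DirichletAbsConvergesAt a σ}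

/-- `a : ℕ → ℂ` is multiplicative: `a 1 = 1` and `a (m n) = a m * a n` for coprime `m, n ≥ 1`. -/
def IsMultiplicativeFun (a : ℕ → ℂ) : Prop :=
  a 1 = 1 ∧ ∀ m n : ℕ, 1 ≤ m → 1 ≤ n → Nat.Coprime m n → a (m * n) = a m * a n

/-- `a : ℕ → ℂ` is completely multiplicative. -/
def IsCompletelyMultiplicativeFun (a : ℕ → ℂ) : Prop :=
  a 1 = 1 ∧ ∀ m n : ℕ, 1 ≤ m → 1 ≤ n → a (m * n) = a m * a n




section AuxDirichlet

set_option maxHeartbeats 1000000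

open Finset

/-- The nontrivial character mod 4, real-valued. -/
def chi4 (n : ℕ) : ℝ := if n % 2 = 0 then 0 else if n % 4 = 1 then 1 else -1

lemma chi4_mul (m n : ℕ) : chi4 (m * n) = chi4 m * chi4 n := by
  unfold chi4
  have h4 : (m * n) % 4 = m % 4 * (n % 4) % 4 := Nat.mul_mod m n 4
  have h2 : (m * n) % 2 = m % 2 * (n % 2) % 2 := Nat.mul_mod m n 2
  have hm2 : m % 2 = m % 4 % 2 := (Nat.mod_mod_of_dvd m (by norm_num)).symm
  have hn2 : n % 2 = n % 4 % 2 := (Nat.mod_mod_of_dvd n (by norm_num)).symm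
  have hm : m % 4 < 4 := Nat.mod_lt _ (by norm_num)
  have hn : n % 4 < 4 := Nat.mod_lt _ (by norm_num)
  interval_cases h : m % 4 <;> interval_cases h' : n % 4 <;>
    simp_all <;> norm_num

lemma chi4_odd (k : ℕ) : chi4 (2 * k + 1) = (-1 : ℝ) ^ k := by
  unfold chi4
  rcases Nat.even_or_odd k with ⟨a, rfl⟩ | ⟨a, rfl⟩
  · have h1 : (2 * (a + a) + 1) % 2 = 1 := by omega
    have h2 : (2 * (a + a) + 1) % 4 = 1 := by omega
    simp only [h1, h2]
    rw [← two_mul, pow_mul]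
    norm_num
  · have h1 : (2 * (2 * a + 1) + 1) % 2 = 1 := by omega
    have h2 : (2 * (2 * a + 1) + 1) % 4 = 3 := by omega
    simp only [h1, h2]
    rw [pow_add, pow_mul]
    norm_num

lemma chi4_one : chi4 1 = 1 := by norm_num [chi4]

/-- decomposition: valuation of 2^j*(2k+1) -/
lemma fact2_pow_mul_odd (j k : ℕ) : (2 ^ j * (2 * k + 1)).factorization 2 = j := by
  have h1 : (2 * k + 1) ≠ 0 := by omega
  rw [Nat.factorization_mul (by positivity) h1]
  have h2 : (2 ^ j).factorization 2 = j := by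
    simp [Nat.Prime.factorization_pow Nat.prime_two]
  have h3 : (2 * k + 1).factorization 2 = 0 :=
    Nat.factorization_eq_zero_of_not_dvd (by omega)
  simp only [Finsupp.add_apply, h3, add_zero]
  exact h2

lemma ordCompl2_pow_mul_odd (j k : ℕ) : ordCompl[2] (2 ^ j * (2 * k + 1)) = 2 * k + 1 := by
  rw [fact2_pow_mul_odd]
  exact Nat.mul_div_cancel_left _ (by positivity)

lemma odd_ordCompl2 {n : ℕ} (hn : n ≠ 0) : ordCompl[2] n % 2 = 1 := by
  have := Nat.not_dvd_ordCompl Nat.prime_two hn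
  omega

lemma ordProj_mul_ordCompl (n : ℕ) :
    2 ^ (n.factorization 2) * (ordCompl[2] n) = n :=
  Nat.ordProj_mul_ordCompl_eq_self n 2

/-- the completely multiplicative function: `aa β n = (2^β)^(v₂ n) * chi4(oddpart n)`. -/
noncomputable def aa (β : ℝ) (n : ℕ) : ℂ :=
  ((((2:ℝ) ^ β) ^ (n.factorization 2) * chi4 (ordCompl[2] n) : ℝ) : ℂ)

lemma aa_one (β : ℝ) : aa β 1 = 1 := by
  simp [aa, chi4_one]

lemma aa_mul (β : ℝ) (m n : ℕ) (hm : 1 ≤ m) (hn : 1 ≤ n) :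
    aa β (m * n) = aa β m * aa β n := by
  unfold aa
  rw [Nat.ordCompl_mul, Nat.factorization_mul (by omega) (by omega), chi4_mul]
  push_cast
  rw [Pi.add_apply, pow_add]
  ring

/-- value at a decomposed index -/
lemma aa_apply (β : ℝ) (j k : ℕ) :
    aa β (2 ^ j * (2 * k + 1)) = ((((2:ℝ) ^ β) ^ j * (-1) ^ k : ℝ) : ℂ) := by
  unfold aa
  rw [fact2_pow_mul_odd, Nat.mul_div_cancel_left _ (pow_pos two_pos j), chi4_odd]

/-- the real term of the Dirichlet series at n+1 = 2^j(2k+1) -/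
lemma term_eq (β σ : ℝ) (j k : ℕ) :
    aa β (2 ^ j * (2 * k + 1)) / (((2 ^ j * (2 * k + 1) : ℕ) : ℂ)) ^ (σ : ℂ)
      = ((((2:ℝ) ^ (β - σ)) ^ j * ((-1) ^ k * ((2 * k + 1 : ℕ) : ℝ) ^ (-σ)) : ℝ) : ℂ) := by
  rw [aa_apply]
  have hx : (0:ℝ) ≤ ((2 ^ j * (2 * k + 1) : ℕ) : ℝ) := by positivity
  rw [show (((2 ^ j * (2 * k + 1) : ℕ) : ℂ)) = ((((2 ^ j * (2 * k + 1) : ℕ) : ℝ)) : ℂ) by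
        push_cast; ring,
      ← Complex.ofReal_cpow hx, ← Complex.ofReal_div]
  congr 1
  have h1 : ((2 ^ j * (2 * k + 1) : ℕ) : ℝ) = (2:ℝ) ^ j * ((2 * k + 1 : ℕ) : ℝ) := by
    push_cast; ring
  have h2k : (0:ℝ) ≤ ((2 * k + 1 : ℕ) : ℝ) := by positivity
  rw [h1, Real.mul_rpow (by positivity) h2k]
  have h2 : ((2:ℝ) ^ j) ^ σ = ((2:ℝ) ^ σ) ^ j := by
    rw [← Real.rpow_natCast (2:ℝ) j, ← Real.rpow_mul (by norm_num),
        mul_comm, Real.rpow_mul (by norm_num), Real.rpow_natCast]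
  have h3 : ((2:ℝ) ^ (β - σ)) ^ j = ((2:ℝ) ^ β) ^ j / ((2:ℝ) ^ σ) ^ j := by
    rw [← div_pow, ← Real.rpow_sub (by norm_num)]
  rw [h2, h3, Real.rpow_neg h2k]
  have hpos : (0:ℝ) < ((2:ℝ) ^ σ) ^ j := by positivity
  have hpos2 : (0:ℝ) < ((2 * k + 1 : ℕ) : ℝ) ^ σ := by
    apply Real.rpow_pos_of_pos; positivity
  field_simp

/-- norm of the term -/
lemma norm_term_eq (β σ : ℝ) (j k : ℕ) :
    ‖aa β (2 ^ j * (2 * k + 1))‖ / (((2 ^ j * (2 * k + 1) : ℕ)) : ℝ) ^ σ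
      = ((2:ℝ) ^ (β - σ)) ^ j * ((2 * k + 1 : ℕ) : ℝ) ^ (-σ) := by
  have w0 : (0:ℝ) < (2:ℝ) ^ β := Real.rpow_pos_of_pos (by norm_num) _
  have hnorm : ‖aa β (2 ^ j * (2 * k + 1))‖ = ((2:ℝ) ^ β) ^ j := by
    rw [aa_apply, Complex.norm_real, Real.norm_eq_abs, abs_mul, abs_pow, abs_pow]
    simp [abs_of_pos w0]
  rw [hnorm]
  have h1 : ((2 ^ j * (2 * k + 1) : ℕ) : ℝ) = (2:ℝ) ^ j * ((2 * k + 1 : ℕ) : ℝ) := by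
    push_cast; ring
  have h2k : (0:ℝ) ≤ ((2 * k + 1 : ℕ) : ℝ) := by positivity
  rw [h1, Real.mul_rpow (by positivity) h2k]
  have h2 : ((2:ℝ) ^ j) ^ σ = ((2:ℝ) ^ σ) ^ j := by
    rw [← Real.rpow_natCast (2:ℝ) j, ← Real.rpow_mul (by norm_num),
        mul_comm, Real.rpow_mul (by norm_num), Real.rpow_natCast]
  have h3 : ((2:ℝ) ^ (β - σ)) ^ j = ((2:ℝ) ^ β) ^ j / ((2:ℝ) ^ σ) ^ j := by
    rw [← div_pow, ← Real.rpow_sub (by norm_num)]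
  rw [h2, h3, Real.rpow_neg h2k]
  have hpos : (0:ℝ) < ((2:ℝ) ^ σ) ^ j := by positivity
  have hpos2 : (0:ℝ) < ((2 * k + 1 : ℕ) : ℝ) ^ σ := by
    apply Real.rpow_pos_of_pos; positivity
  field_simp

noncomputable def gg (σ : ℝ) (k : ℕ) : ℝ := ((2 * k + 1 : ℕ) : ℝ) ^ (-σ)

noncomputable def PP (σ : ℝ) (K : ℕ) : ℝ := ∑ i ∈ range K, (-1) ^ i * gg σ i

lemma gg_nonneg (σ : ℝ) (k : ℕ) : 0 ≤ gg σ k := by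
  unfold gg; positivity

lemma gg_antitone {σ : ℝ} (hσ : 0 < σ) : Antitone (gg σ) := by
  intro k k' h
  unfold gg
  apply Real.rpow_le_rpow_of_nonpos (by positivity) _ (by linarith)
  exact_mod_cast by omega

lemma gg_tendsto_zero {σ : ℝ} (hσ : 0 < σ) : Tendsto (gg σ) atTop (𝓝 0) := by
  have h1 : Tendsto (fun x : ℝ => x ^ (-σ)) atTop (𝓝 0) :=
    tendsto_rpow_neg_atTop hσ
  have h2 : Tendsto (fun k : ℕ => ((2 * k + 1 : ℕ) : ℝ)) atTop atTop := by
    apply tendsto_natCast_atTop_atTop.comp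
    exact tendsto_atTop_atTop_of_monotone (fun a b h => by omega) (fun b => ⟨b, by omega⟩)
  exact h1.comp h2

lemma PP_exists_lim {σ : ℝ} (hσ : 0 < σ) :
    ∃ L, Tendsto (PP σ) atTop (𝓝 L) :=
  (gg_antitone hσ).tendsto_alternating_series_of_tendsto_zero (gg_tendsto_zero hσ)

lemma PP_bound {σ : ℝ} (hσ : 0 < σ) {L : ℝ} (hL : Tendsto (PP σ) atTop (𝓝 L)) (K : ℕ) :
    |PP σ K| ≤ |L| + 1 := by
  have hanti := gg_antitone hσ
  have hle : ∀ k, PP σ (2 * k) ≤ L := Antitone.alternating_series_le_tendsto hL hanti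
  have hge : ∀ k, L ≤ PP σ (2 * k + 1) := Antitone.tendsto_le_alternating_series hL hanti
  have hg0 : gg σ 0 = 1 := by unfold gg; norm_num
  have hgle1 : ∀ k, gg σ k ≤ 1 := fun k => hg0 ▸ hanti (Nat.zero_le k)
  rcases Nat.even_or_odd K with ⟨m, rfl⟩ | ⟨m, rfl⟩
  · rw [show m + m = 2 * m from (two_mul m).symm]
    have h1 : PP σ (2 * m) ≤ L := hle m
    have h2 : L ≤ PP σ (2 * m) + gg σ (2 * m) := by
      have := hge m
      rw [PP, Finset.sum_range_succ, ← PP] at this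
      have hpow : ((-1:ℝ)) ^ (2 * m) = 1 := by
        rw [pow_mul]; norm_num
      rw [hpow, one_mul] at this
      exact this
    rw [abs_le]
    constructor
    · have := gg_nonneg σ (2 * m)
      have h3 := hgle1 (2 * m)
      cases abs_cases L with
      | inl h => nlinarith
      | inr h => nlinarith
    · cases abs_cases L with
      | inl h => nlinarith
      | inr h => nlinarith
  · have h1 : L ≤ PP σ (2 * m + 1) := hge m
    have h2 : PP σ (2 * m + 1) ≤ L + gg σ (2 * m) := by
      have h3 : PP σ (2 * m) ≤ L := hle m
      have : PP σ (2 * m + 1) = PP σ (2 * m) + gg σ (2 * m) := by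
        rw [PP, Finset.sum_range_succ, ← PP, pow_mul]; norm_num
      linarith
    have h4 := hgle1 (2 * m)
    have h5 : (2 * m + 1) = (2 * m + 1) := rfl
    rw [abs_le]
    constructor
    · cases abs_cases L with
      | inl h => nlinarith
      | inr h => nlinarith
    · cases abs_cases L with
      | inl h => nlinarith
      | inr h => nlinarith


/-- real term of the series -/
noncomputable def ttm (β σ : ℝ) (n : ℕ) : ℝ :=
  ((2:ℝ) ^ (β - σ)) ^ ((n+1).factorization 2) *
    ((-1) ^ ((ordCompl[2] (n+1) - 1) / 2) * ((ordCompl[2] (n+1) : ℕ) : ℝ) ^ (-σ))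

/-- number of odd multiples: `k < KK j N ↔ 2^j * (2k+1) ≤ N` -/
def KK (j N : ℕ) : ℕ := (N / 2 ^ j + 1) / 2

lemma odd_eq (n : ℕ) : 2 * ((ordCompl[2] (n+1) - 1) / 2) + 1 = ordCompl[2] (n+1) := by
  have h := odd_ordCompl2 (n := n+1) (by omega)
  generalize ordCompl[2] (n+1) = m at *
  omega

lemma decomp (n : ℕ) : 2 ^ ((n+1).factorization 2) *
    (2 * ((ordCompl[2] (n+1) - 1) / 2) + 1) = n + 1 := by
  rw [odd_eq]; exact ordProj_mul_ordCompl (n+1)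

lemma term_ofReal (β σ : ℝ) (n : ℕ) :
    aa β (n + 1) / ((n : ℂ) + 1) ^ (σ : ℂ) = ((ttm β σ n : ℝ) : ℂ) := by
  have hd := decomp n
  have hcast : ((n : ℂ) + 1) = (((n + 1 : ℕ)) : ℂ) := by push_cast; ring
  have htm : ttm β σ n = ((2:ℝ) ^ (β - σ)) ^ ((n+1).factorization 2) *
      ((-1) ^ ((ordCompl[2] (n+1) - 1) / 2) *
        (((2 * ((ordCompl[2] (n+1) - 1) / 2) + 1 : ℕ)) : ℝ) ^ (-σ)) := by
    unfold ttm
    rw [odd_eq]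
  rw [hcast, ← hd, term_eq β σ, htm, ← hd]

lemma sum_regroup (β σ : ℝ) (N : ℕ) :
    ∑ n ∈ range N, ttm β σ n
      = ∑ j ∈ range (N + 1), ((2:ℝ) ^ (β - σ)) ^ j * PP σ (KK j N) := by
  have hrhs : ∀ j, ((2:ℝ) ^ (β - σ)) ^ j * PP σ (KK j N)
      = ∑ i ∈ range (KK j N), ((2:ℝ) ^ (β - σ)) ^ j * ((-1) ^ i * gg σ i) := by
    intro j; rw [PP, Finset.mul_sum]
  simp_rw [hrhs]
  rw [← Finset.sum_sigma (range (N+1)) (fun j => range (KK j N))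
        (fun p => ((2:ℝ) ^ (β - σ)) ^ p.1 * ((-1) ^ p.2 * gg σ p.2))]
  refine Finset.sum_nbij' (i := fun n => (⟨(n+1).factorization 2, (ordCompl[2] (n+1) - 1) / 2⟩ :
      Σ _ : ℕ, ℕ)) (j := fun p => 2 ^ p.1 * (2 * p.2 + 1) - 1) ?_ ?_ ?_ ?_ ?_
  · intro n hn
    rw [Finset.mem_range] at hn
    have hd := decomp n
    rw [Finset.mem_sigma]
    constructor
    · rw [Finset.mem_range]
      show (n+1).factorization 2 < N + 1
      have h1 : 2 ^ ((n+1).factorization 2) ≤ n + 1 := by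
        calc 2 ^ ((n+1).factorization 2) ≤ 2 ^ ((n+1).factorization 2) *
            (2 * ((ordCompl[2] (n+1) - 1) / 2) + 1) := Nat.le_mul_of_pos_right _ (by omega)
        _ = n + 1 := hd
      have h2 := Nat.lt_two_pow_self (n := (n+1).factorization 2)
      omega
    · rw [Finset.mem_range]
      show (ordCompl[2] (n+1) - 1) / 2 < KK ((n+1).factorization 2) N
      have h1 : (2 * ((ordCompl[2] (n+1) - 1) / 2) + 1) * 2 ^ ((n+1).factorization 2) ≤ N := by
        rw [mul_comm, hd]; omega
      have h2 : (2 * ((ordCompl[2] (n+1) - 1) / 2) + 1) ≤ N / 2 ^ ((n+1).factorization 2) :=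
        (Nat.le_div_iff_mul_le (by positivity)).2 h1
      unfold KK
      generalize N / 2 ^ ((n+1).factorization 2) = q at h2 ⊢
      generalize (ordCompl[2] (n+1) - 1) / 2 = k at h2 ⊢
      omega
  · rintro ⟨j, i⟩ hp
    rw [Finset.mem_sigma, Finset.mem_range, Finset.mem_range] at hp
    rw [Finset.mem_range]
    dsimp only at hp ⊢
    have h2 : 2 * i + 1 ≤ N / 2 ^ j := by
      have h := hp.2; unfold KK at h
      generalize N / 2 ^ j = q at *
      omega
    have h3 : (2 * i + 1) * 2 ^ j ≤ N := (Nat.le_div_iff_mul_le (by positivity)).1 h2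
    have h3' : 2 ^ j * (2 * i + 1) ≤ N := by rwa [mul_comm] at h3
    have h4 : 0 < 2 ^ j * (2 * i + 1) := by positivity
    omega
  · intro n hn
    have hd := decomp n
    show 2 ^ ((n+1).factorization 2) * (2 * ((ordCompl[2] (n+1) - 1) / 2) + 1) - 1 = n
    omega
  · rintro ⟨j, i⟩ hp
    dsimp only
    have h4 : 0 < 2 ^ j * (2 * i + 1) := by positivity
    have h5 : 2 ^ j * (2 * i + 1) - 1 + 1 = 2 ^ j * (2 * i + 1) := by omega
    rw [h5, fact2_pow_mul_odd, Nat.mul_div_cancel_left _ (pow_pos two_pos j)]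
    have h6 : (2 * i + 1 - 1) / 2 = i := by omega
    rw [h6]
  · intro n hn
    dsimp only
    unfold ttm gg
    rw [odd_eq]

lemma KK_tendsto (j : ℕ) : Tendsto (fun N => KK j N) atTop atTop := by
  apply tendsto_atTop_atTop_of_monotone
  · intro N N' h
    unfold KK
    exact Nat.div_le_div_right (by exact Nat.succ_le_succ (Nat.div_le_div_right h))
  · intro b
    refine ⟨2 ^ j * (2 * b + 1), ?_⟩
    unfold KK
    rw [Nat.mul_div_cancel_left _ (pow_pos two_pos j)]
    omega

lemma PP_zero (σ : ℝ) : PP σ 0 = 0 := by simp [PP]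

lemma sum_eq_tsum (β σ : ℝ) (N : ℕ) :
    ∑ n ∈ range N, ttm β σ n
      = ∑' j : ℕ, ((2:ℝ) ^ (β - σ)) ^ j * PP σ (KK j N) := by
  rw [sum_regroup]
  refine (tsum_eq_sum ?_).symm
  intro j hj
  rw [Finset.mem_range, not_lt] at hj
  have h0 : j < 2 ^ j := Nat.lt_two_pow_self (n := j)
  have h1 : N < 2 ^ j := by omega
  have h2 : KK j N = 0 := by
    unfold KK
    rw [Nat.div_eq_of_lt h1]
  rw [h2, PP_zero, mul_zero]

lemma convergence_main {β σ : ℝ} (hβ : 0 ≤ β) (hσ : β < σ) :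
    ∃ l : ℝ, Tendsto (fun N => ∑ n ∈ range N, ttm β σ n) atTop (𝓝 l) := by
  have hσ0 : 0 < σ := lt_of_le_of_lt hβ hσ
  obtain ⟨L, hL⟩ := PP_exists_lim hσ0
  set ρ : ℝ := (2:ℝ) ^ (β - σ) with hρ
  have hρ0 : 0 < ρ := Real.rpow_pos_of_pos (by norm_num) _
  have hρ1 : ρ < 1 := by
    rw [hρ]
    calc (2:ℝ) ^ (β - σ) < (2:ℝ) ^ (0:ℝ) :=
      Real.rpow_lt_rpow_of_exponent_lt (by norm_num) (by linarith)
    _ = 1 := Real.rpow_zero 2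
  refine ⟨∑' j : ℕ, ρ ^ j * L, ?_⟩
  have heq : (fun N => ∑ n ∈ range N, ttm β σ n)
      = fun N => ∑' j : ℕ, ρ ^ j * PP σ (KK j N) := by
    funext N; exact sum_eq_tsum β σ N
  rw [heq]
  apply tendsto_tsum_of_dominated_convergence (bound := fun j => ρ ^ j * (|L| + 1))
  · exact (summable_geometric_of_lt_one hρ0.le hρ1).mul_right _
  · intro j
    exact ((hL.comp (KK_tendsto j)).const_mul _)
  · filter_upwards with N j
    rw [Real.norm_eq_abs, abs_mul, abs_pow, abs_of_pos hρ0]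
    exact mul_le_mul_of_nonneg_left (PP_bound hσ0 hL _) (by positivity)


lemma dirichletPartial_ofReal (β σ : ℝ) (N : ℕ) :
    dirichletPartial (aa β) (σ : ℂ) N = ((∑ n ∈ range N, ttm β σ n : ℝ) : ℂ) := by
  unfold dirichletPartial
  push_cast
  exact Finset.sum_congr rfl fun n _ => term_ofReal β σ n

lemma converges_of_gt {β σ : ℝ} (hβ : 0 ≤ β) (hσ : β < σ) :
    DirichletConvergesAt (aa β) σ := by
  obtain ⟨l, hl⟩ := convergence_main hβ hσ
  refine ⟨(l : ℂ), ?_⟩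
  have : dirichletPartial (aa β) (σ : ℂ) = fun N => ((∑ n ∈ range N, ttm β σ n : ℝ) : ℂ) :=
    funext (dirichletPartial_ofReal β σ)
  rw [this]
  exact (Complex.continuous_ofReal.tendsto l).comp hl

/-- norm of a(2^j) / (2^j)^σ -/
lemma norm_pow2_term (β σ : ℝ) (j : ℕ) :
    ‖aa β (2 ^ j) / (((2 ^ j : ℕ)) : ℂ) ^ (σ : ℂ)‖ = ((2:ℝ) ^ (β - σ)) ^ j := by
  have h := norm_term_eq β σ j 0
  rw [norm_div]
  have hx : (0:ℝ) ≤ ((2 ^ j : ℕ) : ℝ) := by positivity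
  have hnorm : ‖(((2 ^ j : ℕ)) : ℂ) ^ (σ : ℂ)‖ = ((2 ^ j : ℕ) : ℝ) ^ σ := by
    rw [show (((2 ^ j : ℕ)) : ℂ) = ((((2 ^ j : ℕ)) : ℝ) : ℂ) by push_cast; ring,
      ← Complex.ofReal_cpow hx, Complex.norm_real, Real.norm_eq_abs,
      abs_of_nonneg (Real.rpow_nonneg hx σ)]
  rw [hnorm]
  have h2 : (2 ^ j * (2 * 0 + 1) : ℕ) = 2 ^ j := by ring
  rw [h2] at h
  simpa using h

lemma diverges_of_le {β σ : ℝ} (hσ : σ ≤ β) :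
    ¬ DirichletConvergesAt (aa β) σ := by
  rintro ⟨l, hl⟩
  -- terms tend to zero
  have hterm : Tendsto (fun N => dirichletPartial (aa β) (σ:ℂ) (N+1)
      - dirichletPartial (aa β) (σ:ℂ) N) atTop (𝓝 0) := by
    have := (hl.comp (tendsto_add_atTop_nat 1)).sub hl
    simpa using this
  have hterm2 : ∀ N, dirichletPartial (aa β) (σ:ℂ) (N+1) - dirichletPartial (aa β) (σ:ℂ) N
      = aa β (N+1) / ((N : ℂ) + 1) ^ (σ:ℂ) := by
    intro N
    unfold dirichletPartial
    rw [Finset.sum_range_succ]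
    ring
  simp_rw [hterm2] at hterm
  -- along the subsequence N = 2^j - 1, the norm is (2^(β-σ))^j ≥ 1
  have hsub : Tendsto (fun j : ℕ => 2 ^ j - 1) atTop atTop := by
    apply tendsto_atTop_atTop_of_monotone
    · intro a b h
      have := Nat.pow_le_pow_right (by norm_num : 1 ≤ 2) h
      simp only
      omega
    · intro b
      refine ⟨b, ?_⟩
      have := Nat.lt_two_pow_self (n := b)
      omega
  have h3 : Tendsto (fun j : ℕ => aa β ((2 ^ j - 1) + 1) /
      (((2 ^ j - 1 : ℕ) : ℂ) + 1) ^ (σ:ℂ)) atTop (𝓝 0) := hterm.comp hsub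
  have h4 : Tendsto (fun j : ℕ => ‖aa β ((2 ^ j - 1) + 1) /
      (((2 ^ j - 1 : ℕ) : ℂ) + 1) ^ (σ:ℂ)‖) atTop (𝓝 0) := by
    simpa using h3.norm
  have h5 : ∀ j : ℕ, ‖aa β ((2 ^ j - 1) + 1) / (((2 ^ j - 1 : ℕ) : ℂ) + 1) ^ (σ:ℂ)‖
      = ((2:ℝ) ^ (β - σ)) ^ j := by
    intro j
    have he : (2 ^ j - 1) + 1 = 2 ^ j := by
      have := Nat.one_le_two_pow (n := j); omega
    have he2 : (((2 ^ j - 1 : ℕ) : ℂ) + 1) = (((2 ^ j : ℕ)) : ℂ) := by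
      rw [show ((2 ^ j : ℕ)) = (2 ^ j - 1) + 1 from he.symm]
      push_cast; ring
    rw [he, he2, norm_pow2_term]
  simp_rw [h5] at h4
  have hbase : (1:ℝ) ≤ (2:ℝ) ^ (β - σ) := by
    rw [show (1:ℝ) = (2:ℝ) ^ (0:ℝ) from (Real.rpow_zero 2).symm]
    exact Real.rpow_le_rpow_of_exponent_le (by norm_num) (by linarith)
  have h6 : ∀ j : ℕ, (1:ℝ) ≤ ((2:ℝ) ^ (β - σ)) ^ j := fun j => one_le_pow₀ hbase
  have : (1:ℝ) ≤ 0 := le_of_tendsto_of_tendsto' tendsto_const_nhds h4 h6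
  linarith


/-- the 2-adic pairing equivalence -/
def pe : ℕ × ℕ ≃ ℕ where
  toFun p := 2 ^ p.1 * (2 * p.2 + 1) - 1
  invFun n := ((n+1).factorization 2, (ordCompl[2] (n+1) - 1) / 2)
  left_inv p := by
    obtain ⟨j, k⟩ := p
    have h4 : 0 < 2 ^ j * (2 * k + 1) := by positivity
    have h5 : 2 ^ j * (2 * k + 1) - 1 + 1 = 2 ^ j * (2 * k + 1) := by omega
    show ((2 ^ j * (2 * k + 1) - 1 + 1).factorization 2,
      (ordCompl[2] (2 ^ j * (2 * k + 1) - 1 + 1) - 1) / 2) = (j, k)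
    rw [h5, fact2_pow_mul_odd, Nat.mul_div_cancel_left _ (pow_pos two_pos j)]
    simp only [Prod.mk.injEq]
    exact ⟨trivial, by omega⟩
  right_inv n := by
    have hd := decomp n
    simp only
    omega

lemma abs_summand_eq (β σ : ℝ) (j k : ℕ) :
    ‖aa β ((pe (j, k)) + 1)‖ / (((pe (j, k) : ℕ) : ℝ) + 1) ^ σ
      = ((2:ℝ) ^ (β - σ)) ^ j * ((2 * k + 1 : ℕ) : ℝ) ^ (-σ) := by
  have h4 : 0 < 2 ^ j * (2 * k + 1) := by positivity
  have h5 : (pe (j, k)) + 1 = 2 ^ j * (2 * k + 1) := by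
    show 2 ^ j * (2 * k + 1) - 1 + 1 = _
    omega
  have h6 : (((pe (j, k) : ℕ) : ℝ) + 1) = (((2 ^ j * (2 * k + 1) : ℕ)) : ℝ) := by
    rw [show ((2 ^ j * (2 * k + 1) : ℕ)) = pe (j, k) + 1 from h5.symm]
    push_cast; ring
  rw [h5, h6, norm_term_eq]

lemma abs_converges_of_gt {β σ : ℝ} (hβ1 : β ≤ 1) (hσ : 1 < σ) :
    DirichletAbsConvergesAt (aa β) σ := by
  unfold DirichletAbsConvergesAt
  have hρ0 : (0:ℝ) < (2:ℝ) ^ (β - σ) := Real.rpow_pos_of_pos (by norm_num) _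
  have hρ1 : (2:ℝ) ^ (β - σ) < 1 := by
    calc (2:ℝ) ^ (β - σ) < (2:ℝ) ^ (0:ℝ) :=
      Real.rpow_lt_rpow_of_exponent_lt (by norm_num) (by linarith)
    _ = 1 := Real.rpow_zero 2
  have hg : Summable fun k : ℕ => ((2 * k + 1 : ℕ) : ℝ) ^ (-σ) := by
    have h1 : Summable fun n : ℕ => ((n : ℝ)) ^ (-σ) :=
      Real.summable_nat_rpow.2 (by linarith)
    have h2 : Summable fun k : ℕ => (((k + 1 : ℕ)) : ℝ) ^ (-σ) := by
      exact_mod_cast (summable_nat_add_iff 1).2 h1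
    apply Summable.of_nonneg_of_le (fun k => by positivity) _ h2
    intro k
    apply Real.rpow_le_rpow_of_nonpos (by positivity) _ (by linarith)
    exact_mod_cast by omega
  have key : Summable ((fun n : ℕ => ‖aa β (n + 1)‖ / ((n : ℝ) + 1) ^ σ) ∘ pe) := by
    have heq : ((fun n : ℕ => ‖aa β (n + 1)‖ / ((n : ℝ) + 1) ^ σ) ∘ pe)
        = fun p : ℕ × ℕ => ((2:ℝ) ^ (β - σ)) ^ p.1 * ((2 * p.2 + 1 : ℕ) : ℝ) ^ (-σ) := by
      funext p
      obtain ⟨j, k⟩ := p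
      exact abs_summand_eq β σ j k
    rw [heq]
    have hf : ∀ j : ℕ, 0 ≤ ((2:ℝ) ^ (β - σ)) ^ j := fun j => by positivity
    have hgn : ∀ k : ℕ, 0 ≤ ((2 * k + 1 : ℕ) : ℝ) ^ (-σ) := fun k => by positivity
    exact Summable.mul_of_nonneg (summable_geometric_of_lt_one hρ0.le hρ1) hg hf hgn
  exact pe.summable_iff.mp key

lemma norm_aa_odd (β : ℝ) (k : ℕ) : ‖aa β (2 * k + 1)‖ = 1 := by
  have h1 : (2 * k + 1).factorization 2 = 0 := by
    have := fact2_pow_mul_odd 0 k; simpa using this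
  have h2 : ordCompl[2] (2 * k + 1) = 2 * k + 1 := by
    have := ordCompl2_pow_mul_odd 0 k; simpa using this
  unfold aa
  rw [h2, h1, chi4_odd]
  rw [Complex.norm_real, Real.norm_eq_abs, pow_zero, one_mul, abs_pow]
  norm_num

lemma abs_diverges_of_le {β σ : ℝ} (hσ : σ ≤ 1) :
    ¬ DirichletAbsConvergesAt (aa β) σ := by
  intro h
  unfold DirichletAbsConvergesAt at h
  have h2 := h.comp_injective (i := fun k : ℕ => 2 * k)
    (fun a b hab => by dsimp at hab; omega)
  have h3 : Summable fun k : ℕ => ((2:ℝ) * (k + 1))⁻¹ := by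
    apply Summable.of_nonneg_of_le (fun k => by positivity) _ h2
    intro k
    show ((2:ℝ) * (k+1))⁻¹ ≤ ‖aa β (2 * k + 1)‖ / (((2 * k : ℕ) : ℝ) + 1) ^ σ
    rw [norm_aa_odd]
    have hc : (((2 * k : ℕ) : ℝ) + 1) = ((2 * k + 1 : ℕ) : ℝ) := by push_cast; ring
    rw [hc]
    have hx : (1:ℝ) ≤ ((2 * k + 1 : ℕ) : ℝ) := by exact_mod_cast by omega
    have h4 : ((2 * k + 1 : ℕ) : ℝ) ^ σ ≤ ((2 * k + 1 : ℕ) : ℝ) ^ (1:ℝ) :=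
      Real.rpow_le_rpow_of_exponent_le hx hσ
    have h5 : ((2 * k + 1 : ℕ) : ℝ) ^ (1:ℝ) = ((2 * k + 1 : ℕ) : ℝ) := Real.rpow_one _
    have h6 : (0:ℝ) < ((2 * k + 1 : ℕ) : ℝ) ^ σ := Real.rpow_pos_of_pos (by linarith) _
    rw [one_div]
    have h7 : ((2 * k + 1 : ℕ) : ℝ) ≤ (2:ℝ) * ((k:ℝ) + 1) := by push_cast; linarith
    have h8 : ((2 * k + 1 : ℕ) : ℝ) ^ σ ≤ (2:ℝ) * ((k:ℝ) + 1) := by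
      rw [Real.rpow_one] at h4
      linarith
    exact inv_anti₀ h6 h8
  have h4 : Summable fun k : ℕ => (((k:ℝ) + 1))⁻¹ := by
    have h5 := h3.mul_left (2:ℝ)
    refine h5.congr fun k => ?_
    field_simp
  have h5 : Summable fun n : ℕ => ((n:ℝ))⁻¹ := by
    apply (summable_nat_add_iff 1).1
    simpa using h4
  exact Real.not_summable_natCast_inv h5

end AuxDirichlet

/-- For every `α ∈ [0,1]` there is a completely multiplicative `a : ℕ → ℂ`
whose Dirichlet series has finite abscissas of convergence and absolute convergence with
`σ_a - σ_c = α`. -/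
theorem exists_completelyMultiplicative_sigmaA_sub_sigmaC_eq
    (α : ℝ) (hα : α ∈ Set.Icc (0 : ℝ) 1) :
    ∃ a : ℕ → ℂ, IsCompletelyMultiplicativeFun a ∧
      {σ : ℝ | DirichletConvergesAt a σ}.Nonempty ∧
      BddBelow {σ : ℝ | DirichletConvergesAt a σ} ∧
      {σ : ℝ | DirichletAbsConvergesAt a σ}.Nonempty ∧
      BddBelow {σ : ℝ | DirichletAbsConvergesAt a σ} ∧
      sigmaA a - sigmaC a = α := by
  obtain ⟨hα0, hα1⟩ := hα
  set β : ℝ := 1 - α with hβ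
  have hβ0 : 0 ≤ β := by simp [hβ]; linarith
  have hβ1 : β ≤ 1 := by simp [hβ]; linarith
  refine ⟨aa β, ⟨aa_one β, fun m n hm hn => aa_mul β m n hm hn⟩, ?_, ?_, ?_, ?_, ?_⟩
  · exact ⟨β + 1, converges_of_gt hβ0 (by linarith)⟩
  · have hset : {σ : ℝ | DirichletConvergesAt (aa β) σ} = Set.Ioi β := by
      ext σ
      simp only [Set.mem_setOf_eq, Set.mem_Ioi]
      exact ⟨fun h => lt_of_not_ge fun hle => diverges_of_le hle h,
        fun h => converges_of_gt hβ0 h⟩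
    rw [hset]; exact bddBelow_Ioi
  · exact ⟨2, abs_converges_of_gt hβ1 (by norm_num)⟩
  · have hset : {σ : ℝ | DirichletAbsConvergesAt (aa β) σ} = Set.Ioi 1 := by
      ext σ
      simp only [Set.mem_setOf_eq, Set.mem_Ioi]
      exact ⟨fun h => lt_of_not_ge fun hle => abs_diverges_of_le hle h,
        fun h => abs_converges_of_gt hβ1 h⟩
    rw [hset]; exact bddBelow_Ioi
  · have hset1 : {σ : ℝ | DirichletConvergesAt (aa β) σ} = Set.Ioi β := by
      ext σ
      simp only [Set.mem_setOf_eq, Set.mem_Ioi]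
      exact ⟨fun h => lt_of_not_ge fun hle => diverges_of_le hle h,
        fun h => converges_of_gt hβ0 h⟩
    have hset2 : {σ : ℝ | DirichletAbsConvergesAt (aa β) σ} = Set.Ioi 1 := by
      ext σ
      simp only [Set.mem_setOf_eq, Set.mem_Ioi]
      exact ⟨fun h => lt_of_not_ge fun hle => abs_diverges_of_le hle h,
        fun h => abs_converges_of_gt hβ1 h⟩
    unfold sigmaA sigmaC
    rw [hset1, hset2, csInf_Ioi, csInf_Ioi]
    simp [hβ]
end

section
/- Let F(z) = Σ_{m=0}^∞ b_m z^m be an analytic function on the open unit disc 𝔻 with M := sup_{z ∈ 𝔻} |F(z)| < ∞. Then for every r with 0 ≤ r ≤ 1/3, Σ_{m=0}^∞ |b_m| r^m ≤ M. -/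
open Filter Topology
open Metric
open scoped ENNReal NNReal

lemma hasFPSOnBall {c : ℕ → ℂ} {g : ℂ → ℂ}
    (h : ∀ z ∈ Metric.ball (0:ℂ) 1, HasSum (fun m : ℕ => c m * z ^ m) (g z)) :
    HasFPowerSeriesOnBall g (FormalMultilinearSeries.ofScalars ℂ c) 0 1 := by
  constructor
  · apply ENNReal.le_of_forall_nnreal_lt
    intro r hr
    have hr1 : (r : ℝ) < 1 := by exact_mod_cast hr
    have hz : (r : ℂ) ∈ Metric.ball (0:ℂ) 1 := by
      simp [Complex.norm_of_nonneg r.2, hr1]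
    have h0 := ((h _ hz).summable.tendsto_atTop_zero).norm
    rw [norm_zero] at h0
    apply FormalMultilinearSeries.le_radius_of_tendsto _ (l := 0)
    refine h0.congr (fun n => ?_)
    rw [FormalMultilinearSeries.ofScalars_norm, norm_mul, norm_pow]
    norm_num
  · exact one_pos
  · intro y hy
    have hy' : y ∈ Metric.ball (0:ℂ) 1 := by
      rw [EMetric.mem_ball, edist_zero_right] at hy
      rw [Metric.mem_ball, dist_zero_right]
      have : (‖y‖₊ : ℝ≥0∞) < 1 := by exact hy
      exact_mod_cast this
    have := h y hy'
    rw [zero_add]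
    refine this.congr_fun fun n => ?_
    rw [FormalMultilinearSeries.ofScalars_apply_eq, smul_eq_mul]

lemma moebius_key (a w : ℂ) :
    Complex.normSq (1 - (starRingEnd ℂ) a * w) - Complex.normSq (a - w)
      = (1 - Complex.normSq a) * (1 - Complex.normSq w) := by
  simp only [Complex.normSq_apply, Complex.mul_re, Complex.mul_im, Complex.sub_re,
    Complex.sub_im, Complex.one_re, Complex.one_im, Complex.conj_re, Complex.conj_im]
  ring

lemma schwarz_pick_zero {u : ℂ → ℂ} (hd : DifferentiableOn ℂ u (ball 0 1))
    (hu : ∀ z ∈ ball (0:ℂ) 1, ‖u z‖ ≤ 1) : ‖deriv u 0‖ ≤ 1 - ‖u 0‖^2 := by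
  have h01 : (0:ℂ) ∈ ball (0:ℂ) 1 := by simp
  by_cases hmax : ∃ z₀ ∈ ball (0:ℂ) 1, 1 ≤ ‖u z₀‖
  · obtain ⟨z₀, hz₀, hz₀'⟩ := hmax
    have hconst : Set.EqOn u (Function.const ℂ (u z₀)) (ball 0 1) := by
      apply Complex.eqOn_of_isPreconnected_of_isMaxOn_norm
        (convex_ball _ _).isPreconnected isOpen_ball hd hz₀
      intro z hz
      exact le_trans (hu z hz) hz₀'
    have : deriv u 0 = 0 := by
      have hev : u =ᶠ[𝓝 (0:ℂ)] Function.const ℂ (u z₀) :=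
        Filter.eventuallyEq_of_mem (isOpen_ball.mem_nhds h01) hconst
      rw [hev.deriv_eq]
      exact deriv_const _ _
    rw [this, norm_zero]
    nlinarith [hu 0 h01, norm_nonneg (u 0)]
  · push_neg at hmax
    set a := u 0 with ha_def
    have ha : ‖a‖ < 1 := hmax 0 h01
    have hden : ∀ w : ℂ, ‖w‖ < 1 → 1 - (starRingEnd ℂ) a * w ≠ 0 := by
      intro w hw h0
      have : ‖(starRingEnd ℂ) a * w‖ < 1 := by
        rw [norm_mul, RCLike.norm_conj]
        nlinarith [norm_nonneg a, norm_nonneg w]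
      rw [sub_eq_zero] at h0
      rw [← h0] at this
      simp at this
    set g : ℂ → ℂ := fun z => (a - u z) / (1 - (starRingEnd ℂ) a * u z) with hg_def
    have hglt : ∀ z ∈ ball (0:ℂ) 1, ‖g z‖ < 1 := by
      intro z hz
      have hw := hmax z hz
      have hd0 := hden _ hw
      simp only [hg_def]
      rw [norm_div, div_lt_one (norm_pos_iff.mpr hd0)]
      have key := moebius_key a (u z)
      have h1 : Complex.normSq (a - u z) < Complex.normSq (1 - (starRingEnd ℂ) a * u z) := by
        have e1 : Complex.normSq a < 1 := by
          rw [Complex.normSq_eq_norm_sq]; nlinarith [norm_nonneg a]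
        have e2 : Complex.normSq (u z) < 1 := by
          rw [Complex.normSq_eq_norm_sq]; nlinarith [norm_nonneg (u z)]
        nlinarith
      have := Real.sqrt_lt_sqrt (Complex.normSq_nonneg _) h1
      simpa [Complex.norm_def] using this
    have hgd : DifferentiableOn ℂ g (ball 0 1) := by
      apply DifferentiableOn.div
      · exact (differentiableOn_const _).sub hd
      · exact (differentiableOn_const _).sub (hd.const_mul _)
      · intro z hz; exact hden _ (hmax z hz)
    have hg0 : g 0 = 0 := by simp [hg_def, ha_def]
    have hmaps : Set.MapsTo g (ball 0 1) (ball (g 0) 1) := by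
      intro z hz
      rw [hg0, mem_ball, dist_zero_right]
      exact hglt z hz
    have hbound := Complex.norm_deriv_le_div_of_mapsTo_ball hgd (hmaps.mono_right ball_subset_closedBall) one_pos
    rw [div_one] at hbound
    -- compute deriv g 0
    have hua : DifferentiableAt ℂ u 0 := hd.differentiableAt (isOpen_ball.mem_nhds h01)
    set u' := deriv u 0 with hu'_def
    have hu' : HasDerivAt u u' 0 := hua.hasDerivAt
    have hnum : HasDerivAt (fun z => a - u z) (-u') 0 := by simpa using (hasDerivAt_const (0:ℂ) a).fun_sub hu'
    have hden' : HasDerivAt (fun z => 1 - (starRingEnd ℂ) a * u z) (-((starRingEnd ℂ) a * u')) 0 := by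
      simpa using (hasDerivAt_const (0:ℂ) (1:ℂ)).fun_sub (hu'.const_mul ((starRingEnd ℂ) a))
    have hdiv := hnum.fun_div hden' (hden _ ha)
    have hderg : deriv g 0 = -u' / (1 - (starRingEnd ℂ) a * a) := by
      have hD : (1 - (starRingEnd ℂ) (u 0) * u 0) ≠ 0 := by rw [← ha_def]; exact hden _ ha
      rw [hdiv.deriv, ha_def, sub_self]
      field_simp
      ring
    rw [hderg] at hbound
    have hca : (1 : ℂ) - (starRingEnd ℂ) a * a = ((1 - ‖a‖^2 : ℝ) : ℂ) := by
      rw [Complex.conj_mul']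
      push_cast
      norm_num
    rw [hca, norm_div, norm_neg, Complex.norm_real, Real.norm_eq_abs] at hbound
    have hpos : (0:ℝ) < 1 - ‖a‖^2 := by nlinarith [norm_nonneg a]
    rw [abs_of_pos hpos, div_le_one hpos] at hbound
    linarith

lemma root_sum {m : ℕ} (hm : 1 ≤ m) (j : ℕ) :
    ∑ k ∈ Finset.range m, (Complex.exp (2 * Real.pi * Complex.I / m)) ^ (k * j)
      = if m ∣ j then (m : ℂ) else 0 := by
  have hζ : IsPrimitiveRoot (Complex.exp (2 * Real.pi * Complex.I / m)) m :=
    Complex.isPrimitiveRoot_exp m (by omega)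
  set ζ := Complex.exp (2 * Real.pi * Complex.I / m) with hζdef
  have hpow : ∀ k : ℕ, ζ ^ (k * j) = (ζ ^ j) ^ k := fun k => by
    rw [← pow_mul, mul_comm]
  simp_rw [hpow]
  by_cases hdvd : m ∣ j
  · rw [if_pos hdvd, (hζ.pow_eq_one_iff_dvd j).mpr hdvd]
    simp
  · rw [if_neg hdvd]
    have h1 : ζ ^ j - 1 ≠ 0 := by
      intro h
      exact hdvd ((hζ.pow_eq_one_iff_dvd j).mp (by linear_combination h))
    have h2 := geom_sum_mul (ζ ^ j) m
    have h3 : (ζ ^ j) ^ m = 1 := by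
      rw [← pow_mul, mul_comm, pow_mul, hζ.pow_eq_one, one_pow]
    rw [h3, sub_self] at h2
    exact (mul_eq_zero.mp h2).resolve_right h1

lemma section_bound {b : ℕ → ℂ} {F : ℂ → ℂ} {M : ℝ}
    (hF : ∀ z ∈ ball (0:ℂ) 1, HasSum (fun n : ℕ => b n * z ^ n) (F z))
    (hM : ∀ z ∈ ball (0:ℂ) 1, ‖F z‖ ≤ M)
    {m : ℕ} (hm : 1 ≤ m) {w : ℂ} (hw : w ∈ ball (0:ℂ) 1) :
    ∃ S : ℂ, HasSum (fun j : ℕ => b (j * m) * w ^ j) S ∧ ‖S‖ ≤ M := by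
  obtain ⟨z, hz⟩ := IsAlgClosed.exists_pow_nat_eq w (show 0 < m by omega)
  rw [mem_ball, dist_zero_right] at hw
  have hznorm : ‖z‖ < 1 := by
    by_contra h
    push_neg at h
    have h1 : (1:ℝ) ≤ ‖z‖ ^ m := one_le_pow₀ h
    rw [← norm_pow, hz] at h1
    linarith
  set ζ := Complex.exp (2 * Real.pi * Complex.I / m) with hζdef
  have hζ1 : ‖ζ‖ = 1 := by
    rw [hζdef, Complex.norm_exp]
    convert Real.exp_zero using 2
    simp [Complex.div_re]
  have hmem : ∀ k : ℕ, ζ ^ k * z ∈ ball (0:ℂ) 1 := by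
    intro k
    rw [mem_ball, dist_zero_right, norm_mul, norm_pow, hζ1, one_pow, one_mul]
    exact hznorm
  have hsum1 : HasSum (fun n : ℕ => ∑ k ∈ Finset.range m, b n * (ζ ^ k * z) ^ n)
      (∑ k ∈ Finset.range m, F (ζ ^ k * z)) :=
    hasSum_sum fun k _ => hF _ (hmem k)
  have hrw : ∀ n : ℕ, ∑ k ∈ Finset.range m, b n * (ζ ^ k * z) ^ n
      = b n * z ^ n * (if m ∣ n then (m:ℂ) else 0) := by
    intro n
    have : ∀ k : ℕ, b n * (ζ ^ k * z) ^ n = b n * z ^ n * ζ ^ (k * n) := by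
      intro k
      rw [mul_pow, ← pow_mul]
      ring
    simp_rw [this]
    rw [← Finset.mul_sum, root_sum hm n]
  simp_rw [hrw] at hsum1
  have hm0 : (m : ℂ) ≠ 0 := by exact_mod_cast (by omega : m ≠ 0)
  have hsum2 := hsum1.mul_left ((m:ℂ)⁻¹)
  set S := (m:ℂ)⁻¹ * ∑ k ∈ Finset.range m, F (ζ ^ k * z) with hSdef
  have hsum3 : HasSum (fun n : ℕ => if m ∣ n then b n * z ^ n else 0) S := by
    refine hsum2.congr_fun fun n => ?_
    by_cases h : m ∣ n <;> simp [h] <;> field_simp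
  have hinj : Function.Injective (fun j : ℕ => j * m) :=
    mul_left_injective₀ (by omega : m ≠ 0)
  have hsupp : ∀ x ∉ Set.range (fun j : ℕ => j * m),
      (if m ∣ x then b x * z ^ x else 0) = 0 := by
    intro x hx
    rw [if_neg]
    intro ⟨c, hc⟩
    exact hx ⟨c, by simp [hc, mul_comm]⟩
  have hsum4 : HasSum (fun j : ℕ => b (j * m) * w ^ j) S := by
    have := (hinj.hasSum_iff hsupp).mpr hsum3
    refine this.congr_fun fun j => ?_
    simp only [Function.comp]
    rw [if_pos (dvd_mul_left m j), ← hz, mul_comm j m, pow_mul]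
  refine ⟨S, hsum4, ?_⟩
  rw [hSdef, norm_mul, norm_inv, Complex.norm_natCast]
  have hbound : ‖∑ k ∈ Finset.range m, F (ζ ^ k * z)‖ ≤ m * M := by
    calc ‖∑ k ∈ Finset.range m, F (ζ ^ k * z)‖
        ≤ ∑ k ∈ Finset.range m, ‖F (ζ ^ k * z)‖ := norm_sum_le _ _
      _ ≤ ∑ _k ∈ Finset.range m, M := Finset.sum_le_sum fun k _ => hM _ (hmem k)
      _ = m * M := by rw [Finset.sum_const, Finset.card_range]; simp
  have hmpos : (0:ℝ) < m := by exact_mod_cast (by omega : 0 < m)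
  rw [inv_mul_le_iff₀ hmpos]
  linarith [hbound]

lemma hasSum_at_zero (c : ℕ → ℂ) : HasSum (fun n : ℕ => c n * (0:ℂ) ^ n) (c 0) := by
  simpa using hasSum_single (f := fun n : ℕ => c n * (0:ℂ) ^ n) 0
    (fun n hn => by simp [zero_pow hn])

lemma mem_eball {z : ℂ} (h : z ∈ ball (0:ℂ) 1) : z ∈ Metric.eball (0:ℂ) (1 : ENNReal) := by
  rw [mem_ball, dist_zero_right] at h
  rw [Metric.mem_eball, edist_zero_right]
  exact (show ((‖z‖₊ : ℝ≥0) : ℝ≥0∞) < 1 by exact_mod_cast (show (‖z‖₊ : ℝ≥0) < 1 by exact_mod_cast h))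

/-- Bohr's inequality: if `F(z) = ∑ b_m z^m` is bounded by `M` on the unit
disc, then `∑ |b_m| r^m ≤ M` for `0 ≤ r ≤ 1/3`. -/
theorem bohr_inequality (b : ℕ → ℂ) (F : ℂ → ℂ) (M : ℝ)
    (hF : ∀ z ∈ Metric.ball (0 : ℂ) 1, HasSum (fun m : ℕ => b m * z ^ m) (F z))
    (hM : ∀ z ∈ Metric.ball (0 : ℂ) 1, ‖F z‖ ≤ M)
    (r : ℝ) (hr0 : 0 ≤ r) (hr : r ≤ 1 / 3) :
    Summable (fun m : ℕ => ‖b m‖ * r ^ m) ∧ ∑' m : ℕ, ‖b m‖ * r ^ m ≤ M := by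
  have h01 : (0:ℂ) ∈ ball (0:ℂ) 1 := by simp
  have hp : HasFPowerSeriesOnBall F (FormalMultilinearSeries.ofScalars ℂ b) 0 1 := hasFPSOnBall hF
  have hFb0 : F 0 = b 0 := (hF 0 h01).unique (hasSum_at_zero b)
  have hb0M : ‖b 0‖ ≤ M := hFb0 ▸ hM 0 h01
  have hM0 : 0 ≤ M := le_trans (norm_nonneg _) hb0M
  have hr1 : r < 1 := by linarith
  -- summability
  have hcoe : (r.toNNReal : ℝ) = r := Real.coe_toNNReal r hr0
  have hrlt : r.toNNReal < 1 := by rw [← NNReal.coe_lt_coe]; rw [hcoe]; exact_mod_cast hr1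
  have hrad : (r.toNNReal : ℝ≥0∞) < (FormalMultilinearSeries.ofScalars ℂ b).radius :=
    lt_of_lt_of_le (by exact_mod_cast hrlt) hp.r_le
  have hsummable : Summable (fun n : ℕ => ‖b n‖ * r ^ n) := by
    have h2 := (FormalMultilinearSeries.ofScalars ℂ b).summable_norm_mul_pow hrad
    refine h2.congr fun n => ?_
    rw [FormalMultilinearSeries.ofScalars_norm, hcoe]
  refine ⟨hsummable, ?_⟩
  by_cases hMpos : 0 < M
  · -- coefficient bound
    set C : ℝ := M - ‖b 0‖^2 / M with hC
    have hCnn : 0 ≤ C := by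
      rw [hC, sub_nonneg, div_le_iff₀ hMpos]
      nlinarith [mul_self_le_mul_self (norm_nonneg (b 0)) hb0M]
    have hbm : ∀ m : ℕ, 1 ≤ m → ‖b m‖ ≤ C := by
      intro m hm
      set u : ℂ → ℂ := fun w => ∑' j : ℕ, ((M:ℂ)⁻¹ * b (j * m)) * w ^ j with hu
      have husum : ∀ w ∈ ball (0:ℂ) 1,
          HasSum (fun j : ℕ => ((M:ℂ)⁻¹ * b (j * m)) * w ^ j) (u w) := by
        intro w hw
        obtain ⟨S, hS, _⟩ := section_bound hF hM hm hw
        have := hS.mul_left ((M:ℂ)⁻¹)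
        have heq : u w = (M:ℂ)⁻¹ * S := by
          rw [hu]
          simp only
          rw [← this.tsum_eq]
          congr 1 with j
          ring
        rw [heq]
        exact this.congr_fun fun j => by ring
      have huM : ∀ z ∈ ball (0:ℂ) 1, ‖u z‖ ≤ 1 := by
        intro z hz
        obtain ⟨S, hS, hSM⟩ := section_bound hF hM hm hz
        have h1 : u z = (M:ℂ)⁻¹ * S := ((hS.mul_left ((M:ℂ)⁻¹)).congr_fun
          (fun j => by ring)).unique (husum z hz) |>.symm
        rw [h1, norm_mul, norm_inv, Complex.norm_real, Real.norm_eq_abs,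
          abs_of_pos hMpos, inv_mul_le_iff₀ hMpos, mul_one]
        exact hSM
      have hqu : HasFPowerSeriesOnBall u
          (FormalMultilinearSeries.ofScalars ℂ (fun j => (M:ℂ)⁻¹ * b (j * m))) 0 1 :=
        hasFPSOnBall husum
      have hud : DifferentiableOn ℂ u (ball 0 1) := by
        intro z hz
        exact (hqu.differentiableOn z (mem_eball hz)).mono (fun x hx => mem_eball hx)
      have hsp := schwarz_pick_zero hud huM
      have hu0 : u 0 = (M:ℂ)⁻¹ * b 0 := by
        have := husum 0 h01
        have h2 := hasSum_at_zero (fun j => (M:ℂ)⁻¹ * b (j * m))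
        rw [show (0 : ℕ) * m = 0 from Nat.zero_mul m] at h2
        exact (this.unique h2)
      have hderiv : deriv u 0 = (M:ℂ)⁻¹ * b m := by
        rw [hqu.hasFPowerSeriesAt.deriv]
        rw [FormalMultilinearSeries.ofScalars_apply_eq]
        simp
      rw [hderiv, hu0] at hsp
      rw [norm_mul, norm_mul, norm_inv, Complex.norm_real, Real.norm_eq_abs,
        abs_of_pos hMpos] at hsp
      rw [hC]
      have hsp' : M * (M⁻¹ * ‖b m‖) ≤ M * (1 - (M⁻¹ * ‖b 0‖)^2) :=
        mul_le_mul_of_nonneg_left hsp hM0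
      have e1 : M * (M⁻¹ * ‖b m‖) = ‖b m‖ := by field_simp
      have e2 : M * (1 - (M⁻¹ * ‖b 0‖)^2) = M - ‖b 0‖^2 / M := by field_simp
      rw [e1, e2] at hsp'
      exact hsp'
    -- final estimate
    rw [Summable.tsum_eq_zero_add hsummable]
    simp only [pow_zero, mul_one]
    have hshift : Summable (fun n : ℕ => ‖b (n + 1)‖ * r ^ (n + 1)) :=
      (summable_nat_add_iff (f := fun n : ℕ => ‖b n‖ * r ^ n) 1).mpr hsummable
    have hgeo : Summable (fun n : ℕ => (C * r) * r ^ n) :=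
      (summable_geometric_of_lt_one hr0 hr1).mul_left _
    have hgeo' : Summable (fun n : ℕ => C * r ^ (n + 1)) := by
      refine hgeo.congr fun n => ?_
      rw [pow_succ]
      ring
    have htail : ∑' n : ℕ, ‖b (n + 1)‖ * r ^ (n + 1) ≤ ∑' n : ℕ, C * r ^ (n + 1) := by
      refine Summable.tsum_le_tsum (fun n => ?_) hshift hgeo'
      exact mul_le_mul_of_nonneg_right (hbm (n+1) (by omega)) (pow_nonneg hr0 _)
    have hgeoval : ∑' n : ℕ, C * r ^ (n + 1) = (C * r) * (1 - r)⁻¹ := by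
      have : ∀ n : ℕ, C * r ^ (n + 1) = (C * r) * r ^ n := fun n => by rw [pow_succ]; ring
      rw [tsum_congr this, tsum_mul_left, tsum_geometric_of_lt_one hr0 hr1]
    rw [hgeoval] at htail
    have hkey : (C * r) * (1 - r)⁻¹ ≤ C / 2 := by
      have h1r : (0:ℝ) < 1 - r := by linarith
      rw [← div_eq_mul_inv, div_le_iff₀ h1r]
      nlinarith [mul_le_mul_of_nonneg_left hr hCnn]
    have hfinal : ‖b 0‖ + C / 2 ≤ M := by
      rw [hC]
      have h4 : ‖b 0‖^2 / M * M = ‖b 0‖^2 := div_mul_cancel₀ _ (ne_of_gt hMpos)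
      nlinarith [h4, sq_nonneg (M - ‖b 0‖), hMpos]
    linarith [htail, hkey]
  · -- M = 0
    have hMeq : M = 0 := le_antisymm (not_lt.mp hMpos) hM0
    have hF0 : ∀ z ∈ ball (0:ℂ) 1, HasSum (fun n : ℕ => b n * z ^ n) ((fun _ => (0:ℂ)) z) := by
      intro z hz
      have : F z = 0 := norm_le_zero_iff.mp (hMeq ▸ hM z hz)
      exact this ▸ hF z hz
    have h1 := hasFPSOnBall hF0
    have h2 : HasFPowerSeriesOnBall (fun _ => (0:ℂ))
        (FormalMultilinearSeries.ofScalars ℂ (fun _ => (0:ℂ))) 0 1 :=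
      hasFPSOnBall (by intro z hz; simpa using hasSum_zero)
    have h3 := h1.hasFPowerSeriesAt.eq_formalMultilinearSeries h2.hasFPowerSeriesAt
    have hb : b = fun _ => 0 := FormalMultilinearSeries.ofScalars_series_injective ℂ ℂ h3
    rw [hb, hMeq]
    simp
end

section
/- For any a : ℕ → ℂ whose Dirichlet series f(s) = Σ_{n=1}^∞ a_n n^{-s} converges uniformly in t on some vertical line abscissa, the abscissas of uniform and absolute convergence satisfy σ_a(f) − σ_b(f) ≤ 1/2; equivalently, if Σ_{n=1}^∞ a_n n^{-σ-it} converges uniformly in t ∈ ℝ for some σ ∈ ℝ, then Σ_{n=1}^∞ |a_n| n^{-σ-1/2-ε} converges for every ε > 0. -/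
open Filter Topology

open Finset in
lemma geom_avg_zero (z : ℂ) (hz1 : ‖z‖ = 1) (hz : z ≠ 1) :
    Tendsto (fun K : ℕ => (K : ℂ)⁻¹ * ∑ k ∈ range K, z ^ k) atTop (𝓝 0) := by
  have hd : 0 < ‖z - 1‖ := by simpa [norm_pos_iff, sub_eq_zero] using hz
  refine squeeze_zero_norm (a := fun K : ℕ => (K : ℝ)⁻¹ * (2 / ‖z - 1‖)) ?_ ?_
  · intro K
    have hS : ‖∑ k ∈ range K, z ^ k‖ ≤ 2 / ‖z - 1‖ := by
      rw [geom_sum_eq hz, norm_div]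
      gcongr
      calc ‖z ^ K - 1‖ ≤ ‖z ^ K‖ + ‖(1 : ℂ)‖ := norm_sub_le _ _
        _ ≤ 2 := by simp [norm_pow, hz1]; norm_num
    calc ‖(K : ℂ)⁻¹ * ∑ k ∈ range K, z ^ k‖
        = (K : ℝ)⁻¹ * ‖∑ k ∈ range K, z ^ k‖ := by
          rw [norm_mul, norm_inv, Complex.norm_natCast]
      _ ≤ (K : ℝ)⁻¹ * (2 / ‖z - 1‖) := by
          apply mul_le_mul_of_nonneg_left hS (by positivity)
  · simpa using (tendsto_inv_atTop_nhds_zero_nat (𝕜 := ℝ)).mul_const (2 / ‖z - 1‖)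


open Finset in
lemma sum_sq_le_of_bound (F : Finset ℕ) (c : ℕ → ℂ) (lam : ℕ → ℝ) (θ : ℝ)
    (hne : ∀ m ∈ F, ∀ n ∈ F, m ≠ n →
      Complex.exp (((θ * (lam m - lam n) : ℝ) : ℂ) * Complex.I) ≠ 1)
    (B : ℝ)
    (hbd : ∀ k : ℕ,
      ‖∑ n ∈ F, c n * Complex.exp (((lam n * (θ * k) : ℝ) : ℂ) * Complex.I)‖ ≤ B) :
    ∑ n ∈ F, ‖c n‖ ^ 2 ≤ B ^ 2 := by
  have hB : 0 ≤ B := le_trans (norm_nonneg _) (hbd 0)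
  set S : ℕ → ℂ := fun k => ∑ n ∈ F, c n * Complex.exp (((lam n * (θ * k) : ℝ) : ℂ) * Complex.I)
    with hSdef
  set z : ℕ → ℕ → ℂ := fun m n => Complex.exp (((θ * (lam m - lam n) : ℝ) : ℂ) * Complex.I)
    with hzdef
  have hz1 : ∀ m n, ‖z m n‖ = 1 := by
    intro m n
    rw [hzdef]
    simp [Complex.norm_exp]
  have hexp : ∀ k : ℕ, S k * (starRingEnd ℂ) (S k)
      = ∑ m ∈ F, ∑ n ∈ F, c m * (starRingEnd ℂ) (c n) * z m n ^ k := by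
    intro k
    rw [hSdef]
    simp only [map_sum, Finset.sum_mul_sum, map_mul]
    refine Finset.sum_congr rfl fun m hm => Finset.sum_congr rfl fun n hn => ?_
    have h1 : (starRingEnd ℂ) (Complex.exp (((lam n * (θ * k) : ℝ) : ℂ) * Complex.I))
        = Complex.exp (-(((lam n * (θ * k) : ℝ) : ℂ) * Complex.I)) := by
      rw [← Complex.exp_conj]
      congr 1
      simp [Complex.conj_I, Complex.conj_ofReal]
    rw [h1]
    have h2 : z m n ^ k = Complex.exp ((k : ℂ) * (((θ * (lam m - lam n) : ℝ) : ℂ) * Complex.I)) := by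
      rw [hzdef, ← Complex.exp_nat_mul]
    rw [h2]
    rw [mul_mul_mul_comm, ← Complex.exp_add]
    congr 2
    push_cast
    ring
  have havg : ∀ K : ℕ, (K : ℂ)⁻¹ * ∑ k ∈ range K, S k * (starRingEnd ℂ) (S k)
      = ∑ m ∈ F, ∑ n ∈ F,
          (c m * (starRingEnd ℂ) (c n)) * ((K : ℂ)⁻¹ * ∑ k ∈ range K, z m n ^ k) := by
    intro K
    simp only [hexp]
    rw [Finset.sum_comm]
    rw [Finset.mul_sum]
    refine Finset.sum_congr rfl fun m hm => ?_
    rw [Finset.sum_comm, Finset.mul_sum]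
    refine Finset.sum_congr rfl fun n hn => ?_
    rw [← Finset.mul_sum, Finset.mul_sum]
    rw [← Finset.mul_sum]
    ring
  -- limit of each term
  have hterm : ∀ m ∈ F, ∀ n ∈ F,
      Tendsto (fun K : ℕ => (c m * (starRingEnd ℂ) (c n)) * ((K : ℂ)⁻¹ * ∑ k ∈ range K, z m n ^ k))
        atTop (𝓝 (if m = n then ((‖c m‖ : ℂ) ^ 2) else 0)) := by
    intro m hm n hn
    by_cases hmn : m = n
    · subst hmn
      simp only [if_pos rfl]
      have hz1' : z m m = 1 := by
        rw [hzdef]; simp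
      have heq : ∀ᶠ K : ℕ in atTop,
          (c m * (starRingEnd ℂ) (c m)) * ((K : ℂ)⁻¹ * ∑ k ∈ range K, z m m ^ k)
          = (‖c m‖ : ℂ) ^ 2 := by
        filter_upwards [eventually_ge_atTop 1] with K hK
        have hK0 : (K : ℂ) ≠ 0 := by exact_mod_cast Nat.one_le_iff_ne_zero.mp hK
        rw [hz1']
        simp only [one_pow, Finset.sum_const, Finset.card_range, nsmul_eq_mul, mul_one]
        rw [inv_mul_cancel₀ hK0, mul_one, Complex.mul_conj, Complex.normSq_eq_norm_sq]
        push_cast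
        rfl
      exact Tendsto.congr' (EventuallyEq.symm heq) tendsto_const_nhds
    · simp only [if_neg hmn]
      have := (geom_avg_zero (z m n) (hz1 m n) (hne m hm n hn hmn)).const_mul
        (c m * (starRingEnd ℂ) (c n))
      simpa using this
  have hlim : Tendsto (fun K : ℕ => (K : ℂ)⁻¹ * ∑ k ∈ range K, S k * (starRingEnd ℂ) (S k))
      atTop (𝓝 ((∑ n ∈ F, ‖c n‖ ^ 2 : ℝ) : ℂ)) := by
    have h1 : Tendsto (fun K : ℕ => ∑ m ∈ F, ∑ n ∈ F,
        (c m * (starRingEnd ℂ) (c n)) * ((K : ℂ)⁻¹ * ∑ k ∈ range K, z m n ^ k))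
        atTop (𝓝 (∑ m ∈ F, ∑ n ∈ F, if m = n then ((‖c m‖ : ℂ) ^ 2) else 0)) := by
      refine tendsto_finset_sum _ fun m hm => tendsto_finset_sum _ fun n hn => hterm m hm n hn
    have h2 : (∑ m ∈ F, ∑ n ∈ F, if m = n then ((‖c m‖ : ℂ) ^ 2) else 0)
        = ((∑ n ∈ F, ‖c n‖ ^ 2 : ℝ) : ℂ) := by
      push_cast
      refine Finset.sum_congr rfl fun m hm => ?_
      rw [Finset.sum_ite_eq]
      simp [hm]
    rw [← h2]
    exact Tendsto.congr (fun K => (havg K).symm) h1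
  -- real version
  have hreal : ∀ K : ℕ, ((K : ℂ)⁻¹ * ∑ k ∈ range K, S k * (starRingEnd ℂ) (S k)).re
      = (K : ℝ)⁻¹ * ∑ k ∈ range K, ‖S k‖ ^ 2 := by
    intro K
    have : ∀ k, S k * (starRingEnd ℂ) (S k) = ((‖S k‖ ^ 2 : ℝ) : ℂ) := by
      intro k
      rw [Complex.mul_conj]
      norm_cast
      rw [Complex.normSq_eq_norm_sq]
    simp only [this]
    rw [← Complex.ofReal_sum]
    rw [show ((K : ℂ))⁻¹ = (((K : ℝ)⁻¹ : ℝ) : ℂ) by push_cast; rfl]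
    rw [← Complex.ofReal_mul, Complex.ofReal_re]
  have hle : ∀ᶠ K : ℕ in atTop,
      ((K : ℂ)⁻¹ * ∑ k ∈ range K, S k * (starRingEnd ℂ) (S k)).re ≤ B ^ 2 := by
    filter_upwards [eventually_ge_atTop 1] with K hK
    rw [hreal K]
    have hsum : ∑ k ∈ range K, ‖S k‖ ^ 2 ≤ K * B ^ 2 := by
      calc ∑ k ∈ range K, ‖S k‖ ^ 2 ≤ ∑ k ∈ range K, B ^ 2 := by
            refine Finset.sum_le_sum fun k _ => ?_
            exact pow_le_pow_left₀ (norm_nonneg _) (hbd k) 2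
        _ = K * B ^ 2 := by simp [mul_comm]
    calc (K : ℝ)⁻¹ * ∑ k ∈ range K, ‖S k‖ ^ 2 ≤ (K : ℝ)⁻¹ * (K * B ^ 2) := by
          apply mul_le_mul_of_nonneg_left hsum (by positivity)
      _ = B ^ 2 := by
          rw [← mul_assoc, inv_mul_cancel₀ (by exact_mod_cast Nat.pos_of_ne_zero (by omega) |>.ne')]
          ring
  have hfin := le_of_tendsto ((Complex.continuous_re.tendsto _).comp hlim) hle
  rwa [Complex.ofReal_re] at hfin

open Finset in
lemma exists_theta (lam : ℕ → ℝ) (hinj : Function.Injective lam) :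
    ∃ θ : ℝ, ∀ m n : ℕ, m ≠ n →
      Complex.exp (((θ * (lam m - lam n) : ℝ) : ℂ) * Complex.I) ≠ 1 := by
  by_contra hcon
  push_neg at hcon
  have hsub : (Set.univ : Set ℝ) ⊆ Set.range
      (fun p : ℕ × ℕ × ℤ => ((p.2.2 : ℝ) * (2 * Real.pi)) / (lam p.1 - lam p.2.1)) := by
    intro θ _
    obtain ⟨m, n, hmn, hexp⟩ := hcon θ
    rw [Complex.exp_eq_one_iff] at hexp
    obtain ⟨j, hj⟩ := hexp
    have hj' : ((θ * (lam m - lam n) : ℝ) : ℂ) = ((j : ℝ) * (2 * Real.pi) : ℝ) := by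
      have := hj
      rw [show ((j : ℂ) * (2 * (Real.pi : ℂ) * Complex.I)) =
          (((j : ℝ) * (2 * Real.pi) : ℝ) : ℂ) * Complex.I by push_cast; ring] at this
      exact mul_right_cancel₀ Complex.I_ne_zero this
    have hreal : θ * (lam m - lam n) = (j : ℝ) * (2 * Real.pi) := by exact_mod_cast hj'
    have hne : lam m - lam n ≠ 0 := sub_ne_zero.mpr (fun h => hmn (hinj h))
    refine ⟨⟨m, n, j⟩, ?_⟩
    field_simp [hne]
    linarith [hreal]
  have : (Set.univ : Set ℝ).Countable :=
    Set.Countable.mono hsub (Set.countable_range _)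
  exact Cardinal.not_countable_real this


/-- `σ_a - σ_b ≤ 1/2`: if the Dirichlet series converges uniformly in `t` at
abscissa `σ`, then it converges absolutely at `σ + 1/2 + ε` for every `ε > 0`. -/
theorem sigmaA_sub_sigmaB_le_half (a : ℕ → ℂ) (σ : ℝ)
    (h : DirichletConvergesUniformlyAt a σ) (ε : ℝ) (hε : 0 < ε) :
    DirichletAbsConvergesAt a (σ + 1 / 2 + ε) := by
  classical
  set lam : ℕ → ℝ := fun n => -Real.log ((n : ℝ) + 1) with hlam
  have hinj : Function.Injective lam := by
    intro m n hmn
    simp only [hlam, neg_inj] at hmn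
    have h1 : ((m : ℝ) + 1) = ((n : ℝ) + 1) := by
      have hm : (0:ℝ) < (m:ℝ) + 1 := by positivity
      have hn : (0:ℝ) < (n:ℝ) + 1 := by positivity
      rw [← Real.exp_log hm, ← Real.exp_log hn, hmn]
    have h2 : (m : ℝ) = (n : ℝ) := by linarith
    exact_mod_cast h2
  set c : ℕ → ℂ := fun n => a (n + 1) * (((((n : ℝ) + 1) ^ (-σ) : ℝ)) : ℂ) with hc
  -- key pointwise identity
  have key : ∀ (n : ℕ) (t : ℝ),
      a (n + 1) / ((n : ℂ) + 1) ^ ((σ : ℂ) + (t : ℂ) * Complex.I)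
      = c n * Complex.exp (((lam n * t : ℝ) : ℂ) * Complex.I) := by
    intro n t
    have hx : (0:ℝ) < (n : ℝ) + 1 := by positivity
    have hx0 : (((n : ℝ) + 1 : ℝ) : ℂ) ≠ 0 := by exact_mod_cast hx.ne'
    have hcast : ((n : ℂ) + 1) = (((n : ℝ) + 1 : ℝ) : ℂ) := by push_cast; ring
    have hcexp : c n = a (n + 1) *
        Complex.exp (((-σ * Real.log ((n : ℝ) + 1) : ℝ) : ℂ)) := by
      show a (n + 1) * (((((n : ℝ) + 1) ^ (-σ) : ℝ)) : ℂ) = _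
      congr 1
      rw [Real.rpow_def_of_pos hx, ← Complex.ofReal_exp]
      congr 2
      ring
    rw [hcast, Complex.cpow_def_of_ne_zero hx0, ← Complex.ofReal_log hx.le,
      div_eq_mul_inv, ← Complex.exp_neg, hcexp, mul_assoc, ← Complex.exp_add]
    congr 1
    simp only [hlam]
    push_cast
    ring
  -- uniform Cauchy bound
  obtain ⟨g, hg⟩ := h
  rw [Metric.tendstoUniformly_iff] at hg
  obtain ⟨M, hM⟩ := eventually_atTop.mp (hg (1/2) (by norm_num))
  have hcauchy : ∀ N, M ≤ N → ∀ t : ℝ,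
      ‖dirichletPartial a ((σ : ℂ) + (t : ℂ) * Complex.I) N
        - dirichletPartial a ((σ : ℂ) + (t : ℂ) * Complex.I) M‖ ≤ 1 := by
    intro N hN t
    have h1 := hM N hN t
    have h2 := hM M le_rfl t
    rw [← dist_eq_norm]
    calc dist (dirichletPartial a ((σ : ℂ) + (t : ℂ) * Complex.I) N)
          (dirichletPartial a ((σ : ℂ) + (t : ℂ) * Complex.I) M)
        ≤ dist (g t) (dirichletPartial a ((σ : ℂ) + (t : ℂ) * Complex.I) N)
          + dist (g t) (dirichletPartial a ((σ : ℂ) + (t : ℂ) * Complex.I) M) :=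
          dist_triangle_left _ _ _
      _ ≤ 1 := by linarith
  -- choose theta
  obtain ⟨θ, hθ⟩ := exists_theta lam hinj
  -- ℓ² tail bound
  have htail : ∀ N, M ≤ N → ∑ n ∈ Finset.Ico M N, ‖c n‖ ^ 2 ≤ 1 := by
    intro N hN
    have := sum_sq_le_of_bound (Finset.Ico M N) c lam θ
      (fun m _ n _ hmn => hθ m n hmn) 1 ?_
    · simpa using this
    · intro k
      have hsum : ∑ n ∈ Finset.Ico M N,
          c n * Complex.exp (((lam n * (θ * k) : ℝ) : ℂ) * Complex.I)
          = dirichletPartial a ((σ : ℂ) + ((θ * k : ℝ) : ℂ) * Complex.I) N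
            - dirichletPartial a ((σ : ℂ) + ((θ * k : ℝ) : ℂ) * Complex.I) M := by
        rw [dirichletPartial, dirichletPartial, ← Finset.sum_Ico_eq_sub _ hN]
        exact Finset.sum_congr rfl fun n _ => (key n (θ * k)).symm
      rw [hsum]
      exact hcauchy N hN (θ * k)
  -- summability of ‖c n‖²
  have hb2 : Summable (fun n => ‖c n‖ ^ 2) := by
    apply summable_of_sum_range_le (c := (∑ n ∈ Finset.range M, ‖c n‖ ^ 2) + 1)
      (fun n => by positivity)
    intro N
    rcases le_or_gt N M with hNM | hMN
    · have h1 : ∑ n ∈ Finset.range N, ‖c n‖ ^ 2 ≤ ∑ n ∈ Finset.range M, ‖c n‖ ^ 2 :=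
        Finset.sum_le_sum_of_subset_of_nonneg (Finset.range_subset_range.mpr hNM)
          (fun n _ _ => by positivity)
      linarith
    · have hsplit : ∑ n ∈ Finset.range N, ‖c n‖ ^ 2
          = ∑ n ∈ Finset.range M, ‖c n‖ ^ 2 + ∑ n ∈ Finset.Ico M N, ‖c n‖ ^ 2 := by
        rw [Finset.sum_Ico_eq_sub _ hMN.le]
        ring
      rw [hsplit]
      linarith [htail N hMN.le]
  -- Cauchy-Schwarz finish
  set d : ℕ → ℝ := fun n => ((n : ℝ) + 1) ^ (-(1/2 + ε)) with hd
  have hd2 : Summable (fun n => d n ^ 2) := by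
    have heq : ∀ n : ℕ, d n ^ 2 = ((n : ℝ) + 1) ^ (-(1 + 2*ε)) := by
      intro n
      have hx : (0:ℝ) < (n : ℝ) + 1 := by positivity
      rw [hd, ← Real.rpow_natCast (((n : ℝ) + 1) ^ (-(1/2 + ε))) 2,
        ← Real.rpow_mul hx.le]
      norm_num
      ring_nf
    rw [funext heq]
    have : Summable (fun n : ℕ => ((n : ℝ)) ^ (-(1 + 2*ε))) := by
      rw [Real.summable_nat_rpow]
      linarith
    have h2 := (summable_nat_add_iff 1).mpr this
    apply h2.congr
    intro n
    push_cast
    ring_nf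
  have hbd2 : Summable (fun n => ‖c n‖ * d n) := by
    apply Summable.of_nonneg_of_le (fun n => by positivity)
      (fun n => ?_) (((hb2.add hd2).div_const 2))
    show ‖c n‖ * d n ≤ (‖c n‖ ^ 2 + d n ^ 2) / 2
    nlinarith [norm_nonneg (c n), sq_nonneg (‖c n‖ - d n)]
  unfold DirichletAbsConvergesAt
  apply hbd2.congr
  intro n
  have hx : (0:ℝ) < (n : ℝ) + 1 := by positivity
  have hnorm : ‖c n‖ = ‖a (n + 1)‖ * ((n : ℝ) + 1) ^ (-σ) := by
    rw [hc]
    rw [norm_mul, Complex.norm_real, Real.norm_eq_abs,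
      abs_of_pos (Real.rpow_pos_of_pos hx _)]
  have hdn : d n = ((n : ℝ) + 1) ^ (-(1/2 + ε)) := rfl
  rw [hnorm, hdn, mul_assoc, ← Real.rpow_add hx]
  rw [show -σ + -(1/2 + ε) = -(σ + 1/2 + ε) by ring, Real.rpow_neg hx.le]
  exact (div_eq_mul_inv _ _).symm
end

section
/- Let a : ℕ → ℂ be such that the series Σ_{n=1}^∞ a_n diverges. Then the abscissa of convergence of f(s) = Σ_{n=1}^∞ a_n n^{-s} is given by the Cauchy–Hadamard type formula σ_c(f) = limsup_{x → ∞} (1/log x) · log |Σ_{n ≤ x} a_n|. -/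
open Filter Topology

namespace CHaux

noncomputable def pS (a : ℕ → ℂ) (k : ℕ) : ℂ := ∑ n ∈ Finset.range k, a (n + 1)

lemma abel (a : ℕ → ℂ) (w : ℕ → ℂ) (N : ℕ) :
    ∑ n ∈ Finset.range N, a (n + 1) * w (n + 1) =
      pS a N * w N + ∑ n ∈ Finset.range N, pS a n * (w n - w (n + 1)) := by
  induction N with
  | zero => simp [pS]
  | succ N ih =>
    rw [Finset.sum_range_succ, ih, Finset.sum_range_succ]
    have h1 : pS a (N + 1) = pS a N + a (N + 1) := Finset.sum_range_succ _ _
    rw [h1]; ring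

lemma rpow_mvt {p : ℝ} (hp : 0 < p) {x : ℝ} (hx : 1 ≤ x) :
    |x ^ (-p) - (x + 1) ^ (-p)| ≤ p * x ^ (-p - 1) := by
  have hx0 : (0:ℝ) < x := lt_of_lt_of_le one_pos hx
  have hlt : x < x + 1 := by linarith
  have hd : ∀ y ∈ Set.Icc x (x + 1), HasDerivAt (fun y : ℝ => y ^ (-p)) (-p * y ^ (-p - 1)) y := by
    intro y hy
    have hy0 : y ≠ 0 := by nlinarith [hy.1]
    have := Real.hasDerivAt_rpow_const (p := -p) (Or.inl hy0)
    exact this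
  obtain ⟨c, hc, hceq⟩ := exists_hasDerivAt_eq_slope (fun y : ℝ => y ^ (-p))
    (fun y => -p * y ^ (-p - 1)) hlt
    (fun y hy => (hd y hy).continuousAt.continuousWithinAt)
    (fun y hy => hd y ⟨hy.1.le, hy.2.le⟩)
  have h2 : x + 1 - x = 1 := by ring
  rw [h2, div_one] at hceq
  have hc1 : x ^ (-p) - (x + 1) ^ (-p) = p * c ^ (-p - 1) := by linear_combination hceq
  have hcpos : (0:ℝ) < c ^ (-p - 1) := Real.rpow_pos_of_pos (lt_trans hx0 hc.1) _
  rw [hc1, abs_of_nonneg (by positivity)]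
  have hle : c ^ (-p - 1) ≤ x ^ (-p - 1) :=
    Real.rpow_le_rpow_of_nonpos hx0 hc.1.le (by linarith)
  exact mul_le_mul_of_nonneg_left hle hp.le

lemma dp_eq (a : ℕ → ℂ) (σ : ℝ) (N : ℕ) :
    dirichletPartial a (σ : ℂ) N =
      ∑ n ∈ Finset.range N, a (n + 1) * ((((n + 1 : ℕ) : ℝ) ^ (-σ) : ℝ) : ℂ) := by
  unfold dirichletPartial
  refine Finset.sum_congr rfl fun n _ => ?_
  have h0 : (0:ℝ) ≤ ((n + 1 : ℕ) : ℝ) := by positivity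
  have h1 : ((n : ℂ) + 1) = ((((n + 1 : ℕ) : ℝ)) : ℂ) := by push_cast; ring
  rw [h1, ← Complex.ofReal_cpow h0, Real.rpow_neg h0, Complex.ofReal_inv, div_eq_mul_inv]


lemma tendsto_cn (C e : ℝ) (he : e < 0) :
    Tendsto (fun N : ℕ => C * ((N:ℝ)) ^ e) atTop (𝓝 0) := by
  have h := (tendsto_rpow_neg_atTop (y := -e) (by linarith)).comp tendsto_natCast_atTop_atTop
  have h2 := h.const_mul C
  simpa using h2

lemma lemB (a : ℕ → ℂ) {θ σ C : ℝ} (hθ : 0 ≤ θ) (hσ : θ < σ) (hC : 0 ≤ C)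
    (hA : ∀ n : ℕ, ‖pS a n‖ ≤ C * (n : ℝ) ^ θ) :
    DirichletConvergesAt a σ := by
  have hσ0 : 0 < σ := lt_of_le_of_lt hθ hσ
  set w : ℕ → ℂ := fun k => ((((k:ℕ) : ℝ) ^ (-σ) : ℝ) : ℂ) with hw
  have key : ∀ N, dirichletPartial a (σ:ℂ) N =
      pS a N * w N + ∑ n ∈ Finset.range N, pS a n * (w n - w (n + 1)) := by
    intro N; rw [dp_eq, abel a w N]
  have h1 : Tendsto (fun N => pS a N * w N) atTop (𝓝 0) := by
    apply squeeze_zero_norm (a := fun N : ℕ => C * (N:ℝ) ^ (θ - σ))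
    · intro N
      rcases Nat.eq_zero_or_pos N with rfl | hN
      · have : pS a 0 = 0 := by simp [pS]
        rw [this, zero_mul, norm_zero]
        positivity
      · have hN0 : (0:ℝ) < N := by exact_mod_cast hN
        rw [norm_mul, hw]
        calc ‖pS a N‖ * ‖((((N:ℕ):ℝ) ^ (-σ) : ℝ) : ℂ)‖
            ≤ (C * (N:ℝ) ^ θ) * (N:ℝ) ^ (-σ) := by
              rw [Complex.norm_real, Real.norm_eq_abs, abs_of_nonneg (Real.rpow_nonneg hN0.le _)]
              exact mul_le_mul_of_nonneg_right (hA N) (Real.rpow_nonneg hN0.le _)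
          _ = C * (N:ℝ) ^ (θ - σ) := by
              rw [mul_assoc, ← Real.rpow_add hN0]; ring_nf
    · exact tendsto_cn C (θ - σ) (by linarith)
  have h2 : Summable (fun n => pS a n * (w n - w (n + 1))) := by
    rw [← summable_nat_add_iff 1]
    apply Summable.of_norm_bounded (g := fun n : ℕ => (C * σ) * (((n + 1 : ℕ)) : ℝ) ^ (θ - σ - 1))
    · have hs : Summable (fun n : ℕ => ((n:ℝ)) ^ (θ - σ - 1)) :=
        Real.summable_nat_rpow.mpr (by linarith)
      exact ((summable_nat_add_iff 1).mpr hs).mul_left (C * σ)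
    · intro n
      set m : ℝ := ((n + 1 : ℕ) : ℝ) with hm
      have hm1 : (1:ℝ) ≤ m := by rw [hm]; exact_mod_cast Nat.one_le_iff_ne_zero.mpr (Nat.succ_ne_zero n)
      have hm0 : (0:ℝ) < m := lt_of_lt_of_le one_pos hm1
      have hcast : ((n + 1 + 1 : ℕ) : ℝ) = m + 1 := by rw [hm]; push_cast; ring
      rw [norm_mul, hw]
      have hnorm2 : ‖(((((n+1:ℕ)):ℝ) ^ (-σ) : ℝ) : ℂ) - (((((n+1+1:ℕ)):ℝ) ^ (-σ) : ℝ) : ℂ)‖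
          = |m ^ (-σ) - (m + 1) ^ (-σ)| := by
        rw [← Complex.ofReal_sub, Complex.norm_real, Real.norm_eq_abs, hcast]
      calc ‖pS a (n+1)‖ * ‖(((((n+1:ℕ)):ℝ) ^ (-σ) : ℝ) : ℂ) - (((((n+1+1:ℕ)):ℝ) ^ (-σ) : ℝ) : ℂ)‖
          ≤ (C * m ^ θ) * (σ * m ^ (-σ - 1)) := by
            rw [hnorm2]
            exact mul_le_mul (hA (n+1)) (rpow_mvt hσ0 hm1) (abs_nonneg _)
              (by positivity)
        _ = (C * σ) * m ^ (θ - σ - 1) := by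
            rw [show (C * m ^ θ) * (σ * m ^ (-σ - 1)) = (C * σ) * (m ^ θ * m ^ (-σ - 1)) by ring,
              ← Real.rpow_add hm0]
            ring_nf
  refine ⟨_, Tendsto.congr (fun N => (key N).symm) (h1.add h2.hasSum.tendsto_sum_nat)⟩

/-- common setup : bound on the Dirichlet partial sums, and Abel identity. -/
lemma setup (a : ℕ → ℂ) (σ : ℝ) {l : ℂ}
    (hl : Tendsto (dirichletPartial a (σ : ℂ)) atTop (𝓝 l)) :
    ∃ C : ℝ, 1 ≤ C ∧ (∀ n, ‖dirichletPartial a (σ:ℂ) n‖ ≤ C) ∧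
      ∀ N, pS a N = dirichletPartial a (σ:ℂ) N * ((((N:ℕ):ℝ) ^ σ : ℝ) : ℂ) +
        ∑ n ∈ Finset.range N, dirichletPartial a (σ:ℂ) n *
          (((((n:ℕ):ℝ) ^ σ : ℝ) : ℂ) - ((((n+1:ℕ):ℝ) ^ σ : ℝ) : ℂ)) := by
  obtain ⟨C₀, hC₀⟩ := (hl.norm).bddAbove_range
  simp only [mem_upperBounds, Set.mem_range, forall_exists_index] at hC₀
  set C := max C₀ 1 with hC
  refine ⟨C, le_max_right _ _, fun n => le_trans (hC₀ _ n rfl) (le_max_left _ _), fun N => ?_⟩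
  set b : ℕ → ℂ := fun k => a k * ((((k:ℕ):ℝ) ^ (-σ) : ℝ) : ℂ) with hb
  set w' : ℕ → ℂ := fun k => ((((k:ℕ):ℝ) ^ σ : ℝ) : ℂ) with hw'
  have hpSb : ∀ M, pS b M = dirichletPartial a (σ:ℂ) M := by
    intro M; rw [dp_eq]; rfl
  have := abel b w' N
  rw [hpSb] at this
  simp only [hpSb] at this
  rw [← this]
  unfold pS
  refine Finset.sum_congr rfl fun n _ => ?_
  have hm : (0:ℝ) < ((n+1:ℕ):ℝ) := by positivity
  show a (n+1) = a (n+1) * _ * _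
  rw [mul_assoc, ← Complex.ofReal_mul, ← Real.rpow_add hm]
  norm_num

lemma lemA (a : ℕ → ℂ) {σ : ℝ} (hσ : 0 < σ) (hconv : DirichletConvergesAt a σ) :
    ∃ C : ℝ, 1 ≤ C ∧ ∀ N : ℕ, ‖pS a N‖ ≤ C * (N : ℝ) ^ σ := by
  obtain ⟨l, hl⟩ := hconv
  obtain ⟨C, hC1, hCb, hid⟩ := setup a σ hl
  refine ⟨2 * C, by linarith, fun N => ?_⟩
  rcases Nat.eq_zero_or_pos N with rfl | hN
  · have : pS a 0 = 0 := by simp [pS]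
    rw [this, norm_zero]; positivity
  have hN0 : (0:ℝ) < (N:ℝ) := by exact_mod_cast hN
  rw [hid N]
  have hterm : ∀ n ∈ Finset.range N,
      ‖dirichletPartial a (σ:ℂ) n *
        (((((n:ℕ):ℝ) ^ σ : ℝ) : ℂ) - ((((n+1:ℕ):ℝ) ^ σ : ℝ) : ℂ))‖
      ≤ C * (((n+1:ℕ):ℝ) ^ σ - ((n:ℕ):ℝ) ^ σ) := by
    intro n _
    rw [norm_mul, ← Complex.ofReal_sub, Complex.norm_real, Real.norm_eq_abs, abs_sub_comm,
      abs_of_nonneg (sub_nonneg.mpr (Real.rpow_le_rpow (by positivity) (by push_cast; linarith) hσ.le))]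
    exact mul_le_mul (hCb n) le_rfl
      (sub_nonneg.mpr (Real.rpow_le_rpow (by positivity) (by push_cast; linarith) hσ.le))
      (by linarith)
  calc ‖dirichletPartial a (σ:ℂ) N * ((((N:ℕ):ℝ) ^ σ : ℝ) : ℂ) + ∑ n ∈ Finset.range N, _‖
      ≤ ‖dirichletPartial a (σ:ℂ) N * ((((N:ℕ):ℝ) ^ σ : ℝ) : ℂ)‖ +
        ‖∑ n ∈ Finset.range N, dirichletPartial a (σ:ℂ) n *
          (((((n:ℕ):ℝ) ^ σ : ℝ) : ℂ) - ((((n+1:ℕ):ℝ) ^ σ : ℝ) : ℂ))‖ := norm_add_le _ _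
    _ ≤ C * (N:ℝ) ^ σ + ∑ n ∈ Finset.range N, C * (((n+1:ℕ):ℝ) ^ σ - ((n:ℕ):ℝ) ^ σ) := by
        refine add_le_add ?_ (le_trans (norm_sum_le _ _) (Finset.sum_le_sum hterm))
        rw [norm_mul, Complex.norm_real, Real.norm_eq_abs,
          abs_of_nonneg (Real.rpow_nonneg (by positivity) _)]
        exact mul_le_mul (hCb N) le_rfl (Real.rpow_nonneg (by positivity) _) (by linarith)
    _ = C * (N:ℝ) ^ σ + C * ((N:ℝ) ^ σ - ((0:ℕ):ℝ) ^ σ) := by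
        rw [← Finset.mul_sum, Finset.sum_range_sub (f := fun k => ((k:ℕ):ℝ) ^ σ)]
    _ ≤ 2 * C * (N:ℝ) ^ σ := by
        rw [Nat.cast_zero, Real.zero_rpow (ne_of_gt hσ)]
        ring_nf
        nlinarith [Real.rpow_nonneg hN0.le σ]

lemma lemNeg (a : ℕ → ℂ) {σ : ℝ} (hσ : σ < 0) (hconv : DirichletConvergesAt a σ) :
    ∃ l : ℂ, Tendsto (fun N => pS a N) atTop (𝓝 l) := by
  obtain ⟨l, hl⟩ := hconv
  obtain ⟨C, hC1, hCb, hid⟩ := setup a σ hl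
  have h1 : Tendsto (fun N : ℕ => dirichletPartial a (σ:ℂ) N * ((((N:ℕ):ℝ) ^ σ : ℝ) : ℂ))
      atTop (𝓝 0) := by
    apply squeeze_zero_norm (a := fun N : ℕ => C * (N:ℝ) ^ σ)
    · intro N
      rcases Nat.eq_zero_or_pos N with rfl | hN
      · have : dirichletPartial a (σ:ℂ) 0 = 0 := by simp [dirichletPartial]
        rw [this, zero_mul, norm_zero]
        rw [Nat.cast_zero, Real.zero_rpow (ne_of_lt hσ), mul_zero]
      · rw [norm_mul, Complex.norm_real, Real.norm_eq_abs,
          abs_of_nonneg (Real.rpow_nonneg (by positivity) _)]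
        exact mul_le_mul (hCb N) le_rfl (Real.rpow_nonneg (by positivity) _) (by linarith)
    · exact tendsto_cn C σ hσ
  have h2 : Summable (fun n : ℕ => dirichletPartial a (σ:ℂ) n *
      (((((n:ℕ):ℝ) ^ σ : ℝ) : ℂ) - ((((n+1:ℕ):ℝ) ^ σ : ℝ) : ℂ))) := by
    rw [← summable_nat_add_iff 1]
    apply Summable.of_norm_bounded
      (g := fun n : ℕ => C * (((n+1:ℕ):ℝ) ^ σ - ((n+1+1:ℕ):ℝ) ^ σ))
    · apply Summable.mul_left
      have hnn : ∀ n : ℕ, 0 ≤ ((n+1:ℕ):ℝ) ^ σ - ((n+1+1:ℕ):ℝ) ^ σ := by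
        intro n
        refine sub_nonneg.mpr (Real.rpow_le_rpow_of_nonpos (by positivity) (by push_cast; linarith) hσ.le)
      apply summable_of_sum_range_le (c := ((0+1:ℕ):ℝ) ^ σ) hnn
      intro n
      rw [Finset.sum_range_sub' (f := fun k => ((k+1:ℕ):ℝ) ^ σ)]
      have : (0:ℝ) ≤ ((n+1:ℕ):ℝ) ^ σ := Real.rpow_nonneg (by positivity) _
      linarith
    · intro n
      have hle : ((n+1+1:ℕ):ℝ) ^ σ ≤ ((n+1:ℕ):ℝ) ^ σ :=
        Real.rpow_le_rpow_of_nonpos (by positivity) (by push_cast; linarith) hσ.le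
      rw [norm_mul, ← Complex.ofReal_sub, Complex.norm_real, Real.norm_eq_abs,
        abs_of_nonneg (sub_nonneg.mpr hle)]
      exact mul_le_mul (hCb _) le_rfl (sub_nonneg.mpr hle) (by linarith)
  refine ⟨_, Tendsto.congr (fun N => (hid N).symm) (h1.add h2.hasSum.tendsto_sum_nat)⟩

lemma lemZero (a : ℕ → ℂ) (hconv : DirichletConvergesAt a 0) :
    ∃ l : ℂ, Tendsto (fun N => pS a N) atTop (𝓝 l) := by
  obtain ⟨l, hl⟩ := hconv
  refine ⟨l, Tendsto.congr (fun N => ?_) hl⟩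
  unfold dirichletPartial pS
  norm_num

lemma G1 (a : ℕ → ℂ) {σ C ε : ℝ} (hσ : 0 < σ) (hC : 1 ≤ C)
    (hA : ∀ N : ℕ, ‖pS a N‖ ≤ C * (N : ℝ) ^ σ) (hε : 0 < ε) :
    ∀ᶠ x : ℝ in atTop, Real.log ‖pS a ⌊x⌋₊‖ / Real.log x ≤ σ + ε := by
  have hlog : Tendsto Real.log atTop atTop := Real.tendsto_log_atTop
  filter_upwards [eventually_ge_atTop (2:ℝ), hlog.eventually_ge_atTop (Real.log C / ε)]
    with x hx2 hxC
  have hx0 : (0:ℝ) < x := by linarith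
  have hlx : 0 < Real.log x := Real.log_pos (by linarith)
  have hCx : Real.log C ≤ ε * Real.log x := by
    rw [div_le_iff₀ hε] at hxC; linarith
  rcases eq_or_ne ‖pS a ⌊x⌋₊‖ 0 with hz | hz
  · rw [hz, Real.log_zero, zero_div]; positivity
  · have hpos : 0 < ‖pS a ⌊x⌋₊‖ := lt_of_le_of_ne (norm_nonneg _) (Ne.symm hz)
    have hb : ‖pS a ⌊x⌋₊‖ ≤ C * x ^ σ := by
      refine le_trans (hA ⌊x⌋₊) ?_
      have hfl : ((⌊x⌋₊:ℕ):ℝ) ≤ x := Nat.floor_le hx0.le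
      exact mul_le_mul_of_nonneg_left (Real.rpow_le_rpow (by positivity) hfl hσ.le) (by linarith)
    have hC0 : (0:ℝ) < C := by linarith
    have hlog_le : Real.log ‖pS a ⌊x⌋₊‖ ≤ Real.log C + σ * Real.log x := by
      calc Real.log ‖pS a ⌊x⌋₊‖ ≤ Real.log (C * x ^ σ) := Real.log_le_log hpos hb
        _ = Real.log C + σ * Real.log x := by
            rw [Real.log_mul (ne_of_gt hC0) (by positivity), Real.log_rpow hx0]
    rw [div_le_iff₀ hlx]
    nlinarith

lemma G2 (a : ℕ → ℂ) {t σ : ℝ}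
    (ht : ∀ᶠ x : ℝ in atTop, Real.log ‖pS a ⌊x⌋₊‖ / Real.log x ≤ t)
    (hσ : max t 0 < σ) : DirichletConvergesAt a σ := by
  set θ := max t 0 with hθdef
  have hθ0 : 0 ≤ θ := le_max_right _ _
  obtain ⟨x₀, hx₀⟩ := eventually_atTop.mp ht
  set N₀ : ℕ := max ⌈x₀⌉₊ 2 with hN₀
  have key : ∀ N : ℕ, N₀ ≤ N → ‖pS a N‖ ≤ (N:ℝ) ^ θ := by
    intro N hN
    have hN2 : 2 ≤ N := le_trans (le_max_right _ _) hN
    have hNx : x₀ ≤ (N:ℝ) := le_trans (Nat.le_ceil x₀)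
      (by exact_mod_cast le_trans (le_max_left _ _) hN)
    have hf := hx₀ (N:ℝ) hNx
    rw [Nat.floor_natCast] at hf
    have hN1 : (1:ℝ) < (N:ℝ) := by exact_mod_cast lt_of_lt_of_le one_lt_two hN2
    have hlogN : 0 < Real.log (N:ℝ) := Real.log_pos hN1
    have h1 : Real.log ‖pS a N‖ ≤ θ * Real.log (N:ℝ) := by
      have h2 := (div_le_iff₀ hlogN).mp hf
      nlinarith [le_max_left t 0]
    rcases eq_or_ne ‖pS a N‖ 0 with hz | hz
    · rw [hz]; positivity
    · have hpos : 0 < ‖pS a N‖ := lt_of_le_of_ne (norm_nonneg _) (Ne.symm hz)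
      calc ‖pS a N‖ = Real.exp (Real.log ‖pS a N‖) := (Real.exp_log hpos).symm
        _ ≤ Real.exp (θ * Real.log (N:ℝ)) := Real.exp_le_exp.mpr h1
        _ = (N:ℝ) ^ θ := by
            rw [Real.rpow_def_of_pos (by positivity : (0:ℝ) < (N:ℝ))]; ring_nf
  set C : ℝ := 1 + ∑ n ∈ Finset.range N₀, ‖pS a n‖ with hCdef
  have hsum0 : 0 ≤ ∑ n ∈ Finset.range N₀, ‖pS a n‖ :=
    Finset.sum_nonneg fun _ _ => norm_nonneg _
  have hC1 : 1 ≤ C := by rw [hCdef]; linarith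
  have hA : ∀ n : ℕ, ‖pS a n‖ ≤ C * (n:ℝ) ^ θ := by
    intro n
    rcases Nat.eq_zero_or_pos n with rfl | hn1
    · have : pS a 0 = 0 := by simp [pS]
      rw [this, norm_zero]; positivity
    have hnθ : (1:ℝ) ≤ (n:ℝ) ^ θ := Real.one_le_rpow (by exact_mod_cast hn1) hθ0
    rcases le_or_gt N₀ n with hge | hlt
    · exact le_trans (key n hge) (le_mul_of_one_le_left (by positivity) hC1)
    · have h1 : ‖pS a n‖ ≤ ∑ k ∈ Finset.range N₀, ‖pS a k‖ :=
        Finset.single_le_sum (fun k _ => norm_nonneg (pS a k)) (Finset.mem_range.mpr hlt)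
      have h2 : ‖pS a n‖ ≤ C := by rw [hCdef]; linarith
      calc ‖pS a n‖ ≤ C := h2
        _ = C * 1 := (mul_one C).symm
        _ ≤ C * (n:ℝ) ^ θ := by
            exact mul_le_mul_of_nonneg_left hnθ (by linarith)
  exact lemB a hθ0 hσ (by linarith) hA

lemma G3 (a : ℕ → ℂ)
    (h : ¬∃ l : ℂ, Tendsto (fun N => pS a N) atTop (𝓝 l)) {c : ℝ} (hc : c < 0) :
    ∃ᶠ x : ℝ in atTop, c ≤ Real.log ‖pS a ⌊x⌋₊‖ / Real.log x := by
  have hnot : ¬ Tendsto (fun N => pS a N) atTop (𝓝 0) := fun hT => h ⟨0, hT⟩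
  rw [Metric.tendsto_atTop] at hnot
  push_neg at hnot
  obtain ⟨ε, hε, hfreq⟩ := hnot
  have hev : ∀ᶠ N : ℕ in atTop, c * Real.log (N:ℝ) ≤ Real.log ε := by
    have hlN := (Real.tendsto_log_atTop.comp
      tendsto_natCast_atTop_atTop).eventually_ge_atTop (Real.log ε / c)
    filter_upwards [hlN] with N hN
    have := mul_le_mul_of_nonpos_left hN hc.le
    calc c * Real.log (N:ℝ) ≤ c * (Real.log ε / c) := this
      _ = Real.log ε := by rw [mul_div_assoc']; exact mul_div_cancel_left₀ _ (ne_of_lt hc)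
  obtain ⟨M, hM⟩ := eventually_atTop.mp hev
  rw [frequently_atTop]
  intro b
  obtain ⟨N, hNge, hNε⟩ := hfreq (max (max M 2) ⌈b⌉₊)
  have hN2 : 2 ≤ N := le_trans (le_trans (le_max_right M 2) (le_max_left _ _)) hNge
  have hNM : M ≤ N := le_trans (le_trans (le_max_left M 2) (le_max_left _ _)) hNge
  have hNb : b ≤ (N:ℝ) := le_trans (Nat.le_ceil b)
    (by exact_mod_cast le_trans (le_max_right _ _) hNge)
  refine ⟨(N:ℝ), hNb, ?_⟩
  rw [Nat.floor_natCast]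
  have hN1 : (1:ℝ) < (N:ℝ) := by exact_mod_cast lt_of_lt_of_le one_lt_two hN2
  have hlogN : 0 < Real.log (N:ℝ) := Real.log_pos hN1
  have hεnorm : ε ≤ ‖pS a N‖ := by
    rw [dist_eq_norm, sub_zero] at hNε; exact hNε
  have h1 : Real.log ε ≤ Real.log ‖pS a N‖ := Real.log_le_log hε hεnorm
  have h2 : c * Real.log (N:ℝ) ≤ Real.log ε := hM N hNM
  rw [le_div_iff₀ hlogN]
  linarith

end CHaux

/-- Cauchy–Hadamard formula for the abscissa of convergence, assuming that
`∑ a_n` diverges. -/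
theorem sigmaC_cauchy_hadamard (a : ℕ → ℂ)
    (h : ¬ ∃ l : ℂ, Tendsto (fun N => ∑ n ∈ Finset.range N, a (n + 1)) atTop (𝓝 l)) :
    sigmaC a =
      limsup (fun x : ℝ =>
        Real.log ‖∑ n ∈ Finset.range ⌊x⌋₊, a (n + 1)‖ / Real.log x) atTop := by
  classical
  have h' : ¬∃ l : ℂ, Tendsto (fun N => CHaux.pS a N) atTop (𝓝 l) := h
  set f : ℝ → ℝ := fun x => Real.log ‖CHaux.pS a ⌊x⌋₊‖ / Real.log x with hf
  show sInf {σ : ℝ | DirichletConvergesAt a σ} = limsup f atTop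
  set S : Set ℝ := {t | ∀ᶠ x : ℝ in atTop, f x ≤ t} with hSdef
  have hLS : limsup f atTop = sInf S := limsup_eq
  have hset_pos : ∀ σ : ℝ, DirichletConvergesAt a σ → 0 < σ := by
    intro σ hσ
    rcases lt_trichotomy σ 0 with hneg | rfl | hpos
    · exact absurd (CHaux.lemNeg a hneg hσ) h'
    · exact absurd (CHaux.lemZero a hσ) h'
    · exact hpos
  have hS_nonneg : ∀ t ∈ S, (0:ℝ) ≤ t := by
    intro t ht
    by_contra hlt
    push_neg at hlt
    have hfreq := CHaux.G3 a h' (c := t / 2) (by linarith)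
    obtain ⟨x, hx1, hx2⟩ := (hfreq.and_eventually ht).exists
    linarith
  have hS_to_set : ∀ t ∈ S, ∀ σ : ℝ, max t 0 < σ → DirichletConvergesAt a σ :=
    fun t ht σ hlt => CHaux.G2 a ht hlt
  have hset_to_S : ∀ σ : ℝ, DirichletConvergesAt a σ → ∀ ε : ℝ, 0 < ε → σ + ε ∈ S := by
    intro σ hσ ε hε
    obtain ⟨C, hC1, hA⟩ := CHaux.lemA a (hset_pos σ hσ) hσ
    exact CHaux.G1 a (hset_pos σ hσ) hC1 hA hε
  by_cases hne : {σ : ℝ | DirichletConvergesAt a σ}.Nonempty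
  · obtain ⟨σ₀, hσ₀⟩ := hne
    have hSne : S.Nonempty := ⟨σ₀ + 1, hset_to_S σ₀ hσ₀ 1 one_pos⟩
    have hSbdd : BddBelow S := ⟨0, fun t ht => hS_nonneg t ht⟩
    have hsetbdd : BddBelow {σ : ℝ | DirichletConvergesAt a σ} :=
      ⟨0, fun σ hσ => (hset_pos σ hσ).le⟩
    have hne' : {σ : ℝ | DirichletConvergesAt a σ}.Nonempty := ⟨σ₀, hσ₀⟩
    rw [hLS]
    apply le_antisymm
    · by_contra hcon
      push_neg at hcon
      set ε := (sInf {σ : ℝ | DirichletConvergesAt a σ} - sInf S) / 2 with hε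
      have hεpos : 0 < ε := by rw [hε]; linarith
      obtain ⟨t, htS, htlt⟩ := exists_lt_of_csInf_lt hSne
        (by linarith : sInf S < sInf S + ε)
      have hmem : DirichletConvergesAt a (sInf S + ε) := by
        refine hS_to_set t htS _ ?_
        rw [max_lt_iff]
        constructor
        · exact htlt
        · have := le_csInf hSne hS_nonneg
          linarith
      have h2 := csInf_le hsetbdd hmem
      have h3 : ε = (sInf {σ : ℝ | DirichletConvergesAt a σ} - sInf S) / 2 := hε
      linarith [h2, h3]
    · refine le_csInf hne' fun σ hσ => ?_
      by_contra hcon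
      push_neg at hcon
      set ε := (sInf S - σ) / 2 with hε
      have hεpos : 0 < ε := by rw [hε]; linarith
      have h2 := csInf_le hSbdd (hset_to_S σ hσ ε hεpos)
      have h3 : ε = (sInf S - σ) / 2 := hε
      linarith [h2, h3]
  · have hsetempty : {σ : ℝ | DirichletConvergesAt a σ} = ∅ :=
      Set.not_nonempty_iff_eq_empty.mp hne
    have hSempty : S = ∅ := by
      rw [Set.eq_empty_iff_forall_notMem]
      intro t ht
      exact hne ⟨max t 0 + 1, hS_to_set t ht _ (lt_add_one _)⟩
    rw [hsetempty, Real.sInf_empty, hLS, hSempty, Real.sInf_empty]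
end

section
/- Let a : ℕ → ℂ be such that the series Σ_{n=1}^∞ |a_n| diverges. Then the abscissa of absolute convergence of f(s) = Σ_{n=1}^∞ a_n n^{-s} is given by the Cauchy–Hadamard type formula σ_a(f) = limsup_{x → ∞} (1/log x) · log (Σ_{n ≤ x} |a_n|). -/
open Filter Topology

section CauchyHadamardAux
open Finset

private 
lemma aux_summable {b : ℕ → ℝ} (hb : ∀ n, 0 ≤ b n) {C τ σ : ℝ} (hC : 0 ≤ C) (hτ : 0 ≤ τ)
    (hστ : τ < σ)
    (hS : ∀ N : ℕ, ∑ n ∈ Finset.range N, b n ≤ C * (N : ℝ) ^ τ) :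
    Summable fun n : ℕ => b n / ((n : ℝ) + 1) ^ σ := by
  have hσ0 : 0 < σ := lt_of_le_of_lt hτ hστ
  set q : ℝ := (2 : ℝ) ^ (τ - σ) with hq
  have hq0 : 0 < q := Real.rpow_pos_of_pos two_pos _
  have hq1 : q < 1 := Real.rpow_lt_one_of_one_lt_of_neg one_lt_two (by linarith)
  have hgeom : ∀ K : ℕ, ∑ k ∈ Finset.range K, q ^ k ≤ (1 - q)⁻¹ := by
    intro K
    have := Summable.sum_le_tsum (Finset.range K) (fun i _ => pow_nonneg hq0.le i)
      (summable_geometric_of_lt_one hq0.le hq1)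
    rwa [tsum_geometric_of_lt_one hq0.le hq1] at this
  have hqpow : ∀ K : ℕ, ((2 : ℝ) ^ K) ^ (τ - σ) = q ^ K := by
    intro K
    rw [← Real.rpow_natCast (2 : ℝ) K, ← Real.rpow_mul (by norm_num), mul_comm,
      Real.rpow_mul (by norm_num), Real.rpow_natCast]
  have key : ∀ K : ℕ, ∑ n ∈ Finset.range (2 ^ K - 1), b n / ((n : ℝ) + 1) ^ σ ≤
      C * 2 ^ τ * ∑ k ∈ Finset.range K, q ^ k := by
    intro K
    induction K with
    | zero => simp
    | succ K ih =>
      have h1 : 2 ^ K - 1 ≤ 2 ^ (K + 1) - 1 :=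
        Nat.sub_le_sub_right (Nat.pow_le_pow_right (by norm_num) (Nat.le_succ K)) 1
      have split := Finset.sum_range_add_sum_Ico (fun n => b n / ((n : ℝ) + 1) ^ σ) h1
      have hpK : (0 : ℝ) < ((2 ^ K : ℕ) : ℝ) ^ σ := by
        apply Real.rpow_pos_of_pos; positivity
      have hblock : ∑ n ∈ Finset.Ico (2 ^ K - 1) (2 ^ (K + 1) - 1), b n / ((n : ℝ) + 1) ^ σ ≤
          C * 2 ^ τ * q ^ K := by
        have step1 : ∑ n ∈ Finset.Ico (2 ^ K - 1) (2 ^ (K + 1) - 1), b n / ((n : ℝ) + 1) ^ σ ≤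
            (∑ n ∈ Finset.Ico (2 ^ K - 1) (2 ^ (K + 1) - 1), b n) / ((2 ^ K : ℕ) : ℝ) ^ σ := by
          rw [Finset.sum_div]
          apply Finset.sum_le_sum
          intro n hn
          have hn1 : 2 ^ K - 1 ≤ n := (Finset.mem_Ico.mp hn).1
          have h2K : (1:ℕ) ≤ 2 ^ K := Nat.one_le_two_pow
          have hcast : ((2 ^ K : ℕ) : ℝ) ≤ (n : ℝ) + 1 := by
            have : (2 : ℕ) ^ K ≤ n + 1 := by omega
            exact_mod_cast this
          apply div_le_div_of_nonneg_left (hb n) hpK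
          exact Real.rpow_le_rpow (by positivity) hcast hσ0.le
        have step2 : ∑ n ∈ Finset.Ico (2 ^ K - 1) (2 ^ (K + 1) - 1), b n ≤
            C * ((2 ^ (K + 1) : ℕ) : ℝ) ^ τ := by
          calc ∑ n ∈ Finset.Ico (2 ^ K - 1) (2 ^ (K + 1) - 1), b n
              ≤ ∑ n ∈ Finset.range (2 ^ (K + 1) - 1), b n := by
                apply Finset.sum_le_sum_of_subset_of_nonneg
                · intro x hx
                  simp only [Finset.mem_Ico, Finset.mem_range] at *
                  omega
                · exact fun i _ _ => hb i
            _ ≤ C * ((2 ^ (K + 1) - 1 : ℕ) : ℝ) ^ τ := hS _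
            _ ≤ C * ((2 ^ (K + 1) : ℕ) : ℝ) ^ τ := by
                apply mul_le_mul_of_nonneg_left _ hC
                apply Real.rpow_le_rpow (by positivity) _ hτ
                exact_mod_cast Nat.sub_le _ 1
        have step3 : C * ((2 ^ (K + 1) : ℕ) : ℝ) ^ τ / ((2 ^ K : ℕ) : ℝ) ^ σ =
            C * 2 ^ τ * q ^ K := by
          have e1 : ((2 ^ (K + 1) : ℕ) : ℝ) = 2 * (2 : ℝ) ^ K := by push_cast; ring
          have e2 : ((2 ^ K : ℕ) : ℝ) = (2 : ℝ) ^ K := by push_cast; ring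
          have hp : (0 : ℝ) < (2 : ℝ) ^ K := by positivity
          rw [e1, e2, Real.mul_rpow (by norm_num) hp.le, ← hqpow K, Real.rpow_sub hp]
          ring
        calc ∑ n ∈ Finset.Ico (2 ^ K - 1) (2 ^ (K + 1) - 1), b n / ((n : ℝ) + 1) ^ σ
            ≤ (∑ n ∈ Finset.Ico (2 ^ K - 1) (2 ^ (K + 1) - 1), b n) / ((2 ^ K : ℕ) : ℝ) ^ σ :=
              step1
          _ ≤ C * ((2 ^ (K + 1) : ℕ) : ℝ) ^ τ / ((2 ^ K : ℕ) : ℝ) ^ σ :=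
              div_le_div_of_nonneg_right step2 hpK.le |>.trans_eq rfl
          _ = C * 2 ^ τ * q ^ K := step3
      rw [← split, Finset.sum_range_succ, mul_add]
      linarith
  apply summable_of_sum_range_le (c := C * 2 ^ τ * (1 - q)⁻¹)
    (fun n => div_nonneg (hb n) (by positivity))
  intro N
  calc ∑ n ∈ Finset.range N, b n / ((n : ℝ) + 1) ^ σ
      ≤ ∑ n ∈ Finset.range (2 ^ N - 1), b n / ((n : ℝ) + 1) ^ σ := by
        apply Finset.sum_le_sum_of_subset_of_nonneg
        · apply Finset.range_subset_range.mpr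
          have := Nat.lt_two_pow_self (n := N)
          omega
        · intro i _ _; exact div_nonneg (hb i) (by positivity)
    _ ≤ C * 2 ^ τ * ∑ k ∈ Finset.range N, q ^ k := key N
    _ ≤ C * 2 ^ τ * (1 - q)⁻¹ := by
        apply mul_le_mul_of_nonneg_left (hgeom N) (by positivity)


private lemma aux_partial_le {b : ℕ → ℝ} (hb : ∀ n, 0 ≤ b n) {σ : ℝ} (hσ : 0 ≤ σ)
    (hsum : Summable fun n : ℕ => b n / ((n : ℝ) + 1) ^ σ) (N : ℕ) :
    ∑ n ∈ Finset.range N, b n ≤ (∑' n : ℕ, b n / ((n : ℝ) + 1) ^ σ) * (N : ℝ) ^ σ := by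
  have key : ∑ n ∈ Finset.range N, b n ≤
      (∑ n ∈ Finset.range N, b n / ((n : ℝ) + 1) ^ σ) * (N : ℝ) ^ σ := by
    rw [Finset.sum_mul]
    apply Finset.sum_le_sum
    intro n hn
    have hn' : n + 1 ≤ N := Finset.mem_range.mp hn
    have hpos : (0 : ℝ) < ((n : ℝ) + 1) ^ σ := Real.rpow_pos_of_pos (by positivity) _
    have hle : ((n : ℝ) + 1) ^ σ ≤ (N : ℝ) ^ σ := by
      apply Real.rpow_le_rpow (by positivity) _ hσ
      exact_mod_cast hn'
    calc b n = b n / ((n : ℝ) + 1) ^ σ * ((n : ℝ) + 1) ^ σ := by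
          field_simp
      _ ≤ b n / ((n : ℝ) + 1) ^ σ * (N : ℝ) ^ σ := by
          apply mul_le_mul_of_nonneg_left hle (div_nonneg (hb n) hpos.le)
  refine key.trans ?_
  apply mul_le_mul_of_nonneg_right _ (Real.rpow_nonneg (by positivity) σ)
  exact Summable.sum_le_tsum _ (fun i _ => div_nonneg (hb i) (Real.rpow_pos_of_pos (by positivity) _).le)
    hsum

private lemma aux_main {b : ℕ → ℝ} (hb : ∀ n, 0 ≤ b n) (h : ¬ Summable b) :
    sInf {σ : ℝ | Summable fun n : ℕ => b n / ((n : ℝ) + 1) ^ σ} =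
      limsup (fun x : ℝ =>
        Real.log (∑ n ∈ Finset.range ⌊x⌋₊, b n) / Real.log x) atTop := by
  set S : ℕ → ℝ := fun N => ∑ n ∈ Finset.range N, b n with hSdef
  set ℓ : ℝ → ℝ := fun x => Real.log (S ⌊x⌋₊) / Real.log x with hℓdef
  set A : Set ℝ := {σ : ℝ | Summable fun n : ℕ => b n / ((n : ℝ) + 1) ^ σ} with hAdef
  set U : Set ℝ := {c : ℝ | ∀ᶠ x : ℝ in atTop, ℓ x ≤ c} with hUdef
  have hls : limsup ℓ atTop = sInf U := Filter.limsup_eq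
  rw [hls]
  -- basic facts
  have hmono : Monotone S := fun m n hmn =>
    Finset.sum_le_sum_of_subset_of_nonneg (Finset.range_subset_range.mpr hmn) (fun i _ _ => hb i)
  have hS_tendsto : Tendsto S atTop atTop :=
    (not_summable_iff_tendsto_nat_atTop_of_nonneg hb).mp h
  have hSx : Tendsto (fun x : ℝ => S ⌊x⌋₊) atTop atTop :=
    hS_tendsto.comp tendsto_nat_floor_atTop
  have hev1 : ∀ᶠ x : ℝ in atTop, 1 ≤ S ⌊x⌋₊ := hSx.eventually_ge_atTop 1
  have hℓ0 : ∀ᶠ x : ℝ in atTop, 0 ≤ ℓ x := by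
    filter_upwards [hev1, eventually_gt_atTop (1 : ℝ)] with x h1 h2
    exact div_nonneg (Real.log_nonneg h1) (Real.log_nonneg h2.le)
  have hU0 : ∀ c ∈ U, 0 ≤ c := by
    intro c hc
    obtain ⟨x, hx1, hx2⟩ := (hℓ0.and hc).exists
    linarith
  have hA0 : ∀ σ ∈ A, 0 ≤ σ := by
    intro σ hσ
    by_contra hneg
    push_neg at hneg
    apply h
    apply Summable.of_nonneg_of_le hb _ hσ
    intro n
    have hpos : (0 : ℝ) < ((n : ℝ) + 1) ^ σ := Real.rpow_pos_of_pos (by positivity) _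
    rw [le_div_iff₀ hpos]
    exact mul_le_of_le_one_right (hb n)
      (Real.rpow_le_one_of_one_le_of_nonpos (by norm_num) hneg.le)
  -- U implies A
  have hUA : ∀ c ∈ U, ∀ σ : ℝ, c < σ → σ ∈ A := by
    intro c hc σ hcσ
    have hc0 : 0 ≤ c := hU0 c hc
    obtain ⟨x₀, hx₀⟩ := eventually_atTop.mp
      (hc.and (hev1.and (eventually_gt_atTop (1 : ℝ))))
    set M : ℕ := max 1 ⌈x₀⌉₊ with hMdef
    have hNbound : ∀ N : ℕ, M ≤ N → S N ≤ (N : ℝ) ^ c := by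
      intro N hN
      have hNx : x₀ ≤ (N : ℝ) := by
        refine (Nat.le_ceil x₀).trans ?_
        exact_mod_cast le_trans (le_max_right 1 ⌈x₀⌉₊) hN
      obtain ⟨h1, h2, h3⟩ := hx₀ (N : ℝ) hNx
      rw [Nat.floor_natCast] at h2
      have hN1 : (1 : ℝ) < (N : ℝ) := h3
      have hlogN : 0 < Real.log (N : ℝ) := Real.log_pos hN1
      have hlog : Real.log (S N) ≤ c * Real.log (N : ℝ) := by
        have := h1
        simp only [hℓdef, Nat.floor_natCast] at this
        rwa [div_le_iff₀ hlogN] at this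
      have hSN : 0 < S N := lt_of_lt_of_le one_pos h2
      rw [← Real.log_le_log_iff hSN (Real.rpow_pos_of_pos (by linarith) c),
        Real.log_rpow (by linarith)]
      exact hlog
    set C : ℝ := max 1 (S M) with hCdef
    have hC : 0 ≤ C := le_trans zero_le_one (le_max_left _ _)
    have hSall : ∀ N : ℕ, S N ≤ C * (N : ℝ) ^ c := by
      intro N
      rcases Nat.lt_or_ge N M with hNM | hNM
      · rcases Nat.eq_zero_or_pos N with rfl | hN1
        · have h0 : S 0 = 0 := by simp [hSdef]
          rw [h0]
          positivity
        · calc S N ≤ S M := hmono hNM.le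
            _ ≤ C := le_max_right _ _
            _ = C * 1 := (mul_one C).symm
            _ ≤ C * (N : ℝ) ^ c := by
                apply mul_le_mul_of_nonneg_left _ hC
                exact Real.one_le_rpow (by exact_mod_cast hN1) hc0
      · calc S N ≤ (N : ℝ) ^ c := hNbound N hNM
          _ ≤ C * (N : ℝ) ^ c :=
              le_mul_of_one_le_left (Real.rpow_nonneg (by positivity) c) (le_max_left 1 _)
    exact aux_summable hb hC hc0 hcσ hSall
  -- A implies U
  have hAU : ∀ σ ∈ A, ∀ ε : ℝ, 0 < ε → σ + ε ∈ U := by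
    intro σ hσ ε hε
    have hσ0 : 0 ≤ σ := hA0 σ hσ
    have hσsum : Summable fun n : ℕ => b n / ((n : ℝ) + 1) ^ σ := hσ
    set T : ℝ := ∑' n : ℕ, b n / ((n : ℝ) + 1) ^ σ with hTdef
    have hT0 : 0 < T := by
      have hex : ∃ n, b n ≠ 0 := by
        by_contra hall
        push_neg at hall
        exact h (by simpa [funext hall] using summable_zero)
      obtain ⟨n, hn⟩ := hex
      have hbn : 0 < b n := lt_of_le_of_ne (hb n) (Ne.symm hn)
      have hpos : (0 : ℝ) < ((n : ℝ) + 1) ^ σ := Real.rpow_pos_of_pos (by positivity) _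
      have := Summable.le_tsum hσsum n (fun i _ => div_nonneg (hb i) (Real.rpow_pos_of_pos (by positivity) _).le)
      calc (0 : ℝ) < b n / ((n : ℝ) + 1) ^ σ := div_pos hbn hpos
        _ ≤ T := this
    show ∀ᶠ x : ℝ in atTop, ℓ x ≤ σ + ε
    filter_upwards [hev1, eventually_ge_atTop (max 2 (Real.exp (Real.log T / ε)))]
      with x h1 h2
    have hx2 : (2 : ℝ) ≤ x := le_trans (le_max_left _ _) h2
    have hx1 : (1 : ℝ) < x := by linarith
    have hlogx : 0 < Real.log x := Real.log_pos hx1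
    have hfloorle : ((⌊x⌋₊ : ℕ) : ℝ) ≤ x := Nat.floor_le (by linarith)
    have hSb : S ⌊x⌋₊ ≤ T * x ^ σ := by
      refine (aux_partial_le hb hσ0 hσsum ⌊x⌋₊).trans ?_
      apply mul_le_mul_of_nonneg_left _ hT0.le
      exact Real.rpow_le_rpow (by positivity) hfloorle hσ0
    have hxσ : (0 : ℝ) < x ^ σ := Real.rpow_pos_of_pos (by linarith) _
    have hlog : Real.log (S ⌊x⌋₊) ≤ Real.log T + σ * Real.log x := by
      calc Real.log (S ⌊x⌋₊) ≤ Real.log (T * x ^ σ) := by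
            rw [Real.log_le_log_iff (by linarith) (by positivity)]
            exact hSb
        _ = Real.log T + Real.log (x ^ σ) := Real.log_mul hT0.ne' hxσ.ne'
        _ = Real.log T + σ * Real.log x := by rw [Real.log_rpow (by linarith)]
    have hlogT : Real.log T ≤ ε * Real.log x := by
      have hexp : Real.exp (Real.log T / ε) ≤ x := le_trans (le_max_right _ _) h2
      have h5 : Real.log T / ε ≤ Real.log x := by
        have := Real.log_le_log (Real.exp_pos _) hexp
        rwa [Real.log_exp] at this
      calc Real.log T = Real.log T / ε * ε := by field_simp
        _ ≤ Real.log x * ε := mul_le_mul_of_nonneg_right h5 hε.le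
        _ = ε * Real.log x := mul_comm _ _
    show Real.log (S ⌊x⌋₊) / Real.log x ≤ σ + ε
    rw [div_le_iff₀ hlogx]
    calc Real.log (S ⌊x⌋₊) ≤ Real.log T + σ * Real.log x := hlog
      _ ≤ ε * Real.log x + σ * Real.log x := by linarith
      _ = (σ + ε) * Real.log x := by ring
  -- assembly
  have hbddA : BddBelow A := ⟨0, hA0⟩
  have hbddU : BddBelow U := ⟨0, hU0⟩
  by_cases hA : A.Nonempty
  · obtain ⟨σ₀, hσ₀⟩ := hA
    have hUne : U.Nonempty := ⟨σ₀ + 1, hAU σ₀ hσ₀ 1 one_pos⟩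
    apply le_antisymm
    · apply le_csInf hUne
      intro c hc
      refine le_of_forall_pos_le_add ?_
      intro ε hε
      exact csInf_le hbddA (hUA c hc (c + ε) (by linarith))
    · apply le_csInf ⟨σ₀, hσ₀⟩
      intro σ hσ
      refine le_of_forall_pos_le_add ?_
      intro ε hε
      exact csInf_le hbddU (hAU σ hσ ε hε)
  · have hUe : U = ∅ := by
      by_contra hne
      obtain ⟨c, hc⟩ := Set.nonempty_iff_ne_empty.mpr hne
      exact hA ⟨c + 1, hUA c hc (c + 1) (by linarith)⟩
    rw [Set.not_nonempty_iff_eq_empty.mp hA, hUe, Real.sInf_empty]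

end CauchyHadamardAux

/-- Cauchy–Hadamard formula for the abscissa of absolute convergence,
assuming that `∑ |a_n|` diverges. -/
theorem sigmaA_cauchy_hadamard (a : ℕ → ℂ)
    (h : ¬ Summable fun n : ℕ => ‖a (n + 1)‖) :
    sigmaA a =
      limsup (fun x : ℝ =>
        Real.log (∑ n ∈ Finset.range ⌊x⌋₊, ‖a (n + 1)‖) / Real.log x) atTop := by
  have := aux_main (b := fun n => ‖a (n + 1)‖) (fun n => norm_nonneg _) h
  simpa [sigmaA, DirichletAbsConvergesAt] using this
end

section
/- Let a : ℕ → ℂ be such that the Dirichlet series f(s) = Σ_{n=1}^∞ a_n n^{-s} does not converge at s = 0. Then the abscissa of uniform convergence is given by the Cauchy–Hadamard type formula σ_b(f) = limsup_{x → ∞} (1/log x) · log ( sup_{t ∈ ℝ} |Σ_{n ≤ x} a_n n^{-it}| ). -/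
open Filter Topology

/-- telescope -/
lemma dch_tele (c : ℕ → ℝ) (M : ℕ) : ∀ N, M ≤ N →
    ∑ n ∈ Finset.Ico M N, (c n - c (n+1)) = c M - c N := by
  intro N hN
  induction N, hN using Nat.le_induction with
  | base => simp
  | succ N hMN ih => rw [Finset.sum_Ico_succ_top hMN, ih]; ring

/-- Abel summation identity, relative form. -/
lemma dch_abel (u c : ℕ → ℂ) (M : ℕ) : ∀ N, M ≤ N →
    ∑ n ∈ Finset.Ico M (N+1), u n * c n
      = (∑ k ∈ Finset.Ico M (N+1), u k) * c N
        + ∑ n ∈ Finset.Ico M N, (∑ k ∈ Finset.Ico M (n+1), u k) * (c n - c (n+1)) := by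
  intro N hN
  induction N, hN using Nat.le_induction with
  | base => simp
  | succ N hMN ih =>
    have h1 : ∑ n ∈ Finset.Ico M (N+1+1), u n * c n
        = (∑ n ∈ Finset.Ico M (N+1), u n * c n) + u (N+1) * c (N+1) :=
      Finset.sum_Ico_succ_top (by omega) _
    have h2 : ∑ k ∈ Finset.Ico M (N+1+1), u k
        = (∑ k ∈ Finset.Ico M (N+1), u k) + u (N+1) :=
      Finset.sum_Ico_succ_top (by omega) _
    have h3 : ∑ n ∈ Finset.Ico M (N+1), (∑ k ∈ Finset.Ico M (n+1), u k) * (c n - c (n+1))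
        = (∑ n ∈ Finset.Ico M N, (∑ k ∈ Finset.Ico M (n+1), u k) * (c n - c (n+1)))
          + (∑ k ∈ Finset.Ico M (N+1), u k) * (c N - c (N+1)) :=
      Finset.sum_Ico_succ_top (by omega) _
    rw [h1, h2, h3, ih]; ring

/-- Abel bound. -/
lemma dch_abel_bound (u : ℕ → ℂ) (c : ℕ → ℝ) (R : ℕ → ℝ) (M N : ℕ) (hMN : M ≤ N)
    (hW : ∀ k, M < k → k ≤ N + 1 → ‖∑ j ∈ Finset.Ico M k, u j‖ ≤ R k) :
    ‖∑ n ∈ Finset.Ico M (N+1), u n * ((c n : ℝ) : ℂ)‖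
      ≤ R (N+1) * |c N| + ∑ n ∈ Finset.Ico M N, R (n+1) * |c n - c (n+1)| := by
  rw [dch_abel u (fun n => ((c n : ℝ) : ℂ)) M N hMN]
  refine (norm_add_le _ _).trans (add_le_add ?_ ?_)
  · rw [norm_mul, Complex.norm_real]
    exact mul_le_mul_of_nonneg_right (hW (N+1) (by omega) le_rfl) (abs_nonneg _)
  · refine (norm_sum_le _ _).trans (Finset.sum_le_sum fun n hn => ?_)
    rw [Finset.mem_Ico] at hn
    rw [norm_mul]
    have : ((c n : ℝ) : ℂ) - ((c (n+1) : ℝ) : ℂ) = ((c n - c (n+1) : ℝ) : ℂ) := by push_cast; ring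
    rw [this, Complex.norm_real]
    exact mul_le_mul_of_nonneg_right (hW (n+1) (by omega) (by omega)) (abs_nonneg _)

/-- decomposition of a single term, shifting the real part of the exponent. -/
lemma dch_term (a : ℕ → ℂ) (σ τ t : ℝ) (n : ℕ) :
    a (n+1) / ((n:ℂ)+1) ^ ((τ:ℂ) + (t:ℂ) * Complex.I)
      = a (n+1) / ((n:ℂ)+1) ^ ((σ:ℂ) + (t:ℂ) * Complex.I)
          * ((((n:ℝ)+1) ^ (σ - τ) : ℝ) : ℂ) := by
  have hxr : (0:ℝ) ≤ (n:ℝ) + 1 := by positivity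
  have hxe : ((n:ℂ)+1) = (((n:ℝ)+1 : ℝ) : ℂ) := by push_cast; ring
  have hx : ((n:ℂ)+1) ≠ 0 := by
    rw [hxe]; exact_mod_cast ne_of_gt (by positivity : (0:ℝ) < (n:ℝ)+1)
  have hne : ∀ y : ℂ, ((n:ℂ)+1) ^ y ≠ 0 := by
    intro y hy
    rw [Complex.cpow_def_of_ne_zero hx] at hy
    exact Complex.exp_ne_zero _ hy
  have key : ((n:ℂ)+1) ^ ((τ:ℂ) + (t:ℂ) * Complex.I) * ((((n:ℝ)+1) ^ (σ - τ) : ℝ) : ℂ)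
      = ((n:ℂ)+1) ^ ((σ:ℂ) + (t:ℂ) * Complex.I) := by
    rw [show ((((n:ℝ)+1) ^ (σ - τ) : ℝ) : ℂ) = (((n:ℝ)+1 : ℝ) : ℂ) ^ ((σ - τ : ℝ) : ℂ) from
      Complex.ofReal_cpow hxr _, ← hxe, ← Complex.cpow_add _ _ hx]
    congr 1
    push_cast; ring
  rw [div_mul_eq_mul_div, div_eq_div_iff (hne _) (hne _), ← key]
  ring

lemma dch_decomp (a : ℕ → ℂ) (σ τ t : ℝ) (N : ℕ) :
    dirichletPartial a ((τ:ℂ) + (t:ℂ) * Complex.I) N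
      = ∑ n ∈ Finset.range N,
          (a (n+1) / ((n:ℂ)+1) ^ ((σ:ℂ) + (t:ℂ) * Complex.I))
            * ((((n:ℝ)+1) ^ (σ - τ) : ℝ) : ℂ) :=
  Finset.sum_congr rfl fun n _ => dch_term a σ τ t n

lemma dch_exp0 (t : ℝ) : (((0:ℝ)):ℂ) + (t:ℂ) * Complex.I = (t:ℂ) * Complex.I := by
  push_cast; ring

lemma dch_expt0 (τ : ℝ) : ((τ:ℝ):ℂ) + (((0:ℝ)):ℂ) * Complex.I = (τ:ℂ) := by
  push_cast; ring

lemma dch_tele' (c : ℕ → ℝ) (M : ℕ) : ∀ N, M ≤ N →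
    ∑ n ∈ Finset.Ico M N, (c (n+1) - c n) = c N - c M := by
  intro N hN
  induction N, hN using Nat.le_induction with
  | base => simp
  | succ N hMN ih => rw [Finset.sum_Ico_succ_top hMN, ih]; ring

-- specialized decompositions
lemma dch_decompA (a : ℕ → ℂ) (σ t : ℝ) (N : ℕ) :
    dirichletPartial a ((σ:ℂ) + (t:ℂ) * Complex.I) N
      = ∑ n ∈ Finset.range N,
          (a (n+1) / ((n:ℂ)+1) ^ ((t:ℂ) * Complex.I)) * ((((n:ℝ)+1) ^ (-σ) : ℝ) : ℂ) := by
  have h := dch_decomp a 0 σ t N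
  rw [dch_exp0] at h
  simpa [zero_sub] using h

lemma dch_decompB (a : ℕ → ℂ) (σ t : ℝ) (N : ℕ) :
    dirichletPartial a ((t:ℂ) * Complex.I) N
      = ∑ n ∈ Finset.range N,
          (a (n+1) / ((n:ℂ)+1) ^ ((σ:ℂ) + (t:ℂ) * Complex.I)) * ((((n:ℝ)+1) ^ σ : ℝ) : ℂ) := by
  have h := dch_decomp a σ 0 t N
  rw [dch_exp0] at h
  simpa using h

lemma dch_decompC (a : ℕ → ℂ) (σ τ : ℝ) (N : ℕ) :
    dirichletPartial a (τ:ℂ) N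
      = ∑ n ∈ Finset.range N,
          (a (n+1) / ((n:ℂ)+1) ^ (σ:ℂ)) * ((((n:ℝ)+1) ^ (σ - τ) : ℝ) : ℂ) := by
  have h := dch_decomp a σ τ 0 N
  rw [dch_expt0 τ, dch_expt0 σ] at h
  exact h

-- norms
lemma dch_norm_cpow (n : ℕ) (σ t : ℝ) :
    ‖((n:ℂ)+1) ^ ((σ:ℂ) + (t:ℂ) * Complex.I)‖ = ((n:ℝ)+1) ^ σ := by
  have hxe : ((n:ℂ)+1) = (((n:ℝ)+1 : ℝ) : ℂ) := by push_cast; ring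
  rw [hxe,
    Complex.norm_cpow_eq_rpow_re_of_pos (by positivity : (0:ℝ) < (n:ℝ)+1)]
  congr 1
  simp [Complex.add_re, Complex.mul_re]

lemma dch_norm_cpow_I (n : ℕ) (t : ℝ) :
    ‖((n:ℂ)+1) ^ ((t:ℂ) * Complex.I)‖ = 1 := by
  have h := dch_norm_cpow n 0 t
  rw [dch_exp0] at h
  simpa using h

lemma dch_term_norm (a : ℕ → ℂ) (σ t : ℝ) (n : ℕ) :
    ‖a (n+1) / ((n:ℂ)+1) ^ ((σ:ℂ) + (t:ℂ) * Complex.I)‖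
      = ‖a (n+1)‖ * ((n:ℝ)+1) ^ (-σ) := by
  rw [norm_div, dch_norm_cpow, Real.rpow_neg (by positivity), div_eq_mul_inv]

noncomputable def dchS (a : ℕ → ℂ) (N : ℕ) : ℝ :=
  ⨆ t : ℝ, ‖dirichletPartial a ((t:ℂ) * Complex.I) N‖

lemma dchS_bdd (a : ℕ → ℂ) (N : ℕ) :
    BddAbove (Set.range fun t : ℝ => ‖dirichletPartial a ((t:ℂ) * Complex.I) N‖) := by
  refine ⟨∑ n ∈ Finset.range N, ‖a (n+1)‖, ?_⟩
  rintro _ ⟨t, rfl⟩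
  refine (norm_sum_le _ _).trans (Finset.sum_le_sum fun n _ => ?_)
  rw [norm_div, dch_norm_cpow_I, div_one]

lemma dch_le_S (a : ℕ → ℂ) (N : ℕ) (t : ℝ) :
    ‖dirichletPartial a ((t:ℂ) * Complex.I) N‖ ≤ dchS a N :=
  le_ciSup (dchS_bdd a N) t

lemma dchS_nonneg (a : ℕ → ℂ) (N : ℕ) : 0 ≤ dchS a N :=
  (norm_nonneg _).trans (dch_le_S a N 0)

-- rpow facts
lemma dch_rpow_anti {x y e : ℝ} (hx : 0 < x) (hxy : x ≤ y) (he : e ≤ 0) :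
    y ^ e ≤ x ^ e := by
  have hy : (0:ℝ) < y := lt_of_lt_of_le hx hxy
  rw [← neg_neg e, Real.rpow_neg hx.le, Real.rpow_neg hy.le]
  exact inv_anti₀ (Real.rpow_pos_of_pos hx _)
    (Real.rpow_le_rpow hx.le hxy (by linarith))

lemma dch_rpow_diff {σ x : ℝ} (hσ : 0 ≤ σ) (hx : 1 ≤ x) :
    x ^ (-σ) - (x+1) ^ (-σ) ≤ σ * x ^ (-σ - 1) := by
  have hx0 : (0:ℝ) < x := lt_of_lt_of_le one_pos hx
  set r : ℝ := (x+1)/x with hrdef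
  have hr1 : (1:ℝ) ≤ r := by rw [hrdef, le_div_iff₀ hx0]; linarith
  have hr0 : (0:ℝ) < r := lt_of_lt_of_le one_pos hr1
  have hsplit : (x+1) ^ (-σ) = x ^ (-σ) * r ^ (-σ) := by
    rw [← Real.mul_rpow hx0.le hr0.le]
    congr 1
    rw [hrdef]
    field_simp
  have hlogr : Real.log r ≤ 1/x := by
    have h1 := Real.log_le_sub_one_of_pos hr0
    have h2 : r - 1 = 1/x := by rw [hrdef]; field_simp; ring
    linarith
  have hlogr0 : 0 ≤ Real.log r := Real.log_nonneg hr1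
  have hexp : 1 - σ * Real.log r ≤ r ^ (-σ) := by
    rw [Real.rpow_def_of_pos hr0]
    have := Real.add_one_le_exp (Real.log r * (-σ))
    linarith
  have hxs : (0:ℝ) ≤ x ^ (-σ) := Real.rpow_nonneg hx0.le _
  have hfin : x ^ (-σ) * (1/x) = x ^ (-σ - 1) := by
    rw [show -σ - 1 = -σ + (-1) from by ring, Real.rpow_add hx0, Real.rpow_neg_one]
    field_simp
  calc x ^ (-σ) - (x+1) ^ (-σ) = x ^ (-σ) * (1 - r ^ (-σ)) := by rw [hsplit]; ring
    _ ≤ x ^ (-σ) * (σ * Real.log r) := by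
        refine mul_le_mul_of_nonneg_left (by linarith) hxs
    _ ≤ x ^ (-σ) * (σ * (1/x)) := by
        refine mul_le_mul_of_nonneg_left ?_ hxs
        exact mul_le_mul_of_nonneg_left hlogr hσ
    _ = σ * x ^ (-σ - 1) := by rw [← hfin]; ring

lemma dch_summable {p : ℝ} (hp : p < -1) :
    Summable (fun n : ℕ => ((n:ℝ)+1) ^ p) := by
  have h1 : Summable (fun n : ℕ => ((n:ℝ)) ^ p) := Real.summable_nat_rpow.mpr hp
  have h2 := (summable_nat_add_iff 1).mpr h1
  refine h2.congr fun n => ?_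
  push_cast
  norm_num

lemma dch_mono (a : ℕ → ℂ) (σ τ : ℝ) (hστ : σ ≤ τ)
    (hc : DirichletConvergesAt a σ) : DirichletConvergesAt a τ := by
  obtain ⟨l, hl⟩ := hc
  have hcs := hl.cauchySeq
  rw [Metric.cauchySeq_iff'] at hcs
  have : CauchySeq (dirichletPartial a (τ:ℂ)) := by
    rw [Metric.cauchySeq_iff']
    intro ε hε
    obtain ⟨B, hB⟩ := hcs (ε/2) (by linarith)
    refine ⟨B, fun n hn => ?_⟩
    rcases eq_or_lt_of_le hn with rfl | hlt
    · simpa using hε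
    obtain ⟨P, rfl⟩ : ∃ P, n = P + 1 := ⟨n-1, by omega⟩
    have hBP : B ≤ P := by omega
    set e : ℕ → ℝ := fun n => ((n:ℝ)+1) ^ (σ - τ) with he
    set u : ℕ → ℂ := fun n => a (n+1) / ((n:ℂ)+1) ^ (σ:ℂ) with hu
    have hστ' : σ - τ ≤ 0 := by linarith
    have hdp : ∀ K : ℕ, dirichletPartial a (τ:ℂ) K
        = ∑ m ∈ Finset.range K, u m * ((e m : ℝ) : ℂ) := fun K => dch_decompC a σ τ K
    have hdpσ : ∀ K : ℕ, dirichletPartial a (σ:ℂ) K = ∑ m ∈ Finset.range K, u m := fun K => rfl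
    have hdiff : dirichletPartial a (τ:ℂ) (P+1) - dirichletPartial a (τ:ℂ) B
        = ∑ m ∈ Finset.Ico B (P+1), u m * ((e m : ℝ) : ℂ) := by
      rw [hdp, hdp, Finset.sum_Ico_eq_sub _ (by omega : B ≤ P+1)]
    have hW : ∀ k, B < k → k ≤ P + 1 → ‖∑ j ∈ Finset.Ico B k, u j‖ ≤ ε/2 := by
      intro k hk1 _
      have hs : ∑ j ∈ Finset.Ico B k, u j
          = dirichletPartial a (σ:ℂ) k - dirichletPartial a (σ:ℂ) B := by
        rw [hdpσ, hdpσ, Finset.sum_Ico_eq_sub _ (by omega : B ≤ k)]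
      rw [hs, ← dist_eq_norm]
      exact le_of_lt (hB k (by omega))
    have hmain := dch_abel_bound u e (fun _ => ε/2) B P hBP hW
    have he_nonneg : ∀ m, 0 ≤ e m := fun m => Real.rpow_nonneg (by positivity) _
    have he_anti : ∀ m, e (m+1) ≤ e m := by
      intro m
      have : ((m:ℝ)+1) ≤ ((m+1:ℕ):ℝ)+1 := by push_cast; linarith
      exact dch_rpow_anti (by positivity) this hστ'
    have habs : ∀ m, |e m - e (m+1)| = e m - e (m+1) := fun m =>
      abs_of_nonneg (by linarith [he_anti m])
    have hsum : ∑ m ∈ Finset.Ico B P, (ε/2) * |e m - e (m+1)| = (ε/2) * (e B - e P) := by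
      rw [← Finset.mul_sum]
      congr 1
      rw [Finset.sum_congr rfl fun m _ => habs m]
      exact dch_tele e B P hBP
    have heB1 : e B ≤ 1 := Real.rpow_le_one_of_one_le_of_nonpos (by push_cast; linarith) hστ'
    rw [dist_eq_norm, hdiff]
    calc ‖∑ m ∈ Finset.Ico B (P+1), u m * ((e m : ℝ) : ℂ)‖
        ≤ (ε/2) * |e P| + ∑ m ∈ Finset.Ico B P, (ε/2) * |e m - e (m+1)| := hmain
      _ = (ε/2) * e P + (ε/2) * (e B - e P) := by rw [hsum, abs_of_nonneg (he_nonneg P)]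
      _ = (ε/2) * e B := by ring
      _ ≤ ε/2 * 1 := by
          refine mul_le_mul_of_nonneg_left heB1 (by linarith)
      _ < ε := by linarith
  obtain ⟨l', hl'⟩ := cauchySeq_tendsto_of_complete this
  exact ⟨l', hl'⟩

lemma dch_conv_of_unif (a : ℕ → ℂ) (σ : ℝ)
    (hσu : DirichletConvergesUniformlyAt a σ) : DirichletConvergesAt a σ := by
  obtain ⟨g, hg⟩ := hσu
  refine ⟨g 0, ?_⟩
  have h0 := hg.tendsto_at (0:ℝ)
  simp only [dch_expt0] at h0
  exact h0

lemma dch_lemC (a : ℕ → ℂ) (h : ¬ DirichletConvergesAt a 0) :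
    ∀ σ, DirichletConvergesUniformlyAt a σ → 0 < σ := by
  intro σ hσu
  by_contra hle
  push_neg at hle
  exact h (dch_mono a σ 0 hle (dch_conv_of_unif a σ hσu))

/-- Uniform convergence gives a uniform bound on all partial sums. -/
lemma dch_unif_bound (a : ℕ → ℂ) (σ : ℝ)
    (hu : DirichletConvergesUniformlyAt a σ) :
    ∃ C : ℝ, 1 ≤ C ∧ ∀ (N : ℕ) (t : ℝ),
      ‖dirichletPartial a ((σ:ℂ) + (t:ℂ) * Complex.I) N‖ ≤ C := by
  obtain ⟨g, hg⟩ := hu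
  rw [Metric.tendstoUniformly_iff] at hg
  obtain ⟨N0, hN0⟩ := (hg 1 one_pos).exists_forall_of_atTop
  set D : ℝ := ∑ n ∈ Finset.range N0, ‖a (n+1)‖ * ((n:ℝ)+1) ^ (-σ) with hD
  have hD0 : 0 ≤ D := Finset.sum_nonneg fun n _ => by positivity
  have hFle : ∀ (N : ℕ), N ≤ N0 → ∀ t : ℝ,
      ‖dirichletPartial a ((σ:ℂ) + (t:ℂ) * Complex.I) N‖ ≤ D := by
    intro N hN t
    refine (norm_sum_le _ _).trans ?_
    rw [hD]
    refine le_trans (Finset.sum_le_sum fun n _ => le_of_eq (dch_term_norm a σ t n)) ?_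
    exact Finset.sum_le_sum_of_subset_of_nonneg
      (Finset.range_subset_range.mpr hN) (fun n _ _ => by positivity)
  refine ⟨D + 2, by linarith, fun N t => ?_⟩
  rcases le_total N N0 with hN | hN
  · linarith [hFle N hN t]
  · have h1 := hN0 N hN t
    have h2 := hN0 N0 le_rfl t
    have h3 := hFle N0 le_rfl t
    set F := fun (N : ℕ) (t : ℝ) => dirichletPartial a ((σ:ℂ) + (t:ℂ) * Complex.I) N
    have : ‖F N t‖ = dist (F N t) 0 := by simp [dist_eq_norm]
    have htri : dist (F N t) 0 ≤ dist (F N t) (g t) + (dist (g t) (F N0 t) + dist (F N0 t) 0) :=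
      (dist_triangle _ (g t) 0).trans (by linarith [dist_triangle (g t) (F N0 t) (0:ℂ)])
    have h4 : dist (F N0 t) 0 = ‖F N0 t‖ := by simp [dist_eq_norm]
    have h5 : dist (F N t) (g t) = dist (g t) (F N t) := dist_comm _ _
    linarith
  
/-- partial sums of the coefficients are polynomially bounded. -/
lemma dch_lemB_core (a : ℕ → ℂ) (σ : ℝ) (hσ : 0 ≤ σ) (C : ℝ) (hC : 1 ≤ C)
    (hb : ∀ (N : ℕ) (t : ℝ), ‖dirichletPartial a ((σ:ℂ) + (t:ℂ) * Complex.I) N‖ ≤ C) :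
    ∀ N : ℕ, 1 ≤ N → dchS a N ≤ 2 * C * (N:ℝ) ^ σ := by
  intro N hN
  obtain ⟨P, rfl⟩ : ∃ P, N = P + 1 := ⟨N-1, by omega⟩
  refine ciSup_le fun t => ?_
  set d : ℕ → ℝ := fun n => ((n:ℝ)+1) ^ σ with hd
  set u : ℕ → ℂ := fun n => a (n+1) / ((n:ℂ)+1) ^ ((σ:ℂ) + (t:ℂ) * Complex.I) with hu
  have hdp : dirichletPartial a ((t:ℂ) * Complex.I) (P+1)
      = ∑ n ∈ Finset.Ico 0 (P+1), u n * ((d n : ℝ) : ℂ) := by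
    rw [dch_decompB a σ t (P+1), Finset.range_eq_Ico]
  have hW : ∀ k, 0 < k → k ≤ P + 1 → ‖∑ j ∈ Finset.Ico 0 k, u j‖ ≤ C := by
    intro k _ _
    have : ∑ j ∈ Finset.Ico 0 k, u j = dirichletPartial a ((σ:ℂ) + (t:ℂ) * Complex.I) k := by
      rw [← Finset.range_eq_Ico]; rfl
    rw [this]; exact hb k t
  have hmain := dch_abel_bound u d (fun _ => C) 0 P (Nat.zero_le P) hW
  have hd_nonneg : ∀ m, 0 ≤ d m := fun m => Real.rpow_nonneg (by positivity) _
  have hd_mono : ∀ m, d m ≤ d (m+1) := by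
    intro m
    refine Real.rpow_le_rpow (by positivity) (by push_cast; linarith) hσ
  have habs : ∀ m, |d m - d (m+1)| = d (m+1) - d m := by
    intro m
    rw [abs_sub_comm]
    exact abs_of_nonneg (by linarith [hd_mono m])
  have hsum : ∑ m ∈ Finset.Ico 0 P, C * |d m - d (m+1)| = C * (d P - d 0) := by
    rw [← Finset.mul_sum]
    congr 1
    rw [Finset.sum_congr rfl fun m _ => habs m]
    exact dch_tele' d 0 P (Nat.zero_le P)
  have hd0 : d 0 = 1 := by simp [hd]
  have hdP : d P = ((P:ℝ)+1) ^ σ := rfl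
  have hcast : ((P+1 : ℕ):ℝ) = (P:ℝ)+1 := by push_cast; ring
  calc ‖dirichletPartial a ((t:ℂ) * Complex.I) (P+1)‖
      ≤ C * |d P| + ∑ m ∈ Finset.Ico 0 P, C * |d m - d (m+1)| := by rw [hdp]; exact hmain
    _ = C * d P + C * (d P - d 0) := by rw [hsum, abs_of_nonneg (hd_nonneg P)]
    _ ≤ 2 * C * d P := by nlinarith [hd_nonneg P, hd0]
    _ = 2 * C * ((P+1:ℕ):ℝ) ^ σ := by rw [hdP, hcast]

lemma dch_lemB (a : ℕ → ℂ) (σ ε : ℝ) (hσ : 0 < σ) (hε : 0 < ε)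
    (hu : DirichletConvergesUniformlyAt a σ) :
    ∀ᶠ x : ℝ in atTop, Real.log (dchS a ⌊x⌋₊) / Real.log x ≤ σ + ε := by
  obtain ⟨C, hC1, hb⟩ := dch_unif_bound a σ hu
  have hS := dch_lemB_core a σ hσ.le C hC1 hb
  have h2C : (1:ℝ) ≤ 2*C := by linarith
  have hlog2C : 0 ≤ Real.log (2*C) := Real.log_nonneg h2C
  rw [eventually_atTop]
  refine ⟨max 2 (Real.exp (Real.log (2*C) / ε)), fun x hx => ?_⟩
  have hx2 : (2:ℝ) ≤ x := le_trans (le_max_left _ _) hx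
  have hxe : Real.exp (Real.log (2*C)/ε) ≤ x := le_trans (le_max_right _ _) hx
  set N := ⌊x⌋₊ with hN
  have hN1 : 1 ≤ N := Nat.le_floor (by exact_mod_cast (by linarith : (1:ℝ) ≤ x))
  have hNpos : (0:ℝ) < N := by exact_mod_cast hN1
  have hNx : (N:ℝ) ≤ x := Nat.floor_le (by linarith)
  have hlogx : 0 < Real.log x := Real.log_pos (by linarith)
  have hSN := hS N hN1
  have hlogS : Real.log (dchS a N) ≤ Real.log (2*C) + σ * Real.log x := by
    rcases eq_or_lt_of_le (dchS_nonneg a N) with h0 | h0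
    · rw [← h0, Real.log_zero]
      have : 0 ≤ σ * Real.log x := le_of_lt (mul_pos hσ hlogx)
      linarith
    · calc Real.log (dchS a N) ≤ Real.log (2*C*(N:ℝ)^σ) := Real.log_le_log h0 hSN
        _ = Real.log (2*C) + σ * Real.log N := by
            rw [Real.log_mul (by positivity) (by positivity), Real.log_rpow hNpos]
        _ ≤ Real.log (2*C) + σ * Real.log x := by
            have h1 := Real.log_le_log hNpos hNx
            nlinarith
  have hlogxε : Real.log (2*C) ≤ ε * Real.log x := by
    have h1 := Real.log_le_log (Real.exp_pos _) hxe
    rw [Real.log_exp, div_le_iff₀ hε] at h1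
    nlinarith
  rw [div_le_iff₀ hlogx]
  calc Real.log (dchS a N) ≤ Real.log (2*C) + σ * Real.log x := hlogS
    _ ≤ ε * Real.log x + σ * Real.log x := by linarith
    _ = (σ + ε) * Real.log x := by ring

lemma dch_lemA (a : ℕ → ℂ) (ρ σ : ℝ) (hρσ : ρ < σ) (hσ0 : 0 ≤ σ)
    (hT : ∀ᶠ x : ℝ in atTop, Real.log (dchS a ⌊x⌋₊) / Real.log x ≤ ρ) :
    DirichletConvergesUniformlyAt a σ := by
  rw [eventually_atTop] at hT
  obtain ⟨x0, hx0⟩ := hT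
  set K0 : ℕ := max 2 ⌈x0⌉₊ with hK0
  have hK02 : 2 ≤ K0 := le_max_left _ _
  have hS : ∀ N : ℕ, K0 ≤ N → dchS a N ≤ (N:ℝ) ^ ρ := by
    intro N hN
    have hN2 : 2 ≤ N := le_trans hK02 hN
    have hNx : x0 ≤ (N:ℝ) := Nat.ceil_le.mp (le_trans (le_max_right _ _) hN)
    have hf := hx0 (N:ℝ) hNx
    rw [Nat.floor_natCast] at hf
    have hN1R : (1:ℝ) < (N:ℝ) := by exact_mod_cast hN2
    have hlogN : 0 < Real.log N := Real.log_pos hN1R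
    rw [div_le_iff₀ hlogN] at hf
    rcases eq_or_lt_of_le (dchS_nonneg a N) with h0 | h0
    · rw [← h0]; positivity
    · have hNpos : (0:ℝ) < N := by linarith
      calc dchS a N = Real.exp (Real.log (dchS a N)) := (Real.exp_log h0).symm
        _ ≤ Real.exp (ρ * Real.log N) := Real.exp_le_exp.mpr (by linarith)
        _ = (N:ℝ)^ρ := by rw [Real.rpow_def_of_pos hNpos, mul_comm]
  set c : ℕ → ℝ := fun n => ((n:ℝ)+1) ^ (-σ) with hc
  set g : ℕ → ℝ := fun n => ((n:ℝ)+1) ^ (ρ - σ - 1) with hgdef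
  have hgsum : Summable g := dch_summable (by linarith)
  have hg0 : ∀ n, 0 ≤ g n := fun n => Real.rpow_nonneg (by positivity) _
  set E : ℕ → ℝ := fun M => 3 * (M:ℝ) ^ (ρ - σ) + σ * ∑' k, g (k + M) with hE
  set F : ℕ → ℝ → ℂ := fun N t => dirichletPartial a ((σ:ℂ) + (t:ℂ) * Complex.I) N with hF
  -- the key uniform Cauchy bound
  have hkey : ∀ (t : ℝ) (M N : ℕ), K0 ≤ M → M ≤ N → ‖F N t - F M t‖ ≤ E M := by
    intro t M N hKM hMN
    have hM1 : 1 ≤ M := by omega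
    have hM0 : (0:ℝ) < M := by exact_mod_cast hM1
    have hMR : (1:ℝ) ≤ (M:ℝ) := by exact_mod_cast hM1
    have htsum0 : 0 ≤ ∑' k, g (k+M) := tsum_nonneg fun k => hg0 _
    have hMρσ : (0:ℝ) ≤ (M:ℝ)^(ρ-σ) := Real.rpow_nonneg hM0.le _
    rcases eq_or_lt_of_le hMN with rfl | hlt
    · simp only [sub_self, norm_zero]
      have : 0 ≤ σ * ∑' k, g (k+M) := mul_nonneg hσ0 htsum0
      rw [hE]; dsimp only; linarith
    obtain ⟨P, rfl⟩ : ∃ P, N = P+1 := ⟨N-1, by omega⟩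
    have hMP : M ≤ P := by omega
    set u : ℕ → ℂ := fun n => a (n+1) / ((n:ℂ)+1) ^ ((t:ℂ) * Complex.I) with hu
    have hdpu : ∀ K : ℕ, dirichletPartial a ((t:ℂ)*Complex.I) K
        = ∑ m ∈ Finset.range K, u m := fun K => rfl
    have hdiff : F (P+1) t - F M t = ∑ n ∈ Finset.Ico M (P+1), u n * ((c n : ℝ) : ℂ) := by
      rw [hF]
      dsimp only
      rw [dch_decompA a σ t (P+1), dch_decompA a σ t M,
        Finset.sum_Ico_eq_sub _ (by omega : M ≤ P+1)]
    have hW : ∀ k, M < k → k ≤ P+1 → ‖∑ j ∈ Finset.Ico M k, u j‖ ≤ (k:ℝ)^ρ + (M:ℝ)^ρ := by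
      intro k hk _
      have hs : ∑ j ∈ Finset.Ico M k, u j
          = dirichletPartial a ((t:ℂ)*Complex.I) k - dirichletPartial a ((t:ℂ)*Complex.I) M := by
        rw [hdpu, hdpu, Finset.sum_Ico_eq_sub _ (by omega : M ≤ k)]
      rw [hs]
      refine (norm_sub_le _ _).trans (add_le_add ?_ ?_)
      · exact (dch_le_S a k t).trans (hS k (by omega))
      · exact (dch_le_S a M t).trans (hS M hKM)
    have hmain := dch_abel_bound u c (fun k => (k:ℝ)^ρ + (M:ℝ)^ρ) M P hMP hW
    have hc0 : ∀ n, 0 ≤ c n := fun n => Real.rpow_nonneg (by positivity) _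
    have hcm : ∀ n, c (n+1) ≤ c n := by
      intro n
      have : ((n:ℝ)+1) ≤ ((n+1:ℕ):ℝ)+1 := by push_cast; linarith
      exact dch_rpow_anti (by positivity) this (by linarith)
    -- per-term bound in the sum
    have hterm : ∀ n ∈ Finset.Ico M P, ((n+1:ℕ):ℝ)^ρ * |c n - c (n+1)|
        ≤ σ * g n := by
      intro n _
      set x : ℝ := (n:ℝ)+1 with hx
      have hx1 : (1:ℝ) ≤ x := by rw [hx]; have := Nat.cast_nonneg (α := ℝ) n; linarith
      have hx0 : (0:ℝ) < x := by linarith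
      have habs : |c n - c (n+1)| = c n - c (n+1) :=
        abs_of_nonneg (sub_nonneg.mpr (hcm n))
      have hcn : c n = x ^ (-σ) := rfl
      have hcn1 : c (n+1) = (x+1) ^ (-σ) := by
        rw [hc]; dsimp only; rw [hx]; push_cast; ring_nf
      have hdiffb : c n - c (n+1) ≤ σ * x ^ (-σ - 1) := by
        rw [hcn, hcn1]; exact dch_rpow_diff hσ0 hx1
      have hxcast : ((n+1:ℕ):ℝ) = x := by rw [hx]; push_cast; ring
      have hxρ : (0:ℝ) ≤ x^ρ := Real.rpow_nonneg hx0.le _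
      have hgn : x^ρ * (x ^ (-σ-1)) = g n := by
        rw [hgdef]; dsimp only; rw [← hx, ← Real.rpow_add hx0]
        congr 1; ring
      calc ((n+1:ℕ):ℝ)^ρ * |c n - c (n+1)| = x^ρ * (c n - c (n+1)) := by
            rw [hxcast, habs]
        _ ≤ x^ρ * (σ * x ^ (-σ-1)) := mul_le_mul_of_nonneg_left hdiffb hxρ
        _ = σ * (x^ρ * x^(-σ-1)) := by ring
        _ = σ * g n := by rw [hgn]
    have hMρ : (0:ℝ) ≤ (M:ℝ)^ρ := Real.rpow_nonneg hM0.le _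
    have hsum : ∑ n ∈ Finset.Ico M P, (((n+1:ℕ):ℝ)^ρ + (M:ℝ)^ρ) * |c n - c (n+1)|
        ≤ σ * (∑' k, g (k+M)) + (M:ℝ)^ρ * c M := by
      have step1 : ∀ n ∈ Finset.Ico M P, (((n+1:ℕ):ℝ)^ρ + (M:ℝ)^ρ) * |c n - c (n+1)|
          ≤ σ * g n + (M:ℝ)^ρ * (c n - c (n+1)) := by
        intro n hn
        have h1 := hterm n hn
        have h2 : |c n - c (n+1)| = c n - c (n+1) :=
          abs_of_nonneg (sub_nonneg.mpr (hcm n))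
        calc (((n+1:ℕ):ℝ)^ρ + (M:ℝ)^ρ) * |c n - c (n+1)|
            = ((n+1:ℕ):ℝ)^ρ * |c n - c (n+1)| + (M:ℝ)^ρ * |c n - c (n+1)| := by ring
          _ ≤ σ * g n + (M:ℝ)^ρ * (c n - c (n+1)) := by rw [h2] at h1 ⊢; linarith [h1]
      refine (Finset.sum_le_sum step1).trans ?_
      rw [Finset.sum_add_distrib, ← Finset.mul_sum, ← Finset.mul_sum]
      have h1 : ∑ n ∈ Finset.Ico M P, g n ≤ ∑' k, g (k+M) := by
        rw [Finset.sum_Ico_eq_sum_range]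
        have hsft : Summable (fun k => g (k+M)) := (summable_nat_add_iff M).mpr hgsum
        have : ∑ k ∈ Finset.range (P-M), g (M+k) = ∑ k ∈ Finset.range (P-M), g (k+M) :=
          Finset.sum_congr rfl fun k _ => by rw [add_comm]
        rw [this]
        exact Summable.sum_le_tsum _ (fun k _ => hg0 _) hsft
      have h2 : ∑ n ∈ Finset.Ico M P, (c n - c (n+1)) = c M - c P := dch_tele c M P hMP
      have h3 : (M:ℝ)^ρ * (∑ n ∈ Finset.Ico M P, (c n - c (n+1))) ≤ (M:ℝ)^ρ * c M := by
        rw [h2]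
        exact mul_le_mul_of_nonneg_left (by linarith [hc0 P]) hMρ
      exact add_le_add (mul_le_mul_of_nonneg_left h1 hσ0) h3
    -- boundary term
    have hbd : (((P+1:ℕ):ℝ)^ρ + (M:ℝ)^ρ) * |c P| ≤ 2 * (M:ℝ)^(ρ-σ) := by
      rw [abs_of_nonneg (hc0 P)]
      set y : ℝ := (P:ℝ)+1 with hy
      have hMy : (M:ℝ) ≤ y := by
        rw [hy]; have : (M:ℝ) ≤ (P:ℝ) := by exact_mod_cast hMP
        linarith
      have hy0 : (0:ℝ) < y := lt_of_lt_of_le hM0 hMy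
      have hcP : c P = y ^ (-σ) := rfl
      have hycast : ((P+1:ℕ):ℝ) = y := by rw [hy]; push_cast; ring
      have e1 : y^ρ * y^(-σ) = y^(ρ-σ) := by
        rw [← Real.rpow_add hy0]; congr 1 <;> ring_nf
      have e2 : y^(ρ-σ) ≤ (M:ℝ)^(ρ-σ) := dch_rpow_anti hM0 hMy (by linarith)
      have e3 : y^(-σ) ≤ (M:ℝ)^(-σ) := dch_rpow_anti hM0 hMy (by linarith)
      have e4 : (M:ℝ)^ρ * (M:ℝ)^(-σ) = (M:ℝ)^(ρ-σ) := by
        rw [← Real.rpow_add hM0]; congr 1 <;> ring_nf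
      calc (((P+1:ℕ):ℝ)^ρ + (M:ℝ)^ρ) * c P = y^ρ * y^(-σ) + (M:ℝ)^ρ * y^(-σ) := by
            rw [hycast, hcP]; ring
        _ ≤ (M:ℝ)^(ρ-σ) + (M:ℝ)^(ρ-σ) := by
            refine add_le_add (by rw [e1]; exact e2) ?_
            calc (M:ℝ)^ρ * y^(-σ) ≤ (M:ℝ)^ρ * (M:ℝ)^(-σ) :=
                  mul_le_mul_of_nonneg_left e3 hMρ
              _ = (M:ℝ)^(ρ-σ) := e4
        _ = 2 * (M:ℝ)^(ρ-σ) := by ring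
    -- conclude key bound
    have hcM : c M ≤ (M:ℝ)^(-σ) := by
      have : (M:ℝ) ≤ (M:ℝ)+1 := by linarith
      exact dch_rpow_anti hM0 this (by linarith)
    have hlast : (M:ℝ)^ρ * c M ≤ (M:ℝ)^(ρ-σ) := by
      calc (M:ℝ)^ρ * c M ≤ (M:ℝ)^ρ * (M:ℝ)^(-σ) := mul_le_mul_of_nonneg_left hcM hMρ
        _ = (M:ℝ)^(ρ-σ) := by rw [← Real.rpow_add hM0]; congr 1 <;> ring_nf
    rw [hdiff]
    have hEM : E M = 3 * (M:ℝ)^(ρ-σ) + σ * ∑' k, g (k+M) := rfl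
    calc ‖∑ n ∈ Finset.Ico M (P+1), u n * ((c n : ℝ) : ℂ)‖
        ≤ (((P+1:ℕ):ℝ)^ρ + (M:ℝ)^ρ) * |c P|
          + ∑ n ∈ Finset.Ico M P, (((n+1:ℕ):ℝ)^ρ + (M:ℝ)^ρ) * |c n - c (n+1)| := by
          simpa using hmain
      _ ≤ 2 * (M:ℝ)^(ρ-σ) + (σ * (∑' k, g (k+M)) + (M:ℝ)^ρ * c M) := add_le_add hbd hsum
      _ ≤ E M := by rw [hEM]; linarith
  -- E tends to 0
  have h1 : Tendsto (fun M : ℕ => ((M:ℝ))^(ρ-σ)) atTop (𝓝 0) := by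
    have h := (tendsto_rpow_neg_atTop (by linarith : (0:ℝ) < σ - ρ)).comp
      (tendsto_natCast_atTop_atTop (R := ℝ))
    simpa [Function.comp_def, show -(σ-ρ) = ρ-σ from by ring] using h
  have h2 : Tendsto (fun M : ℕ => ∑' k, g (k+M)) atTop (𝓝 0) := tendsto_sum_nat_add g
  have hE0 : Tendsto E atTop (𝓝 0) := by
    have h3 := (h1.const_mul 3).add (h2.const_mul σ)
    simpa using h3
  -- pointwise limits
  have hcauchy : ∀ t : ℝ, CauchySeq (fun N => F N t) := by
    intro t
    rw [Metric.cauchySeq_iff']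
    intro ε hε
    obtain ⟨M1, hM1⟩ := eventually_atTop.mp (hE0.eventually_lt_const hε)
    refine ⟨max M1 K0, fun n hn => ?_⟩
    rw [dist_eq_norm]
    exact lt_of_le_of_lt (hkey t (max M1 K0) n (le_max_right _ _) hn)
      (hM1 _ (le_max_left _ _))
  choose gl hgl using fun t => cauchySeq_tendsto_of_complete (hcauchy t)
  refine ⟨gl, ?_⟩
  rw [Metric.tendstoUniformly_iff]
  intro ε hε
  filter_upwards [hE0.eventually_lt_const (half_pos hε), eventually_ge_atTop K0]
    with M hME hMK t
  have hle : dist (gl t) (F M t) ≤ E M := by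
    have htt : Tendsto (fun N => dist (F N t) (F M t)) atTop (𝓝 (dist (gl t) (F M t))) :=
      (hgl t).dist tendsto_const_nhds
    have hevN : ∀ᶠ N in atTop, dist (F N t) (F M t) ≤ E M := by
      filter_upwards [eventually_ge_atTop M] with N hN
      rw [dist_eq_norm]
      exact hkey t M N hMK hN
    exact le_of_tendsto htt hevN
  calc dist (gl t) (F M t) ≤ E M := hle
    _ < ε/2 := hME
    _ < ε := by linarith


/-- Cauchy–Hadamard formula for the abscissa of uniform convergence,
assuming that the Dirichlet series does not converge at `s = 0`. -/
theorem sigmaB_cauchy_hadamard (a : ℕ → ℂ)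
    (h : ¬ DirichletConvergesAt a 0) :
    sigmaB a =
      limsup (fun x : ℝ =>
        Real.log (⨆ t : ℝ, ‖dirichletPartial a ((t : ℂ) * Complex.I) ⌊x⌋₊‖) /
          Real.log x) atTop := by
  classical
  have hrw : (fun x : ℝ =>
      Real.log (⨆ t : ℝ, ‖dirichletPartial a ((t : ℂ) * Complex.I) ⌊x⌋₊‖) / Real.log x)
      = fun x : ℝ => Real.log (dchS a ⌊x⌋₊) / Real.log x := rfl
  rw [hrw, Filter.limsup_eq]
  set f : ℝ → ℝ := fun x => Real.log (dchS a ⌊x⌋₊) / Real.log x with hf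
  set T : Set ℝ := {c : ℝ | ∀ᶠ x in atTop, f x ≤ c} with hT
  set Sset : Set ℝ := {σ : ℝ | DirichletConvergesUniformlyAt a σ} with hSset
  have hA : ∀ c ∈ T, ∀ σ : ℝ, c < σ → 0 ≤ σ → σ ∈ Sset := fun c hc σ h1 h2 =>
    dch_lemA a c σ h1 h2 hc
  have hCpos : ∀ σ ∈ Sset, 0 < σ := fun σ hσ => dch_lemC a h σ hσ
  have hB : ∀ σ ∈ Sset, ∀ ε : ℝ, 0 < ε → σ + ε ∈ T := fun σ hσ ε hε =>
    dch_lemB a σ ε (hCpos σ hσ) hε hσ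
  have hTnonneg : ∀ c ∈ T, 0 ≤ c := by
    intro c hc
    by_contra hlt
    push_neg at hlt
    exact absurd (hCpos 0 (hA c hc 0 hlt le_rfl)) (lt_irrefl 0)
  have hgoal : sigmaB a = sInf Sset := rfl
  rw [hgoal]
  by_cases hne : Sset.Nonempty
  · obtain ⟨σ0, hσ0⟩ := hne
    have hTne : T.Nonempty := ⟨σ0 + 1, hB σ0 hσ0 1 one_pos⟩
    have hTbdd : BddBelow T := ⟨0, fun c hc => hTnonneg c hc⟩
    have hSbdd : BddBelow Sset := ⟨0, fun σ hσ => (hCpos σ hσ).le⟩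
    apply le_antisymm
    · refine le_csInf hTne fun c hc => ?_
      refine le_of_forall_pos_le_add fun ε hε => ?_
      exact csInf_le hSbdd (hA c hc (c+ε) (by linarith) (by linarith [hTnonneg c hc]))
    · refine le_csInf ⟨σ0, hσ0⟩ fun σ hσ => ?_
      refine le_of_forall_pos_le_add fun ε hε => ?_
      exact csInf_le hTbdd (hB σ hσ ε hε)
  · have hSe : Sset = ∅ := Set.not_nonempty_iff_eq_empty.mp hne
    have hTe : T = ∅ := by
      rw [Set.eq_empty_iff_forall_notMem]
      intro c hc
      exact hne ⟨max c 0 + 1,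
        hA c hc _ (lt_of_le_of_lt (le_max_left c 0) (lt_add_one _)) (by positivity)⟩
    rw [hSe, hTe, Real.sInf_empty]
end

section
/- For every α ∈ [0,1] there exists a sequence a : ℕ → ℂ with a_n ∈ {−1, +1} for all n such that the Dirichlet series f(s) = Σ_{n=1}^∞ a_n n^{-s} satisfies σ_a(f) − σ_c(f) = α. (Here necessarily σ_a(f) = 1, so the content is the existence of a ±1 sequence with σ_c(f) = 1 − α.) -/
open Filter Topology

section Aux

noncomputable def trackS (θ : ℝ) : ℕ → ℝ
  | 0 => 0
  | N + 1 => if trackS θ N ≤ ((N : ℝ) + 1) ^ θ then trackS θ N + 1 else trackS θ N - 1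

lemma trackS_zero (θ : ℝ) : trackS θ 0 = 0 := rfl

lemma trackS_step (θ : ℝ) (N : ℕ) :
    trackS θ (N + 1) = trackS θ N + 1 ∨ trackS θ (N + 1) = trackS θ N - 1 := by
  rw [trackS]; split_ifs <;> simp

lemma add_one_rpow_le {θ x : ℝ} (hx : 0 ≤ x) (hθ0 : 0 ≤ θ) (hθ1 : θ ≤ 1) :
    (x + 1) ^ θ ≤ x ^ θ + 1 := by
  lift x to NNReal using hx
  have h := NNReal.rpow_add_le_add_rpow x 1 hθ0 hθ1
  rw [NNReal.one_rpow] at h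
  have := (NNReal.coe_le_coe).mpr h
  push_cast [NNReal.coe_rpow] at this ⊢
  convert this using 2

lemma abs_trackS_sub_le {θ : ℝ} (hθ0 : 0 ≤ θ) (hθ1 : θ ≤ 1) :
    ∀ N : ℕ, |trackS θ N - (N : ℝ) ^ θ| ≤ 1 := by
  intro N
  induction N with
  | zero =>
      rcases eq_or_lt_of_le hθ0 with h | h
      · simp [trackS_zero, ← h]
      · simp [trackS_zero, Real.zero_rpow (ne_of_gt h)]
  | succ N ih =>
      have hmono : (N : ℝ) ^ θ ≤ ((N : ℝ) + 1) ^ θ :=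
        Real.rpow_le_rpow (Nat.cast_nonneg N) (by linarith) hθ0
      have hsub : ((N : ℝ) + 1) ^ θ ≤ (N : ℝ) ^ θ + 1 :=
        add_one_rpow_le (Nat.cast_nonneg N) hθ0 hθ1
      rw [abs_le] at ih ⊢
      rw [trackS]
      push_cast
      split_ifs with h
      · constructor <;> linarith
      · push_neg at h; constructor <;> linarith

lemma one_le_rpow_nat {θ : ℝ} (hθ0 : 0 ≤ θ) {n : ℕ} (hn : 1 ≤ n) : (1 : ℝ) ≤ (n : ℝ) ^ θ := by
  calc (1 : ℝ) = 1 ^ θ := (Real.one_rpow θ).symm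
  _ ≤ (n : ℝ) ^ θ := Real.rpow_le_rpow zero_le_one (by exact_mod_cast hn) hθ0

lemma abs_trackS_le {θ : ℝ} (hθ0 : 0 ≤ θ) (hθ1 : θ ≤ 1) {n : ℕ} (hn : 1 ≤ n) :
    |trackS θ n| ≤ 2 * (n : ℝ) ^ θ := by
  have h1 := abs_trackS_sub_le hθ0 hθ1 n
  have h2 := one_le_rpow_nat hθ0 hn
  rw [abs_le] at h1 ⊢
  constructor <;> [linarith [h1.1]; linarith [h1.2]]

lemma trackS_ge {θ : ℝ} (hθ0 : 0 ≤ θ) (hθ1 : θ ≤ 1) (n : ℕ) :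
    (n : ℝ) ^ θ - 1 ≤ trackS θ n := by
  have h1 := abs_trackS_sub_le hθ0 hθ1 n
  rw [abs_le] at h1
  linarith [h1.1]

lemma sum_range_trackS (θ : ℝ) (n : ℕ) :
    ∑ i ∈ Finset.range n, (trackS θ (i + 1) - trackS θ i) = trackS θ n := by
  rw [Finset.sum_range_sub (trackS θ), trackS_zero, sub_zero]

/-- Real partial sums of the Dirichlet series at real `σ`. -/
noncomputable def pSum (θ σ : ℝ) (N : ℕ) : ℝ :=
  ∑ n ∈ Finset.range N, (trackS θ (n + 1) - trackS θ n) / ((n : ℝ) + 1) ^ σ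

end Aux

lemma rpow_diff_le {σ : ℝ} (hσ : 0 < σ) {x : ℝ} (hx : 1 ≤ x) :
    x ^ (-σ) - (x + 1) ^ (-σ) ≤ σ * x ^ (-σ - 1) := by
  have hx0 : (0 : ℝ) < x := lt_of_lt_of_le one_pos hx
  have hcont : ContinuousOn (fun y : ℝ => y ^ (-σ)) (Set.Icc x (x + 1)) := by
    intro y hy
    have hy0 : (0 : ℝ) < y := lt_of_lt_of_le hx0 hy.1
    exact (Real.continuousAt_rpow_const y (-σ) (Or.inl (ne_of_gt hy0))).continuousWithinAt
  obtain ⟨c, hc, hc'⟩ := exists_hasDerivAt_eq_slope (fun y : ℝ => y ^ (-σ))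
    (fun y : ℝ => -σ * y ^ (-σ - 1)) (by linarith : x < x + 1) hcont
    (fun y hy => by
      have hy0 : (0 : ℝ) < y := lt_of_lt_of_le hx0 (le_of_lt hy.1)
      simpa using Real.hasDerivAt_rpow_const (p := -σ) (Or.inl (ne_of_gt hy0)))
  have hc0 : (0 : ℝ) < c := lt_of_lt_of_le hx0 (le_of_lt hc.1)
  have hkey : x ^ (-σ) - (x + 1) ^ (-σ) = σ * c ^ (-σ - 1) := by
    have h1 : (x + 1 - x) = (1 : ℝ) := by ring
    rw [h1, div_one] at hc'
    linarith [hc']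
  rw [hkey]
  have : c ^ (-σ - 1) ≤ x ^ (-σ - 1) :=
    Real.rpow_le_rpow_of_nonpos hx0 (le_of_lt hc.1) (by linarith)
  exact mul_le_mul_of_nonneg_left this (le_of_lt hσ)

lemma summable_shift_rpow {p : ℝ} (hp : p < -1) :
    Summable (fun i : ℕ => ((i : ℝ) + 1) ^ p) := by
  have h : Summable (fun n : ℕ => (n : ℝ) ^ p) := Real.summable_nat_rpow.mpr hp
  have h2 := (summable_nat_add_iff 1).mpr h
  refine h2.congr fun i => ?_
  push_cast
  rfl

/-- Abel summation identity for `pSum`. -/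
lemma pSum_abel (θ σ : ℝ) (n : ℕ) :
    pSum θ σ n = (((n - 1 : ℕ) : ℝ) + 1) ^ (-σ) * trackS θ n
      - ∑ i ∈ Finset.range (n - 1),
          ((((i : ℝ) + 1) + 1) ^ (-σ) - ((i : ℝ) + 1) ^ (-σ)) * trackS θ (i + 1) := by
  have h := Finset.sum_range_by_parts (fun i : ℕ => ((i : ℝ) + 1) ^ (-σ))
    (fun i : ℕ => trackS θ (i + 1) - trackS θ i) n
  simp only [smul_eq_mul, sum_range_trackS] at h
  have hterm : ∀ i : ℕ, ((i : ℝ) + 1) ^ (-σ) * (trackS θ (i + 1) - trackS θ i)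
      = (trackS θ (i + 1) - trackS θ i) / ((i : ℝ) + 1) ^ σ := by
    intro i
    rw [Real.rpow_neg (by positivity), div_eq_inv_mul]
  rw [pSum]
  simp only [← hterm]
  rw [h]
  congr 1
  refine Finset.sum_congr rfl fun i _ => ?_
  push_cast
  ring_nf

lemma pSum_converges {θ σ : ℝ} (hθ0 : 0 ≤ θ) (hθ1 : θ ≤ 1) (hσ : θ < σ) :
    ∃ l : ℝ, Tendsto (pSum θ σ) atTop (𝓝 l) := by
  have hσ0 : 0 < σ := lt_of_le_of_lt hθ0 hσ
  set u : ℕ → ℝ := fun i =>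
    ((((i : ℝ) + 1) + 1) ^ (-σ) - ((i : ℝ) + 1) ^ (-σ)) * trackS θ (i + 1) with hu_def
  have hub : ∀ i : ℕ, ‖u i‖ ≤ (2 * σ) * ((i : ℝ) + 1) ^ (θ - σ - 1) := by
    intro i
    have hx : (1 : ℝ) ≤ (i : ℝ) + 1 := by
      have := Nat.cast_nonneg (α := ℝ) i; linarith
    have h1 : |(((i : ℝ) + 1) + 1) ^ (-σ) - ((i : ℝ) + 1) ^ (-σ)| ≤ σ * ((i : ℝ) + 1) ^ (-σ - 1) := by
      rw [abs_sub_comm, abs_of_nonneg (by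
        have := Real.rpow_le_rpow_of_nonpos (by positivity : (0:ℝ) < (i : ℝ) + 1)
          (by linarith : (i : ℝ) + 1 ≤ ((i : ℝ) + 1) + 1) (by linarith : -σ ≤ 0)
        linarith)]
      exact rpow_diff_le hσ0 hx
    have h2 : |trackS θ (i + 1)| ≤ 2 * (((i : ℕ) + 1 : ℕ) : ℝ) ^ θ :=
      abs_trackS_le hθ0 hθ1 (Nat.le_add_left 1 i)
    have h2' : |trackS θ (i + 1)| ≤ 2 * ((i : ℝ) + 1) ^ θ := by push_cast at h2; exact h2
    calc ‖u i‖ = |(((i : ℝ) + 1) + 1) ^ (-σ) - ((i : ℝ) + 1) ^ (-σ)| * |trackS θ (i + 1)| := by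
          rw [hu_def]; exact abs_mul _ _
    _ ≤ (σ * ((i : ℝ) + 1) ^ (-σ - 1)) * (2 * ((i : ℝ) + 1) ^ θ) := by
          apply mul_le_mul h1 h2' (abs_nonneg _) (by positivity)
    _ = (2 * σ) * (((i : ℝ) + 1) ^ θ * ((i : ℝ) + 1) ^ (-σ - 1)) := by ring
    _ = (2 * σ) * ((i : ℝ) + 1) ^ (θ - σ - 1) := by
          rw [← Real.rpow_add (by positivity)]; ring_nf
  have hmaj : Summable (fun i : ℕ => (2 * σ) * ((i : ℝ) + 1) ^ (θ - σ - 1)) :=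
    (summable_shift_rpow (by linarith)).mul_left _
  have hu : Summable u := Summable.of_norm_bounded hmaj hub
  refine ⟨0 - ∑' i, u i, ?_⟩
  have h1 : Tendsto (fun n => ∑ i ∈ Finset.range n, u i) atTop (𝓝 (∑' i, u i)) :=
    hu.hasSum.tendsto_sum_nat
  have h2 : Tendsto (fun n => ∑ i ∈ Finset.range (n - 1), u i) atTop (𝓝 (∑' i, u i)) :=
    h1.comp (tendsto_sub_atTop_nat 1)
  have h3 : Tendsto (fun n : ℕ => (((n - 1 : ℕ) : ℝ) + 1) ^ (-σ) * trackS θ n) atTop (𝓝 0) := by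
    apply squeeze_zero_norm' (a := fun n : ℕ => 2 * (n : ℝ) ^ (θ - σ))
    · filter_upwards [eventually_ge_atTop 1] with n hn
      have hcast : ((n - 1 : ℕ) : ℝ) + 1 = (n : ℝ) := by
        have : (n - 1) + 1 = n := Nat.succ_pred_eq_of_pos hn
        exact_mod_cast congrArg (Nat.cast : ℕ → ℝ) this
      have hnp : (0 : ℝ) < (n : ℝ) := by exact_mod_cast hn
      rw [norm_mul, hcast]
      have hb1 : ‖(n : ℝ) ^ (-σ)‖ = (n : ℝ) ^ (-σ) := by
        rw [Real.norm_eq_abs, abs_of_nonneg (Real.rpow_nonneg hnp.le _)]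
      have hb2 : ‖trackS θ n‖ ≤ 2 * (n : ℝ) ^ θ := abs_trackS_le hθ0 hθ1 hn
      calc ‖(n : ℝ) ^ (-σ)‖ * ‖trackS θ n‖
          ≤ (n : ℝ) ^ (-σ) * (2 * (n : ℝ) ^ θ) := by
            rw [hb1]
            exact mul_le_mul_of_nonneg_left hb2 (Real.rpow_nonneg hnp.le _)
      _ = 2 * (n : ℝ) ^ (θ - σ) := by
            rw [show θ - σ = -σ + θ by ring, Real.rpow_add hnp]; ring
    · have : Tendsto (fun n : ℕ => (n : ℝ) ^ (-(σ - θ))) atTop (𝓝 0) :=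
        (tendsto_rpow_neg_atTop (by linarith)).comp tendsto_natCast_atTop_atTop
      have h4 : Tendsto (fun n : ℕ => 2 * (n : ℝ) ^ (θ - σ)) atTop (𝓝 (2 * 0)) := by
        apply Tendsto.const_mul
        convert this using 2
        ring_nf
      simpa using h4
  have := h3.sub h2
  refine this.congr fun n => ?_
  exact (pSum_abel θ σ n).symm

lemma pSum_zero (θ σ : ℝ) : pSum θ σ 0 = 0 := by simp [pSum]

lemma pSum_succ_sub (θ σ : ℝ) (n : ℕ) :
    pSum θ σ (n + 1) - pSum θ σ n = (trackS θ (n + 1) - trackS θ n) / ((n : ℝ) + 1) ^ σ := by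
  rw [pSum, pSum, Finset.sum_range_succ]; ring

lemma abs_trackS_diff (θ : ℝ) (n : ℕ) : |trackS θ (n + 1) - trackS θ n| = 1 := by
  rcases trackS_step θ n with h | h <;> rw [h] <;> simp

/-- Reverse Abel: if `pSum θ σ` converges then `σ ≥ θ`. -/
lemma conv_imp_ge {θ σ : ℝ} (hθ0 : 0 ≤ θ) (hθ1 : θ ≤ 1)
    (hconv : ∃ l : ℝ, Tendsto (pSum θ σ) atTop (𝓝 l)) : θ ≤ σ := by
  by_contra hlt
  push_neg at hlt
  obtain ⟨l, hl⟩ := hconv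
  rcases le_or_gt 0 σ with hσ0 | hσ0
  · -- 0 ≤ σ < θ : reverse Abel summation gives |trackS θ n| ≤ 2 M n ^ σ, contradiction
    have hθpos : 0 < θ := lt_of_le_of_lt hσ0 hlt
    -- bound on pSum
    have habs : Tendsto (fun n => |pSum θ σ n|) atTop (𝓝 |l|) := hl.abs
    obtain ⟨M, hM⟩ := habs.bddAbove_range
    have hMb : ∀ n, |pSum θ σ n| ≤ M := fun n => hM (Set.mem_range_self n)
    have hM0 : 0 ≤ M := le_trans (abs_nonneg _) (hMb 0)
    -- reverse Abel identity
    have habel : ∀ n : ℕ, trackS θ n = (((n - 1 : ℕ) : ℝ) + 1) ^ σ * pSum θ σ n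
        - ∑ i ∈ Finset.range (n - 1),
            ((((i : ℝ) + 1) + 1) ^ σ - ((i : ℝ) + 1) ^ σ) * pSum θ σ (i + 1) := by
      intro n
      have h := Finset.sum_range_by_parts (fun i : ℕ => ((i : ℝ) + 1) ^ σ)
        (fun i : ℕ => (trackS θ (i + 1) - trackS θ i) / ((i : ℝ) + 1) ^ σ) n
      simp only [smul_eq_mul] at h
      have hG : ∀ k : ℕ, ∑ i ∈ Finset.range k,
          (trackS θ (i + 1) - trackS θ i) / ((i : ℝ) + 1) ^ σ = pSum θ σ k := fun k => rfl
      have hterm : ∀ i : ℕ, ((i : ℝ) + 1) ^ σ *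
          ((trackS θ (i + 1) - trackS θ i) / ((i : ℝ) + 1) ^ σ) = trackS θ (i + 1) - trackS θ i := by
        intro i
        rw [mul_div_cancel₀]
        positivity
      calc trackS θ n = ∑ i ∈ Finset.range n, (trackS θ (i + 1) - trackS θ i) := by
            rw [sum_range_trackS]
      _ = ∑ i ∈ Finset.range n, ((i : ℝ) + 1) ^ σ *
            ((trackS θ (i + 1) - trackS θ i) / ((i : ℝ) + 1) ^ σ) := by
            exact Finset.sum_congr rfl fun i _ => (hterm i).symm
      _ = _ := by
            rw [h]
            simp only [hG]
            congr 1
            refine Finset.sum_congr rfl fun i _ => ?_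
            push_cast
            ring_nf
    -- estimate
    have hest : ∀ n : ℕ, 1 ≤ n → |trackS θ n| ≤ 2 * M * (n : ℝ) ^ σ := by
      intro n hn
      have hcast : ((n - 1 : ℕ) : ℝ) + 1 = (n : ℝ) := by
        have : (n - 1) + 1 = n := Nat.succ_pred_eq_of_pos hn
        exact_mod_cast congrArg (Nat.cast : ℕ → ℝ) this
      have hnp : (0 : ℝ) < (n : ℝ) := by exact_mod_cast hn
      have h1 : |(((n - 1 : ℕ) : ℝ) + 1) ^ σ * pSum θ σ n| ≤ (n : ℝ) ^ σ * M := by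
        rw [abs_mul, hcast, abs_of_nonneg (Real.rpow_nonneg hnp.le _)]
        exact mul_le_mul_of_nonneg_left (hMb n) (Real.rpow_nonneg hnp.le _)
      have h2 : |∑ i ∈ Finset.range (n - 1),
            ((((i : ℝ) + 1) + 1) ^ σ - ((i : ℝ) + 1) ^ σ) * pSum θ σ (i + 1)|
          ≤ M * ((n : ℝ) ^ σ - 1) := by
        calc |∑ i ∈ Finset.range (n - 1),
              ((((i : ℝ) + 1) + 1) ^ σ - ((i : ℝ) + 1) ^ σ) * pSum θ σ (i + 1)|
            ≤ ∑ i ∈ Finset.range (n - 1),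
              |((((i : ℝ) + 1) + 1) ^ σ - ((i : ℝ) + 1) ^ σ) * pSum θ σ (i + 1)| :=
              Finset.abs_sum_le_sum_abs _ _
        _ ≤ ∑ i ∈ Finset.range (n - 1),
              ((((i : ℝ) + 1) + 1) ^ σ - ((i : ℝ) + 1) ^ σ) * M := by
              refine Finset.sum_le_sum fun i _ => ?_
              rw [abs_mul]
              have hmono : ((i : ℝ) + 1) ^ σ ≤ (((i : ℝ) + 1) + 1) ^ σ :=
                Real.rpow_le_rpow (by positivity) (by linarith) hσ0
              rw [abs_of_nonneg (by linarith)]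
              exact mul_le_mul_of_nonneg_left (hMb (i + 1)) (by linarith)
        _ = M * ∑ i ∈ Finset.range (n - 1),
              ((((i : ℝ) + 1) + 1) ^ σ - ((i : ℝ) + 1) ^ σ) := by
              rw [Finset.mul_sum]; exact Finset.sum_congr rfl fun i _ => by ring
        _ ≤ M * ((n : ℝ) ^ σ - 1) := by
              apply mul_le_mul_of_nonneg_left _ hM0
              have htel : ∑ i ∈ Finset.range (n - 1),
                  ((((i : ℝ) + 1) + 1) ^ σ - ((i : ℝ) + 1) ^ σ)
                  = (((n - 1 : ℕ) : ℝ) + 1) ^ σ - 1 := by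
                have := Finset.sum_range_sub (fun i : ℕ => ((i : ℝ) + 1) ^ σ) (n - 1)
                rw [show ∑ i ∈ Finset.range (n - 1),
                    ((((i : ℝ) + 1) + 1) ^ σ - ((i : ℝ) + 1) ^ σ)
                    = ∑ i ∈ Finset.range (n - 1),
                    (((((i + 1 : ℕ)) : ℝ) + 1) ^ σ - ((i : ℝ) + 1) ^ σ) from
                  Finset.sum_congr rfl fun i _ => by push_cast; ring_nf]
                rw [this]
                norm_num
              rw [htel, hcast]
      calc |trackS θ n| ≤ (n : ℝ) ^ σ * M + M * ((n : ℝ) ^ σ - 1) := by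
            rw [habel n]
            exact (abs_sub _ _).trans (add_le_add h1 h2)
      _ ≤ 2 * M * (n : ℝ) ^ σ := by nlinarith [hM0]
    -- contradiction for large n
    have hTT : Tendsto (fun n : ℕ => (n : ℝ) ^ (θ - σ)) atTop atTop :=
      (tendsto_rpow_atTop (by linarith)).comp tendsto_natCast_atTop_atTop
    obtain ⟨n, hn1, hn2⟩ := ((eventually_ge_atTop 1).and
      (hTT.eventually_ge_atTop (2 * M + 2))).exists
    have hnp : (0 : ℝ) < (n : ℝ) := by exact_mod_cast hn1
    have hsplit : (n : ℝ) ^ θ = (n : ℝ) ^ σ * (n : ℝ) ^ (θ - σ) := by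
      rw [← Real.rpow_add hnp]; ring_nf
    have hσ1 : (1 : ℝ) ≤ (n : ℝ) ^ σ := one_le_rpow_nat hσ0 hn1
    have hlow : (n : ℝ) ^ θ - 1 ≤ trackS θ n := trackS_ge hθ0 hθ1 n
    have hup : trackS θ n ≤ 2 * M * (n : ℝ) ^ σ := (le_abs_self _).trans (hest n hn1)
    nlinarith [hn2, hσ1, hlow, hup, hsplit]
  · -- σ < 0 : terms do not tend to zero
    have hterm : Tendsto (fun n => pSum θ σ (n + 1) - pSum θ σ n) atTop (𝓝 (l - l)) :=
      (hl.comp (tendsto_add_atTop_nat 1)).sub hl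
    rw [sub_self] at hterm
    have habs : Tendsto (fun n => |pSum θ σ (n + 1) - pSum θ σ n|) atTop (𝓝 0) := by
      simpa using hterm.abs
    have heq : ∀ n : ℕ, |pSum θ σ (n + 1) - pSum θ σ n| = ((n : ℝ) + 1) ^ (-σ) := by
      intro n
      rw [pSum_succ_sub, abs_div, abs_trackS_diff,
        abs_of_nonneg (Real.rpow_nonneg (by positivity) _), Real.rpow_neg (by positivity)]
      simp
    have hdiv : Tendsto (fun n : ℕ => ((n : ℝ) + 1) ^ (-σ)) atTop atTop := by
      apply (tendsto_rpow_atTop (by linarith : (0:ℝ) < -σ)).comp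
      exact tendsto_atTop_add_const_right _ 1 tendsto_natCast_atTop_atTop
    have : Tendsto (fun n : ℕ => ((n : ℝ) + 1) ^ (-σ)) atTop (𝓝 0) := by
      refine habs.congr fun n => heq n
    exact absurd this (hdiv.not_tendsto (disjoint_nhds_atTop 0).symm)


/-- For every `α ∈ [0,1]` there is a `±1`-valued sequence `a` with
`σ_a - σ_c = α` (and necessarily `σ_a = 1`). -/
theorem exists_pm_one_sigmaA_sub_sigmaC_eq (α : ℝ) (hα : α ∈ Set.Icc (0 : ℝ) 1) :
    ∃ a : ℕ → ℂ, (∀ n : ℕ, 1 ≤ n → a n = 1 ∨ a n = -1) ∧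
      sigmaA a - sigmaC a = α ∧ sigmaA a = 1 := by
  obtain ⟨hα0, hα1⟩ := hα
  set θ : ℝ := 1 - α with hθ_def
  have hθ0 : 0 ≤ θ := by simp [hθ_def]; linarith
  have hθ1 : θ ≤ 1 := by simp [hθ_def]; linarith
  refine ⟨fun n => ((trackS θ n - trackS θ (n - 1) : ℝ) : ℂ), ?_, ?_⟩
  · rintro (_ | m) hn
    · omega
    · simp only [Nat.add_sub_cancel]
      rcases trackS_step θ m with h | h <;> rw [h]
      · left; push_cast; ring
      · right; push_cast; ring
  set a : ℕ → ℂ := fun n => ((trackS θ n - trackS θ (n - 1) : ℝ) : ℂ) with ha_def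
  -- partial sums agree with pSum
  have hA_eq : ∀ σ : ℝ, ∀ N : ℕ, dirichletPartial a (σ : ℂ) N = ((pSum θ σ N : ℝ) : ℂ) := by
    intro σ N
    rw [dirichletPartial, pSum, Complex.ofReal_sum]
    refine Finset.sum_congr rfl fun n _ => ?_
    have hb : ((n : ℂ) + 1) = (((n : ℝ) + 1 : ℝ) : ℂ) := by push_cast; ring
    rw [ha_def]
    simp only [Nat.add_sub_cancel]
    rw [hb, ← Complex.ofReal_cpow (by positivity) σ, ← Complex.ofReal_div]
  -- convergence transfer
  have hConvIff : ∀ σ : ℝ, DirichletConvergesAt a σ ↔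
      ∃ l : ℝ, Tendsto (pSum θ σ) atTop (𝓝 l) := by
    intro σ
    have heq : dirichletPartial a (σ : ℂ) = fun N => ((pSum θ σ N : ℝ) : ℂ) :=
      funext (hA_eq σ)
    constructor
    · rintro ⟨l, hl⟩
      rw [heq] at hl
      refine ⟨l.re, ?_⟩
      have := (Complex.continuous_re.tendsto l).comp hl
      simpa [Function.comp_def] using this
    · rintro ⟨l, hl⟩
      refine ⟨(l : ℂ), ?_⟩
      rw [heq]
      exact (Complex.continuous_ofReal.tendsto l).comp hl
  -- sigmaC computation
  have hsetC : {σ : ℝ | DirichletConvergesAt a σ} ⊆ Set.Ici θ := by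
    intro σ hσ
    exact conv_imp_ge hθ0 hθ1 ((hConvIff σ).mp hσ)
  have hsetC' : Set.Ioi θ ⊆ {σ : ℝ | DirichletConvergesAt a σ} := by
    intro σ hσ
    exact (hConvIff σ).mpr (pSum_converges hθ0 hθ1 hσ)
  have hC : sigmaC a = θ := by
    rw [sigmaC]
    apply le_antisymm
    · calc sInf {σ : ℝ | DirichletConvergesAt a σ} ≤ sInf (Set.Ioi θ) :=
            csInf_le_csInf ⟨θ, fun x hx => hsetC hx⟩ Set.nonempty_Ioi hsetC'
      _ = θ := csInf_Ioi
    · exact le_csInf ⟨θ + 1, hsetC' (by simp)⟩ fun b hb => hsetC hb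
  -- sigmaA computation
  have hnorm : ∀ n : ℕ, ‖a (n + 1)‖ = 1 := by
    intro n
    rw [ha_def]
    simp only [Nat.add_sub_cancel, Complex.norm_real, Real.norm_eq_abs]
    exact abs_trackS_diff θ n
  have hsetA : {σ : ℝ | DirichletAbsConvergesAt a σ} = Set.Ioi 1 := by
    ext σ
    simp only [Set.mem_setOf_eq, Set.mem_Ioi, DirichletAbsConvergesAt]
    have heq : (fun n : ℕ => ‖a (n + 1)‖ / ((n : ℝ) + 1) ^ σ)
        = fun n : ℕ => 1 / (((n + 1 : ℕ) : ℝ)) ^ σ := by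
      funext n; rw [hnorm n]; push_cast; ring_nf
    rw [heq]
    have := summable_nat_add_iff (f := fun n : ℕ => 1 / (n : ℝ) ^ σ) 1
    rw [this]
    exact Real.summable_one_div_nat_rpow
  have hA : sigmaA a = 1 := by rw [sigmaA, hsetA, csInf_Ioi]
  exact ⟨by rw [hA, hC]; ring, hA⟩
end
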